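/- arXiv:1310.1172 — 4 statements merged into one kernel-verified Lean document; each statement's English description precedes it below -/
import Mathlib

section
/- A (c\`adl\`ag) supermartingale $(Y_t)_{t\ge 0}$ is a closed supermartingale (i.e., bounded from below by a uniformly integrable martingale) if and only if the family of negative parts $(Y_t^-)_{t\ge 0}$ is uniformly integrable. -/
open MeasureTheory ProbabilityTheory Filter
open scoped ENNReal NNReal Topology

/-- a càdlàg supermartingale `(Y_t)_{t ≥ 0}` is closed (i.e.
bounded from below by a uniformly integrable martingale) if and only if the
family of negative parts `(Y_t⁻)_{t ≥ 0}` is uniformly integrable. -/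
theorem closed_supermartingale_iff_neg_parts_ui {Ω : Type*}
    {mΩ : MeasurableSpace Ω} (P : Measure Ω) [IsProbabilityMeasure P]
    (F : Filtration ℝ≥0 mΩ) (Y : ℝ≥0 → Ω → ℝ)
    (hY : Supermartingale Y F P)
    (hrc : ∀ ω, ∀ t : ℝ≥0,
      ContinuousWithinAt (fun s : ℝ≥0 => Y s ω) (Set.Ici t) t) :
    (∃ M : ℝ≥0 → Ω → ℝ, Martingale M F P ∧ UniformIntegrable M 1 P ∧
        ∀ t, M t ≤ᵐ[P] Y t) ↔
      UniformIntegrable (fun t : ℝ≥0 => fun ω => max (-(Y t ω)) 0) 1 P := by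
  constructor
  · -- forward direction: domination by `|M t|`
    rintro ⟨M, hM, ⟨hMmeas, hMunif, C, hMC⟩, hle⟩
    have hdom : ∀ t : ℝ≥0, ∀ᵐ ω ∂P,
        ‖max (-(Y t ω)) 0‖ ≤ ‖M t ω‖ := by
      intro t
      filter_upwards [hle t] with ω hω
      rw [Real.norm_eq_abs, Real.norm_eq_abs, abs_of_nonneg (le_max_right _ _)]
      refine max_le ?_ (abs_nonneg _)
      have : -(Y t ω) ≤ -(M t ω) := neg_le_neg hω
      exact this.trans (neg_le_abs _)
    refine ⟨fun t => (((hY.1 t).mono (F.le t)).neg.sup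
      stronglyMeasurable_const).aestronglyMeasurable, ?_, C, fun t =>
        (eLpNorm_mono_ae (hdom t)).trans (hMC t)⟩
    intro ε hε
    obtain ⟨δ, hδ, h⟩ := hMunif hε
    refine ⟨δ, hδ, fun t s hs hμs => ?_⟩
    refine le_trans (eLpNorm_mono_ae ?_) (h t s hs hμs)
    filter_upwards [hdom t] with ω hω
    by_cases hmem : ω ∈ s
    · simpa [Set.indicator_of_mem hmem] using hω
    · simp [Set.indicator_of_notMem hmem]
  · rintro ⟨hmeas, hunif, C, hC⟩
    -- the discrete-time filtration and the submartingale `-Y` along ℕ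
    set ℱ : Filtration ℕ mΩ :=
      { seq := fun n => F n
        mono' := fun n m h => F.mono (by exact_mod_cast h)
        le' := fun n => F.le n } with hℱ
    set g : ℕ → Ω → ℝ := fun n => -(Y (n : ℝ≥0)) with hgdef
    have hint : ∀ n : ℕ, Integrable (Y (n : ℝ≥0)) P := fun n => hY.2.2 _
    have hnegint : ∀ t : ℝ≥0, Integrable (fun ω => max (-(Y t ω)) 0) P :=
      fun t => (hY.2.2 t).neg.pos_part
    have hg : Submartingale g ℱ P := by
      refine ⟨fun n => (hY.1 (n : ℝ≥0)).neg, fun i j hij => ?_, fun n => (hint n).neg⟩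
      have h1 := hY.2.1 (i : ℝ≥0) (j : ℝ≥0) (by exact_mod_cast hij)
      have h2 : P[g j|ℱ i] =ᵐ[P] -(P[Y (j : ℝ≥0)|ℱ i]) := condExp_neg _ _
      filter_upwards [h1, h2] with ω h1ω h2ω
      have : (P[g j|ℱ i]) ω = -(P[Y (j : ℝ≥0)|ℱ i]) ω := h2ω
      simp only [hgdef, Pi.neg_apply] at this ⊢
      rw [this]
      simpa using neg_le_neg h1ω
    -- L¹ boundedness of `g`
    have habs : ∀ n : ℕ, ∫ ω, ‖Y (n : ℝ≥0) ω‖ ∂P ≤ ∫ ω, Y 0 ω ∂P + 2 * (C : ℝ≥0∞).toReal := by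
      intro n
      have hsplit : ∀ ω, ‖Y (n : ℝ≥0) ω‖ = Y (n : ℝ≥0) ω + 2 * max (-(Y (n : ℝ≥0) ω)) 0 := by
        intro ω
        rcases le_total 0 (Y (n : ℝ≥0) ω) with h | h
        · rw [Real.norm_eq_abs, abs_of_nonneg h, max_eq_right (by linarith)]; ring
        · rw [Real.norm_eq_abs, abs_of_nonpos h, max_eq_left (by linarith)]; ring
      rw [integral_congr_ae (Filter.Eventually.of_forall hsplit),
        integral_add (hint n) ((hnegint _).const_mul 2)]
      have hYle : ∫ ω, Y (n : ℝ≥0) ω ∂P ≤ ∫ ω, Y 0 ω ∂P := by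
        have := hY.setIntegral_le (i := 0) (j := (n : ℝ≥0)) (by positivity)
          (MeasurableSet.univ (α := Ω))
        simpa [setIntegral_univ] using this
      have hCle : ∫ ω, 2 * max (-(Y (n : ℝ≥0) ω)) 0 ∂P ≤ 2 * (C : ℝ≥0∞).toReal := by
        rw [integral_const_mul]
        have h1 : ∫ ω, max (-(Y (n : ℝ≥0) ω)) 0 ∂P
            = ∫ ω, ‖max (-(Y (n : ℝ≥0) ω)) 0‖ ∂P := by
          refine integral_congr_ae (Filter.Eventually.of_forall fun ω => ?_)
          exact (Real.norm_of_nonneg (le_max_right _ _)).symm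
        have h2 : ENNReal.ofReal (∫ ω, ‖max (-(Y (n : ℝ≥0) ω)) 0‖ ∂P)
            = eLpNorm (fun ω => max (-(Y (n : ℝ≥0) ω)) 0) 1 P := by
          rw [ofReal_integral_norm_eq_lintegral_enorm (hnegint _),
            eLpNorm_one_eq_lintegral_enorm]
        have h3 : ENNReal.ofReal (∫ ω, ‖max (-(Y (n : ℝ≥0) ω)) 0‖ ∂P) ≤ (C : ℝ≥0∞) :=
          h2 ▸ hC (n : ℝ≥0)
        have h4 : ∫ ω, ‖max (-(Y (n : ℝ≥0) ω)) 0‖ ∂P ≤ (C : ℝ≥0∞).toReal := by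
          rw [← ENNReal.ofReal_le_iff_le_toReal ENNReal.coe_ne_top] at *
          exact h3
        nlinarith [integral_nonneg (fun ω => norm_nonneg (max (-(Y (n : ℝ≥0) ω)) 0)) (μ := P) (f := fun ω => ‖max (-(Y (n : ℝ≥0) ω)) 0‖)]
      linarith
    set R : ℝ≥0 := (∫ ω, Y 0 ω ∂P + 2 * (C : ℝ≥0∞).toReal).toNNReal with hR
    have hbdd : ∀ n : ℕ, eLpNorm (g n) 1 P ≤ R := by
      intro n
      rw [hgdef]
      rw [eLpNorm_neg, eLpNorm_one_eq_lintegral_enorm,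
        ← ofReal_integral_norm_eq_lintegral_enorm (hint n)]
      calc ENNReal.ofReal (∫ ω, ‖Y (n : ℝ≥0) ω‖ ∂P)
          ≤ ENNReal.ofReal (∫ ω, Y 0 ω ∂P + 2 * (C : ℝ≥0∞).toReal) :=
            ENNReal.ofReal_le_ofReal (habs n)
        _ = (R : ℝ≥0∞) := rfl
    -- almost sure convergence of `g n` (that is `-Y n`) to a limit `L`
    have haelim := hg.ae_tendsto_limitProcess hbdd
    have hLmem : MemLp (ℱ.limitProcess g P) 1 P := hg.memLp_limitProcess hbdd
    have hLint : Integrable (ℱ.limitProcess g P) P := memLp_one_iff_integrable.mp hLmem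
    set ξ : Ω → ℝ := fun ω => max (ℱ.limitProcess g P ω) 0 with hξ
    have hξint : Integrable ξ P := hLint.pos_part
    -- negative parts converge a.e. to ξ
    have haeneg : ∀ᵐ ω ∂P, Tendsto (fun n : ℕ => max (-(Y (n : ℝ≥0) ω)) 0) atTop (𝓝 (ξ ω)) := by
      filter_upwards [haelim] with ω hω
      exact hω.max tendsto_const_nhds
    -- Vitali : L¹ convergence of negative parts
    have hunif' : UnifIntegrable (fun n : ℕ => fun ω => max (-(Y (n : ℝ≥0) ω)) 0) 1 P := by
      intro ε hε
      obtain ⟨δ, hδ, h⟩ := hunif hε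
      exact ⟨δ, hδ, fun n s hs hμs => h (n : ℝ≥0) s hs hμs⟩
    have hL1 : Tendsto (fun n : ℕ =>
        eLpNorm ((fun ω => max (-(Y (n : ℝ≥0) ω)) 0) - ξ) 1 P) atTop (𝓝 0) :=
      tendsto_Lp_finite_of_tendsto_ae le_rfl ENNReal.one_ne_top
        (fun n => hmeas (n : ℝ≥0)) (memLp_one_iff_integrable.mpr hξint) hunif' haeneg
    -- the closing martingale
    refine ⟨fun t => P[-ξ|F t], martingale_condExp _ F P,
      hξint.neg.uniformIntegrable_condExp_filtration, fun t => ?_⟩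
    -- conditional expectations converge in L¹
    have hcond : Tendsto (fun n : ℕ =>
        eLpNorm (P[fun ω => max (-(Y (n : ℝ≥0) ω)) 0|F t] - P[ξ|F t]) 1 P) atTop (𝓝 0) := by
      refine tendsto_of_tendsto_of_tendsto_of_le_of_le tendsto_const_nhds hL1
        (fun n => zero_le) (fun n => ?_)
      have heq : P[(fun ω => max (-(Y (n : ℝ≥0) ω)) 0) - ξ|F t]
          =ᵐ[P] P[fun ω => max (-(Y (n : ℝ≥0) ω)) 0|F t] - P[ξ|F t] :=
        condExp_sub (hnegint _) hξint _
      calc eLpNorm (P[fun ω => max (-(Y (n : ℝ≥0) ω)) 0|F t] - P[ξ|F t]) 1 P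
          = eLpNorm (P[(fun ω => max (-(Y (n : ℝ≥0) ω)) 0) - ξ|F t]) 1 P :=
            (eLpNorm_congr_ae heq).symm
        _ ≤ eLpNorm ((fun ω => max (-(Y (n : ℝ≥0) ω)) 0) - ξ) 1 P :=
            eLpNorm_one_condExp_le_eLpNorm _
    have hmeasc : ∀ n : ℕ, AEStronglyMeasurable
        (P[fun ω => max (-(Y (n : ℝ≥0) ω)) 0|F t]) P :=
      fun n => (stronglyMeasurable_condExp.mono (F.le t)).aestronglyMeasurable
    have hTIM : TendstoInMeasure P
        (fun n : ℕ => P[fun ω => max (-(Y (n : ℝ≥0) ω)) 0|F t]) atTop (P[ξ|F t]) :=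
      tendstoInMeasure_of_tendsto_eLpNorm one_ne_zero hmeasc
        (stronglyMeasurable_condExp.mono (F.le t)).aestronglyMeasurable hcond
    obtain ⟨ns, hns, hnsae⟩ := hTIM.exists_seq_tendsto_ae
    -- the key inequality for each large n
    have hineq : ∀ n : ℕ, t ≤ (n : ℝ≥0) →
        (fun ω => -(Y t ω)) ≤ᵐ[P] P[fun ω => max (-(Y (n : ℝ≥0) ω)) 0|F t] := by
      intro n hn
      have ha := hY.2.1 t (n : ℝ≥0) hn
      have hb : P[-(Y (n : ℝ≥0))|F t] ≤ᵐ[P] P[fun ω => max (-(Y (n : ℝ≥0) ω)) 0|F t] :=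
        condExp_mono (hint n).neg (hnegint _)
          (Filter.Eventually.of_forall fun ω => le_max_left _ _)
      have hcneg : P[-(Y (n : ℝ≥0))|F t] =ᵐ[P] -(P[Y (n : ℝ≥0)|F t]) := condExp_neg _ _
      filter_upwards [ha, hb, hcneg] with ω haω hbω hcω
      simp only [Pi.neg_apply] at hcω
      show -(Y t ω) ≤ _
      linarith
    have hall : ∀ᵐ ω ∂P, ∀ n : ℕ, t ≤ (n : ℝ≥0) →
        -(Y t ω) ≤ (P[fun ω' => max (-(Y (n : ℝ≥0) ω')) 0|F t]) ω := by
      rw [ae_all_iff]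
      intro n
      by_cases hn : t ≤ (n : ℝ≥0)
      · filter_upwards [hineq n hn] with ω hω hn' using hω
      · filter_upwards with ω hn' using absurd hn' hn
    -- conclude: -Y t ≤ P[ξ|F t] a.e.
    have hkey : ∀ᵐ ω ∂P, -(Y t ω) ≤ (P[ξ|F t]) ω := by
      obtain ⟨N, hN⟩ := exists_nat_ge t
      filter_upwards [hall, hnsae] with ω h1 h2
      refine ge_of_tendsto h2 ?_
      filter_upwards [eventually_ge_atTop N] with i hi
      refine h1 (ns i) (hN.trans ?_)
      exact_mod_cast (hi.trans hns.le_apply)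
    have hMneg : P[-ξ|F t] =ᵐ[P] -(P[ξ|F t]) := condExp_neg _ _
    filter_upwards [hkey, hMneg] with ω h1 h2
    calc (P[-ξ|F t]) ω = -((P[ξ|F t]) ω) := h2
      _ ≤ Y t ω := by linarith
end

section
/- Let $X = (X_t)_{t \ge 0}$ be an adapted c\`adl\`ag real-valued process and $\tau$ a stopping time such that: (a) the stopped process $X^\tau = (X_{t\wedge\tau})$ is a closed supermartingale (bounded below by a uniformly integrable martingale); (b) almost surely $X$ has no intervals of constancy on $[0, \tau)$. Suppose $\sigma \le \tau$ is a stopping time with $X_\sigma$ having the same distribution as $X_\tau$. Then $\sigma = \tau$ almost surely. -/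
open MeasureTheory ProbabilityTheory Filter
open scoped ENNReal NNReal Topology

namespace MinimalityAux

variable {Ω : Type*}

/-- dyadic value `k / 2^n` as a nonnegative real. -/
noncomputable def dv (n k : ℕ) : ℝ≥0 := (k : ℝ≥0) / 2 ^ n

/-- ceiling index of `σ ω` on the dyadic grid of mesh `2^(-n)`. -/
noncomputable def cl (σ : Ω → ℝ≥0∞) (n : ℕ) (ω : Ω) : ℕ :=
  ⌈((σ ω).toNNReal : ℝ) * 2 ^ n⌉₊

/-- dyadic upper approximation of `σ` (equal to `∞` where `σ = ∞`). -/
noncomputable def ap (σ : Ω → ℝ≥0∞) (n : ℕ) (ω : Ω) : ℝ≥0∞ :=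
  if σ ω = ∞ then ∞ else ((dv n (cl σ n ω) : ℝ≥0) : ℝ≥0∞)

lemma dv_coe_real (n k : ℕ) : ((dv n k : ℝ≥0) : ℝ) = (k : ℝ) / 2 ^ n := by
  simp [dv, NNReal.coe_div, NNReal.coe_pow]

lemma dv_mono {n k k' : ℕ} (h : k ≤ k') : dv n k ≤ dv n k' := by
  rw [← NNReal.coe_le_coe, dv_coe_real, dv_coe_real]
  exact div_le_div_of_nonneg_right (by exact_mod_cast h) (by positivity) |>.trans_eq rfl

lemma dv_inj {n k k' : ℕ} (h : dv n k = dv n k') : k = k' := by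
  have := congrArg (fun x : ℝ≥0 => (x : ℝ)) h
  simp only [dv_coe_real] at this
  have h2 : (0:ℝ) < 2 ^ n := by positivity
  field_simp at this
  exact_mod_cast this

lemma le_ap (σ : Ω → ℝ≥0∞) (n : ℕ) (ω : Ω) : σ ω ≤ ap σ n ω := by
  by_cases h : σ ω = ∞
  · simp [ap, h]
  · simp only [ap, h, if_false]
    rw [← ENNReal.coe_toNNReal h, ENNReal.coe_le_coe, ← NNReal.coe_le_coe, dv_coe_real]
    rw [le_div_iff₀ (by positivity : (0:ℝ) < 2 ^ n)]
    exact Nat.le_ceil _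

lemma cl_le_of_le {σ : Ω → ℝ≥0∞} {n : ℕ} {ω : Ω} {q : ℝ≥0}
    (h : σ ω ≤ (q : ℝ≥0∞)) : cl σ n ω ≤ ⌈(q : ℝ) * 2 ^ n⌉₊ := by
  apply Nat.ceil_le_ceil
  have hx : (σ ω).toNNReal ≤ q := by
    rcases ENNReal.le_coe_iff.mp h with ⟨p, hp, hpq⟩
    rw [hp]; simpa using hpq
  have : ((σ ω).toNNReal : ℝ) ≤ (q : ℝ) := hx
  nlinarith [this, (by positivity : (0:ℝ) < 2 ^ n)]

lemma ap_le_of_le {σ : Ω → ℝ≥0∞} {n : ℕ} {ω : Ω} {q : ℝ≥0}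
    (h : σ ω ≤ (q : ℝ≥0∞)) : ap σ n ω ≤ ((dv n ⌈(q : ℝ) * 2 ^ n⌉₊ : ℝ≥0) : ℝ≥0∞) := by
  have hne : σ ω ≠ ∞ := fun he => by simp [he] at h
  simp only [ap, hne, if_false, ENNReal.coe_le_coe]
  exact dv_mono (cl_le_of_le h)

lemma ap_antitone {σ : Ω → ℝ≥0∞} {n m : ℕ} (h : n ≤ m) (ω : Ω) :
    ap σ m ω ≤ ap σ n ω := by
  by_cases he : σ ω = ∞
  · simp [ap, he]
  · simp only [ap, he, if_false, ENNReal.coe_le_coe, ← NNReal.coe_le_coe,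
      dv_coe_real]
    set x : ℝ := ((σ ω).toNNReal : ℝ) with hx
    have hx0 : 0 ≤ x := NNReal.coe_nonneg _
    induction m with
    | zero => simp_all
    | succ m ih =>
      rcases Nat.lt_or_ge n (m+1) with hm | hm
      · have hnm : n ≤ m := Nat.lt_succ_iff.mp hm
        refine le_trans ?_ (ih hnm)
        -- ⌈x 2^(m+1)⌉/2^(m+1) ≤ ⌈x 2^m⌉/2^m
        rw [div_le_div_iff₀ (by positivity) (by positivity), cl]
        have h1 : (⌈x * 2 ^ (m+1)⌉₊ : ℝ) ≤ 2 * ⌈x * 2 ^ m⌉₊ := by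
          have : x * 2 ^ (m + 1) ≤ ((2 * ⌈x * 2 ^ m⌉₊ : ℕ) : ℝ) := by
            push_cast
            have := Nat.le_ceil (x * 2 ^ m)
            ring_nf
            nlinarith
          calc (⌈x * 2 ^ (m+1)⌉₊ : ℝ) ≤ ((2 * ⌈x * 2 ^ m⌉₊ : ℕ) : ℝ) := by
                exact_mod_cast Nat.ceil_le.mpr this
            _ = 2 * ⌈x * 2 ^ m⌉₊ := by push_cast; ring
        calc (⌈x * 2 ^ (m+1)⌉₊ : ℝ) * 2 ^ m ≤ (2 * ⌈x * 2 ^ m⌉₊) * 2 ^ m := by nlinarith [h1, (by positivity : (0:ℝ) < (2:ℝ)^m)]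
          _ = (⌈x * 2 ^ m⌉₊ : ℝ) * 2 ^ (m+1) := by ring
      · have : n = m + 1 := le_antisymm h hm
        subst this; exact le_refl _

lemma ap_lt_add {σ : Ω → ℝ≥0∞} {n : ℕ} {ω : Ω} (h : σ ω ≠ ∞) :
    ((ap σ n ω).toNNReal : ℝ) ≤ ((σ ω).toNNReal : ℝ) + (1 / 2) ^ n := by
  simp only [ap, h, if_false, ENNReal.toNNReal_coe, dv_coe_real]
  set x : ℝ := ((σ ω).toNNReal : ℝ)
  have hx0 : 0 ≤ x := NNReal.coe_nonneg _
  have h1 : ((cl σ n ω : ℕ) : ℝ) < x * 2 ^ n + 1 := by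
    simpa [cl] using (Nat.ceil_lt_add_one (by positivity : (0:ℝ) ≤ x * 2 ^ n))
  rw [div_le_iff₀ (by positivity : (0:ℝ) < 2 ^ n)]
  have : ((1:ℝ)/2) ^ n * 2 ^ n = 1 := by
    rw [← mul_pow]; norm_num
  nlinarith [h1]


lemma ap_eq_iff {σ : Ω → ℝ≥0∞} {n k : ℕ} {ω : Ω} :
    ap σ n ω = ((dv n k : ℝ≥0) : ℝ≥0∞) ↔ σ ω ≠ ∞ ∧ cl σ n ω = k := by
  constructor
  · intro h
    have hne : σ ω ≠ ∞ := by
      intro he; simp [ap, he] at h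
    refine ⟨hne, ?_⟩
    simp only [ap, hne, if_false, ENNReal.coe_inj] at h
    exact dv_inj h
  · rintro ⟨hne, hcl⟩
    simp [ap, hne, hcl]

variable {mΩ : MeasurableSpace Ω}

lemma measurableSet_ap_eq (F : Filtration ℝ≥0∞ mΩ) {σ : Ω → ℝ≥0∞}
    (hσ : ∀ i : ℝ≥0∞, MeasurableSet[F i] {ω | σ ω ≤ i}) (n k : ℕ) :
    MeasurableSet[F ((dv n k : ℝ≥0) : ℝ≥0∞)] {ω | ap σ n ω = ((dv n k : ℝ≥0) : ℝ≥0∞)} := by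
  rcases k with _ | k
  · -- k = 0 : the set is {σ ≤ dv n 0} = {σ = 0}
    have hdv0 : (dv n 0 : ℝ≥0) = 0 := by simp [dv]
    have hset : {ω | ap σ n ω = ((dv n 0 : ℝ≥0) : ℝ≥0∞)}
        = {ω | σ ω ≤ ((dv n 0 : ℝ≥0) : ℝ≥0∞)} := by
      ext ω
      simp only [Set.mem_setOf_eq]
      constructor
      · intro h
        rcases ap_eq_iff.mp h with ⟨hne, hcl⟩
        have hx : ((σ ω).toNNReal : ℝ) * 2 ^ n ≤ 0 := by
          have h0 := Nat.ceil_eq_zero.mp hcl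
          linarith
        have hx0 : ((σ ω).toNNReal : ℝ) = 0 := by
          nlinarith [NNReal.coe_nonneg (σ ω).toNNReal, (by positivity : (0:ℝ) < 2 ^ n)]
        have : (σ ω).toNNReal = 0 := by exact_mod_cast hx0
        rw [← ENNReal.coe_toNNReal hne, this, hdv0]
      · intro h
        rw [hdv0, ENNReal.coe_zero, nonpos_iff_eq_zero] at h
        apply ap_eq_iff.mpr
        refine ⟨by simp [h], ?_⟩
        simp [cl, h]
    rw [hset]
    exact hσ _
  · -- k+1 : {ap = dv n (k+1)} = {σ ≤ dv n (k+1)} \ {σ ≤ dv n k}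
    have hset : {ω | ap σ n ω = ((dv n (k+1) : ℝ≥0) : ℝ≥0∞)}
        = {ω | σ ω ≤ ((dv n (k+1) : ℝ≥0) : ℝ≥0∞)} \ {ω | σ ω ≤ ((dv n k : ℝ≥0) : ℝ≥0∞)} := by
      ext ω
      simp only [Set.mem_setOf_eq, ap_eq_iff, Set.mem_diff]
      constructor
      · rintro ⟨hne, hcl⟩
        have hc := (Nat.ceil_eq_iff (Nat.succ_ne_zero k)).mp hcl
        rcases hc with ⟨hlt, hle⟩
        have hlt' : ((k:ℕ):ℝ) < ((σ ω).toNNReal : ℝ) * 2 ^ n := by simpa using hlt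
        have h2 : (0:ℝ) < 2 ^ n := by positivity
        constructor
        · rw [← ENNReal.coe_toNNReal hne, ENNReal.coe_le_coe, ← NNReal.coe_le_coe,
            dv_coe_real, le_div_iff₀ h2]
          exact_mod_cast hle
        · intro hcon
          rw [← ENNReal.coe_toNNReal hne, ENNReal.coe_le_coe, ← NNReal.coe_le_coe,
            dv_coe_real, le_div_iff₀ h2] at hcon
          exact absurd hcon (not_le.mpr (by exact_mod_cast hlt'))
      · rintro ⟨hle, hnle⟩
        have hne : σ ω ≠ ∞ := fun he => by simp [he] at hle
        have h2 : (0:ℝ) < 2 ^ n := by positivity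
        rw [← ENNReal.coe_toNNReal hne, ENNReal.coe_le_coe, ← NNReal.coe_le_coe,
          dv_coe_real, le_div_iff₀ h2] at hle
        rw [← ENNReal.coe_toNNReal hne, ENNReal.coe_le_coe, ← NNReal.coe_le_coe,
          dv_coe_real, le_div_iff₀ h2, not_le] at hnle
        refine ⟨hne, (Nat.ceil_eq_iff (Nat.succ_ne_zero k)).mpr ?_⟩
        constructor
        · simpa using hnle
        · exact_mod_cast hle
    rw [hset]
    exact (hσ _).diff ((F.mono (by exact_mod_cast dv_mono (Nat.le_succ k))) _ (hσ _))

lemma measurableSet_sigma_top (F : Filtration ℝ≥0∞ mΩ) {σ : Ω → ℝ≥0∞}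
    (hσ : ∀ i : ℝ≥0∞, MeasurableSet[F i] {ω | σ ω ≤ i}) :
    MeasurableSet[F ∞] {ω | σ ω = ∞} := by
  have hset : {ω | σ ω = ∞} = (⋃ j : ℕ, {ω | σ ω ≤ (j : ℝ≥0∞)})ᶜ := by
    ext ω
    simp only [Set.mem_setOf_eq, Set.mem_compl_iff, Set.mem_iUnion, not_exists]
    constructor
    · intro h j hj
      rw [h] at hj
      exact absurd hj (by simp)
    · intro h
      by_contra hne
      rcases ENNReal.exists_nat_gt hne with ⟨j, hj⟩
      exact h j hj.le
  rw [hset]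
  exact (MeasurableSet.iUnion fun j => (F.mono le_top) _ (hσ _)).compl

lemma meas_const_aux {α : Type*} (m : MeasurableSpace α) (c : ℝ) :
    Measurable[m] (fun _ : α => c) := @measurable_const ℝ α _ m c

lemma measurable_of_tendsto_aux {α : Type*} (m : MeasurableSpace α)
    {f : ℕ → α → ℝ} {g : α → ℝ} (hf : ∀ i, Measurable[m] (f i))
    (h : Tendsto f atTop (𝓝 g)) : Measurable[m] g :=
  @measurable_of_tendsto_metrizable α ℝ m _ _ _ _ f g hf h

/-- Gluing measurable functions along a countable family of pieces. -/
lemma measurable_glue {m : MeasurableSpace Ω} {ι : Type*} [Countable ι]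
    {s : ι → Set Ω} {g : ι → Ω → ℝ} {f : Ω → ℝ}
    (hcover : ∀ ω, ∃ i, ω ∈ s i)
    (hagree : ∀ i, ∀ ω ∈ s i, f ω = g i ω)
    (hmeas : ∀ i (B : Set ℝ), MeasurableSet B → MeasurableSet[m] (s i ∩ g i ⁻¹' B)) :
    Measurable[m] f := by
  intro B hB
  have : f ⁻¹' B = ⋃ i, (s i ∩ g i ⁻¹' B) := by
    ext ω
    simp only [Set.mem_preimage, Set.mem_iUnion, Set.mem_inter_iff]
    constructor
    · intro h
      rcases hcover ω with ⟨i, hi⟩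
      exact ⟨i, hi, by rw [← hagree i ω hi]; exact h⟩
    · rintro ⟨i, hi, hgi⟩
      rw [hagree i ω hi]; exact hgi
  rw [this]
  exact MeasurableSet.iUnion fun i => hmeas i B hB

/-- one-sided Fatou: a.e. limit of nonnegative functions with integrals
eventually bounded by `C` has integral at most `C`. -/
lemma integral_le_of_tendsto {μ : Measure Ω} {f : ℕ → Ω → ℝ} {g : Ω → ℝ} {C : ℝ}
    (hfm : ∀ n, Measurable (f n)) (hf0 : ∀ n ω, 0 ≤ f n ω)
    (hfi : ∀ n, Integrable (f n) μ) (hgi : Integrable g μ) (hC : 0 ≤ C)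
    (hbound : ∀ᶠ n in atTop, ∫ ω, f n ω ∂μ ≤ C)
    (hconv : ∀ᵐ ω ∂μ, Tendsto (fun n => f n ω) atTop (𝓝 (g ω))) :
    ∫ ω, g ω ∂μ ≤ C := by
  have hg0 : 0 ≤ᵐ[μ] g := by
    filter_upwards [hconv] with ω h
    exact le_of_tendsto_of_tendsto' tendsto_const_nhds h (fun n => hf0 n ω)
  rw [← ENNReal.ofReal_le_ofReal_iff hC,
    ofReal_integral_eq_lintegral_ofReal hgi hg0]
  have h1 : ∫⁻ ω, ENNReal.ofReal (g ω) ∂μ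
      = ∫⁻ ω, liminf (fun n => ENNReal.ofReal (f n ω)) atTop ∂μ := by
    apply lintegral_congr_ae
    filter_upwards [hconv] with ω h
    exact (((ENNReal.continuous_ofReal.tendsto _).comp h).liminf_eq).symm
  rw [h1]
  calc ∫⁻ ω, liminf (fun n => ENNReal.ofReal (f n ω)) atTop ∂μ
      ≤ liminf (fun n => ∫⁻ ω, ENNReal.ofReal (f n ω) ∂μ) atTop :=
        lintegral_liminf_le fun n => (hfm n).ennreal_ofReal
    _ = liminf (fun n => ENNReal.ofReal (∫ ω, f n ω ∂μ)) atTop := by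
        congr 1
        funext n
        rw [ofReal_integral_eq_lintegral_ofReal (hfi n)
          (Filter.Eventually.of_forall (hf0 n))]
    _ ≤ ENNReal.ofReal C := by
        refine liminf_le_of_le (by isBoundedDefault) ?_
        intro b hb
        rcases (hb.and hbound).exists with ⟨n, hn1, hn2⟩
        exact hn1.trans (ENNReal.ofReal_le_ofReal hn2)

/-- from `f ≤ g` a.e. on `B` and `∫_B g ≤ ∫_B f`, conclude `f = g` a.e. on `B`. -/
lemma ae_eq_on_of_le_of_integral_le {μ : Measure Ω} {B : Set Ω}
    {f g : Ω → ℝ}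
    (hfi : IntegrableOn f B μ) (hgi : IntegrableOn g B μ)
    (hle : ∀ᵐ ω ∂μ.restrict B, f ω ≤ g ω)
    (hint : ∫ ω in B, g ω ∂μ ≤ ∫ ω in B, f ω ∂μ) :
    ∀ᵐ ω ∂μ.restrict B, f ω = g ω := by
  have h0 : 0 ≤ᵐ[μ.restrict B] fun ω => g ω - f ω := by
    filter_upwards [hle] with ω h; simpa using h
  have hi : Integrable (fun ω => g ω - f ω) (μ.restrict B) := hgi.sub hfi
  have hz : ∫ ω in B, (g ω - f ω) ∂μ = 0 := by
    rw [integral_sub hgi hfi]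
    have h2 : 0 ≤ ∫ ω in B, (g ω - f ω) ∂μ := integral_nonneg_of_ae h0
    rw [integral_sub hgi hfi] at h2
    linarith
  have := (integral_eq_zero_iff_of_nonneg_ae h0 hi).mp hz
  filter_upwards [this] with ω h
  have : g ω - f ω = 0 := h
  linarith

lemma integrable_min_const {μ : Measure Ω} [IsFiniteMeasure μ] {f : Ω → ℝ}
    (hf : Integrable f μ) (c : ℝ) : Integrable (fun ω => min (f ω) c) μ := by
  refine Integrable.mono' (hf.abs.add (integrable_const |c|))
    ((hf.aemeasurable.min aemeasurable_const).aestronglyMeasurable) ?_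
  filter_upwards with ω
  simp only [Pi.add_apply, Real.norm_eq_abs]
  calc |min (f ω) c| ≤ max |f ω| |c| := abs_min_le_max_abs_abs
    _ ≤ |f ω| + |c| := max_le (le_add_of_nonneg_right (abs_nonneg _))
        (le_add_of_nonneg_left (abs_nonneg _))


lemma ap_ne_top {σ : Ω → ℝ≥0∞} {n : ℕ} {ω : Ω} (h : σ ω ≠ ∞) : ap σ n ω ≠ ∞ := by
  simp [ap, h]

lemma tendsto_ap (X : ℝ≥0∞ → Ω → ℝ) (τ σ : Ω → ℝ≥0∞) (hστ : ∀ ω, σ ω ≤ τ ω)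
    (hrc : ∀ ω, ∀ t : ℝ≥0, ContinuousWithinAt
      (fun s : ℝ≥0 => X (s : ℝ≥0∞) ω) (Set.Ici t) t)
    {ω : Ω} (h : σ ω ≠ ∞) :
    Tendsto (fun n => X (min (ap σ n ω) (τ ω)) ω) atTop (𝓝 (X (σ ω) ω)) := by
  set x : ℝ≥0 := (σ ω).toNNReal with hx
  set t : ℕ → ℝ≥0∞ := fun n => min (ap σ n ω) (τ ω) with ht
  have ht_ne : ∀ n, t n ≠ ∞ := fun n =>
    ne_top_of_le_ne_top (ap_ne_top h) (min_le_left _ _)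
  have hlb : ∀ n, σ ω ≤ t n := fun n => le_min (le_ap σ n ω) (hστ ω)
  set s : ℕ → ℝ≥0 := fun n => (t n).toNNReal with hs
  have hsx : ∀ n, x ≤ s n := fun n => ENNReal.toNNReal_mono (ht_ne n) (hlb n)
  have hub : ∀ n, (s n : ℝ) ≤ (x : ℝ) + (1/2) ^ n := by
    intro n
    have h1 : s n ≤ (ap σ n ω).toNNReal :=
      ENNReal.toNNReal_mono (ap_ne_top h) (min_le_left _ _)
    exact le_trans (by exact_mod_cast h1) (ap_lt_add h)
  have hstend : Tendsto s atTop (𝓝 x) := by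
    rw [← NNReal.tendsto_coe]
    have hupper : Tendsto (fun n => (x : ℝ) + (1/2) ^ n) atTop (𝓝 ((x:ℝ) + 0)) :=
      tendsto_const_nhds.add
        (tendsto_pow_atTop_nhds_zero_of_lt_one (by norm_num) (by norm_num))
    rw [add_zero] at hupper
    exact tendsto_of_tendsto_of_tendsto_of_le_of_le tendsto_const_nhds hupper
      (fun n => by exact_mod_cast hsx n) hub
  have hmem : ∀ n, s n ∈ Set.Ici x := fun n => hsx n
  have hwithin : Tendsto s atTop (𝓝[Set.Ici x] x) :=
    tendsto_nhdsWithin_of_tendsto_nhds_of_eventually_within s hstend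
      (Eventually.of_forall hmem)
  have hconv := (hrc ω x).tendsto.comp hwithin
  have heq : ∀ n, X ((s n : ℝ≥0) : ℝ≥0∞) ω = X (t n) ω := fun n => by
    rw [ENNReal.coe_toNNReal (ht_ne n)]
  have heq2 : X ((x : ℝ≥0) : ℝ≥0∞) ω = X (σ ω) ω := by
    rw [hx, ENNReal.coe_toNNReal h]
  rw [heq2] at hconv
  exact hconv.congr heq

lemma measurable_fn (F : Filtration ℝ≥0∞ mΩ) (X : ℝ≥0∞ → Ω → ℝ) (τ σ : Ω → ℝ≥0∞)
    (hσ : ∀ i : ℝ≥0∞, MeasurableSet[F i] {ω | σ ω ≤ i})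
    (hadpstop : ∀ t : ℝ≥0∞, StronglyMeasurable[F t] fun ω => X (min t (τ ω)) ω)
    (n : ℕ) :
    Measurable fun ω => X (min (ap σ n ω) (τ ω)) ω := by
  apply measurable_glue (ι := Option ℕ)
    (s := fun i => Option.rec {ω | σ ω = ∞}
      (fun k => {ω | ap σ n ω = ((dv n k : ℝ≥0) : ℝ≥0∞)}) i)
    (g := fun i => Option.rec (fun ω => X (min ∞ (τ ω)) ω)
      (fun k ω => X (min ((dv n k : ℝ≥0) : ℝ≥0∞) (τ ω)) ω) i)
  · intro ω
    by_cases h : σ ω = ∞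
    · exact ⟨none, h⟩
    · exact ⟨some (cl σ n ω), ap_eq_iff.mpr ⟨h, rfl⟩⟩
  · rintro (_ | k) ω hω
    · have hσω : σ ω = ∞ := hω
      have : ap σ n ω = ∞ := by simp [ap, hσω]
      simp only [this]
    · have : ap σ n ω = ((dv n k : ℝ≥0) : ℝ≥0∞) := hω
      simp only [this]
  · rintro (_ | k) B hB
    · exact (F.le ∞ _ (measurableSet_sigma_top F hσ)).inter
        (((hadpstop ∞).measurable.mono (F.le ∞) le_rfl) hB)
    · exact (F.le _ _ (measurableSet_ap_eq F hσ n k)).inter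
        (((hadpstop _).measurable.mono (F.le _) le_rfl) hB)

lemma measurable_S (F : Filtration ℝ≥0∞ mΩ) (X : ℝ≥0∞ → Ω → ℝ) (τ σ : Ω → ℝ≥0∞)
    (hσ : ∀ i : ℝ≥0∞, MeasurableSet[F i] {ω | σ ω ≤ i}) (hστ : ∀ ω, σ ω ≤ τ ω)
    (hrc : ∀ ω, ∀ t : ℝ≥0, ContinuousWithinAt
      (fun s : ℝ≥0 => X (s : ℝ≥0∞) ω) (Set.Ici t) t)
    (hadpstop : ∀ t : ℝ≥0∞, StronglyMeasurable[F t] fun ω => X (min t (τ ω)) ω) :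
    Measurable fun ω => X (σ ω) ω := by
  apply measurable_of_tendsto_metrizable
    (f := fun n ω => X (min (ap σ n ω) (τ ω)) ω)
    (fun n => measurable_fn F X τ σ hσ hadpstop n)
  rw [tendsto_pi_nhds]
  intro ω
  by_cases h : σ ω = ∞
  · have hτ : τ ω = ∞ := top_le_iff.mp (h ▸ hστ ω)
    have : ∀ n, X (min (ap σ n ω) (τ ω)) ω = X (σ ω) ω := by
      intro n
      simp [ap, h, hτ]
    simp only [this]
    exact tendsto_const_nhds
  · exact tendsto_ap X τ σ hστ hrc h


/-- Key discretized optional-sampling inequality: for a set `A` compatible with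
the dyadic approximations of `σ`, `∫_{A ∩ {σ ≤ q}} min(X_{u ∧ τ}, c) ≤
∫_{A ∩ {σ ≤ q}} min(X_σ, c)` whenever the dyadic upper bounds of `q` are
eventually `≤ u`. -/
lemma key_ineq (P : Measure Ω) [IsProbabilityMeasure P]
    (F : Filtration ℝ≥0∞ mΩ) (X : ℝ≥0∞ → Ω → ℝ) (τ σ : Ω → ℝ≥0∞)
    (hσ : ∀ i : ℝ≥0∞, MeasurableSet[F i] {ω | σ ω ≤ i}) (hστ : ∀ ω, σ ω ≤ τ ω)
    (hrc : ∀ ω, ∀ t : ℝ≥0, ContinuousWithinAt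
      (fun s : ℝ≥0 => X (s : ℝ≥0∞) ω) (Set.Ici t) t)
    (hint : ∀ t : ℝ≥0∞, Integrable (fun ω => X (min t (τ ω)) ω) P)
    (hadpstop : ∀ t : ℝ≥0∞, StronglyMeasurable[F t] fun ω => X (min t (τ ω)) ω)
    (hsmg : ∀ s t : ℝ≥0∞, s ≤ t →
      (P[fun ω => X (min t (τ ω)) ω | F s])
        ≤ᵐ[P] fun ω => X (min s (τ ω)) ω)
    (hSint : Integrable (fun ω => X (σ ω) ω) P)
    (A : Set Ω)
    (hA : ∀ n k, MeasurableSet[F ((dv n k : ℝ≥0) : ℝ≥0∞)]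
      (A ∩ {ω | ap σ n ω = ((dv n k : ℝ≥0) : ℝ≥0∞)}))
    (q : ℝ≥0) (u : ℝ≥0∞)
    (hqu : ∀ᶠ n in atTop, ((dv n ⌈(q:ℝ) * 2 ^ n⌉₊ : ℝ≥0) : ℝ≥0∞) ≤ u) (c : ℝ) :
    ∫ ω in A ∩ {ω | σ ω ≤ (q : ℝ≥0∞)}, min (X (min u (τ ω)) ω) c ∂P
      ≤ ∫ ω in A ∩ {ω | σ ω ≤ (q : ℝ≥0∞)}, min (X (σ ω) ω) c ∂P := by
  classical
  set B : Set Ω := A ∩ {ω | σ ω ≤ (q : ℝ≥0∞)} with hB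
  set K : ℕ → ℕ := fun n => ⌈(q:ℝ) * 2 ^ n⌉₊ with hK
  set pc : ℕ → ℕ → Set Ω :=
    fun n k => B ∩ {ω | ap σ n ω = ((dv n k : ℝ≥0) : ℝ≥0∞)} with hpc
  -- measurability of pieces in the filtration
  have hpcF : ∀ n k, MeasurableSet[F ((dv n k : ℝ≥0) : ℝ≥0∞)] (pc n k) := by
    intro n k
    by_cases hdq : dv n k ≤ q
    · have : pc n k = A ∩ {ω | ap σ n ω = ((dv n k : ℝ≥0) : ℝ≥0∞)} := by
        ext ω
        simp only [hpc, hB, Set.mem_inter_iff, Set.mem_setOf_eq]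
        constructor
        · rintro ⟨⟨hA', _⟩, hap⟩; exact ⟨hA', hap⟩
        · rintro ⟨hA', hap⟩
          exact ⟨⟨hA', le_trans (le_trans (le_ap σ n ω) hap.le)
            (ENNReal.coe_le_coe.mpr hdq)⟩, hap⟩
      rw [this]; exact hA n k
    · have hql : (q : ℝ≥0∞) ≤ ((dv n k : ℝ≥0) : ℝ≥0∞) :=
        ENNReal.coe_le_coe.mpr (le_of_not_ge hdq)
      have : pc n k = (A ∩ {ω | ap σ n ω = ((dv n k : ℝ≥0) : ℝ≥0∞)})
          ∩ {ω | σ ω ≤ (q : ℝ≥0∞)} := by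
        ext ω
        simp only [hpc, hB, Set.mem_inter_iff, Set.mem_setOf_eq]
        tauto
      rw [this]
      exact (hA n k).inter ((F.mono hql) _ (hσ _))
  have hpcM : ∀ n k, MeasurableSet (pc n k) := fun n k => F.le _ _ (hpcF n k)
  -- disjointness
  have hdisj : ∀ n, (↑(Finset.range (K n + 1)) : Set ℕ).Pairwise
      (Function.onFun Disjoint (pc n)) := by
    intro n k _ k' _ hkk'
    refine Set.disjoint_left.mpr ?_
    rintro ω ⟨_, h1⟩ ⟨_, h2⟩
    exact hkk' (dv_inj (ENNReal.coe_inj.mp (h1.symm.trans h2)))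
  -- decomposition of B
  have hBdecomp : ∀ n, B = ⋃ k ∈ Finset.range (K n + 1), pc n k := by
    intro n
    ext ω
    simp only [Set.mem_iUnion, Finset.mem_range, hpc, Set.mem_inter_iff,
      Set.mem_setOf_eq]
    constructor
    · intro hω
      refine ⟨cl σ n ω, Nat.lt_succ_of_le (cl_le_of_le hω.2), hω, ?_⟩
      exact ap_eq_iff.mpr ⟨ne_top_of_le_ne_top ENNReal.coe_ne_top hω.2, rfl⟩
    · rintro ⟨k, _, hω, _⟩; exact hω
  have hBmeas : MeasurableSet B := by
    rw [hBdecomp 0]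
    exact Finset.measurableSet_biUnion _ fun k _ => hpcM 0 k
  -- integrability facts
  have hintu : Integrable (fun ω => min (X (min u (τ ω)) ω) c) P :=
    integrable_min_const (hint u) c
  have hintd : ∀ (d : ℝ≥0∞), Integrable (fun ω => min (X (min d (τ ω)) ω) c) P :=
    fun d => integrable_min_const (hint d) c
  have hfcOn : ∀ n, IntegrableOn
      (fun ω => min (X (min (ap σ n ω) (τ ω)) ω) c) B P := by
    intro n
    rw [hBdecomp n, integrableOn_finset_iUnion]
    intro k _
    exact ((hintd ((dv n k : ℝ≥0) : ℝ≥0∞)).integrableOn).congr_fun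
      (fun ω hω => by rw [hω.2]) (hpcM n k)
  -- step 1 : discrete sampling at level n
  have step1 : ∀ n, ((dv n (K n) : ℝ≥0) : ℝ≥0∞) ≤ u →
      ∫ ω in B, min (X (min u (τ ω)) ω) c ∂P
        ≤ ∫ ω in B, min (X (min (ap σ n ω) (τ ω)) ω) c ∂P := by
    intro n hn
    have piece : ∀ k ∈ Finset.range (K n + 1),
        ∫ ω in pc n k, min (X (min u (τ ω)) ω) c ∂P
          ≤ ∫ ω in pc n k, min (X (min (ap σ n ω) (τ ω)) ω) c ∂P := by
      intro k hk
      set d : ℝ≥0∞ := ((dv n k : ℝ≥0) : ℝ≥0∞) with hd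
      have hdu : d ≤ u := by
        refine le_trans ?_ hn
        exact ENNReal.coe_le_coe.mpr (dv_mono (Nat.lt_succ_iff.mp (Finset.mem_range.mp hk)))
      have hcond : (P[fun ω => min (X (min u (τ ω)) ω) c | F d])
          ≤ᵐ[P] fun ω => min (X (min d (τ ω)) ω) c := by
        have h1 : (P[fun ω => min (X (min u (τ ω)) ω) c | F d])
            ≤ᵐ[P] (P[fun ω => X (min u (τ ω)) ω | F d]) :=
          condExp_mono hintu (hint u)
            (Eventually.of_forall fun ω => min_le_left _ _)
        have h2 := hsmg d u hdu
        have h3 : (P[fun ω => min (X (min u (τ ω)) ω) c | F d])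
            ≤ᵐ[P] fun _ => c := by
          have := condExp_mono (m := F d) hintu (integrable_const c)
            (Eventually.of_forall fun ω => min_le_right _ _)
          rwa [condExp_const (F.le d) c] at this
        filter_upwards [h1, h2, h3] with ω e1 e2 e3
        exact le_min (le_trans e1 e2) e3
      calc ∫ ω in pc n k, min (X (min u (τ ω)) ω) c ∂P
          = ∫ ω in pc n k, (P[fun ω => min (X (min u (τ ω)) ω) c | F d]) ω ∂P :=
            (setIntegral_condExp (F.le d) hintu (hpcF n k)).symm
        _ ≤ ∫ ω in pc n k, min (X (min d (τ ω)) ω) c ∂P :=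
            setIntegral_mono_ae (integrable_condExp.integrableOn)
              ((hintd d).integrableOn) hcond
        _ = ∫ ω in pc n k, min (X (min (ap σ n ω) (τ ω)) ω) c ∂P :=
            setIntegral_congr_fun (hpcM n k) (fun ω hω => by rw [hω.2])
    calc ∫ ω in B, min (X (min u (τ ω)) ω) c ∂P
        = ∑ k ∈ Finset.range (K n + 1),
            ∫ ω in pc n k, min (X (min u (τ ω)) ω) c ∂P := by
          rw [hBdecomp n]
          exact integral_biUnion_finset _ (fun k _ => hpcM n k) (hdisj n)
            (fun k _ => hintu.integrableOn)
      _ ≤ ∑ k ∈ Finset.range (K n + 1),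
            ∫ ω in pc n k, min (X (min (ap σ n ω) (τ ω)) ω) c ∂P :=
          Finset.sum_le_sum piece
      _ = ∫ ω in B, min (X (min (ap σ n ω) (τ ω)) ω) c ∂P := by
          rw [hBdecomp n]
          exact (integral_biUnion_finset _ (fun k _ => hpcM n k) (hdisj n)
            (fun k _ => by
              have := hfcOn n
              rw [hBdecomp n, integrableOn_finset_iUnion] at this
              exact this k (by assumption))).symm
  -- step 2 : Fatou along the dyadic approximations
  obtain ⟨N, hN⟩ := eventually_atTop.mp hqu
  set L : ℝ := ∫ ω in B, min (X (min u (τ ω)) ω) c ∂P with hL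
  set C : ℝ := (∫ ω in B, c ∂P) - L with hC
  have hSc : IntegrableOn (fun ω => min (X (σ ω) ω) c) B P :=
    (integrable_min_const hSint c).integrableOn
  have key : ∫ ω in B, (c - min (X (σ ω) ω) c) ∂P ≤ C := by
    apply integral_le_of_tendsto
      (f := fun j ω => c - min (X (min (ap σ (j + N) ω) (τ ω)) ω) c)
      (μ := P.restrict B)
    · intro j
      exact measurable_const.sub
        (((measurable_fn F X τ σ hσ hadpstop (j + N)).min measurable_const))
    · intro j ω
      simp only [sub_nonneg]
      exact min_le_right _ _
    · intro j
      exact (integrable_const c).sub (hfcOn (j + N))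
    · exact (integrable_const c).sub hSc
    · rw [hC, hL, sub_nonneg]
      exact setIntegral_mono hintu.integrableOn (integrable_const c).integrableOn
        (fun ω => min_le_right _ _)
    · apply Eventually.of_forall
      intro j
      rw [integral_sub (integrable_const c) (hfcOn (j + N)), hC]
      have := step1 (j + N) (hN (j + N) (Nat.le_add_left N j))
      simp only [integral_const]
      gcongr
    · rw [ae_restrict_iff' hBmeas]
      apply Eventually.of_forall
      intro ω hω
      have hne : σ ω ≠ ∞ := ne_top_of_le_ne_top ENNReal.coe_ne_top hω.2
      have h1 : Tendsto (fun n => min (X (min (ap σ n ω) (τ ω)) ω) c) atTop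
          (𝓝 (min (X (σ ω) ω) c)) :=
        (tendsto_ap X τ σ hστ hrc hne).min tendsto_const_nhds
      exact (tendsto_const_nhds.sub (h1.comp (tendsto_add_atTop_nat N)))
  rw [integral_sub (integrable_const c) hSc, hC] at key
  linarith

/-- The function `1_{σ ≤ q} · min(X_σ, c)` is `F u`-strongly measurable when
the dyadic upper bounds of `q` are eventually `≤ u` and `q ≤ u`. -/
lemma stronglyMeasurable_W (F : Filtration ℝ≥0∞ mΩ) (X : ℝ≥0∞ → Ω → ℝ)
    (τ σ : Ω → ℝ≥0∞) (hσ : ∀ i : ℝ≥0∞, MeasurableSet[F i] {ω | σ ω ≤ i}) (hστ : ∀ ω, σ ω ≤ τ ω)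
    (hrc : ∀ ω, ∀ t : ℝ≥0, ContinuousWithinAt
      (fun s : ℝ≥0 => X (s : ℝ≥0∞) ω) (Set.Ici t) t)
    (hadpstop : ∀ t : ℝ≥0∞, StronglyMeasurable[F t] fun ω => X (min t (τ ω)) ω)
    (q : ℝ≥0) (u : ℝ≥0∞)
    (hqu : ∀ᶠ n in atTop, ((dv n ⌈(q:ℝ) * 2 ^ n⌉₊ : ℝ≥0) : ℝ≥0∞) ≤ u)
    (hq_u : (q : ℝ≥0∞) ≤ u) (c : ℝ) :
    StronglyMeasurable[F u]
      (fun ω => if σ ω ≤ (q : ℝ≥0∞) then min (X (σ ω) ω) c else 0) := by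
  classical
  obtain ⟨N, hN⟩ := eventually_atTop.mp hqu
  have hg : ∀ j : ℕ, Measurable[F u] (fun ω =>
      if σ ω ≤ (q : ℝ≥0∞) then min (X (min (ap σ (j + N) ω) (τ ω)) ω) c else 0) := by
    intro j
    set n := j + N with hn'
    have hn : ((dv n ⌈(q:ℝ) * 2 ^ n⌉₊ : ℝ≥0) : ℝ≥0∞) ≤ u := hN n (Nat.le_add_left N j)
    apply measurable_glue (ι := Option ℕ)
      (s := fun i => Option.rec {ω | ¬ σ ω ≤ (q : ℝ≥0∞)}
        (fun k => if dv n k ≤ dv n ⌈(q:ℝ) * 2 ^ n⌉₊ then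
          ({ω | σ ω ≤ (q : ℝ≥0∞)} ∩ {ω | ap σ n ω = ((dv n k : ℝ≥0) : ℝ≥0∞)})
          else (∅ : Set Ω)) i)
      (g := fun i => Option.rec (fun _ => (0:ℝ))
        (fun k ω => min (X (min ((dv n k : ℝ≥0) : ℝ≥0∞) (τ ω)) ω) c) i)
    · intro ω
      by_cases h : σ ω ≤ (q : ℝ≥0∞)
      · refine ⟨some (cl σ n ω), ?_⟩
        have hcl : dv n (cl σ n ω) ≤ dv n ⌈(q:ℝ) * 2 ^ n⌉₊ := dv_mono (cl_le_of_le h)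
        simp only [hcl, if_true]
        exact ⟨h, ap_eq_iff.mpr ⟨ne_top_of_le_ne_top ENNReal.coe_ne_top h, rfl⟩⟩
      · exact ⟨none, h⟩
    · rintro (_ | k) ω hω
      · have : ¬ σ ω ≤ (q : ℝ≥0∞) := hω
        simp only [this, if_false]
      · by_cases hc : dv n k ≤ dv n ⌈(q:ℝ) * 2 ^ n⌉₊
        · simp only [hc, if_true] at hω
          have h1 : σ ω ≤ (q : ℝ≥0∞) := hω.1
          have h2 : ap σ n ω = ((dv n k : ℝ≥0) : ℝ≥0∞) := hω.2
          simp only [h1, if_true, h2]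
        · simp only [hc, if_false] at hω
          exact absurd hω (Set.notMem_empty ω)
    · rintro (_ | k) B hB
      · refine MeasurableSet.inter ?_ ?_
        · exact ((F.mono hq_u) _ (hσ q)).compl
        · exact (meas_const_aux (F u) 0) hB
      · by_cases hc : dv n k ≤ dv n ⌈(q:ℝ) * 2 ^ n⌉₊
        · simp only [hc, if_true]
          have hdk_u : ((dv n k : ℝ≥0) : ℝ≥0∞) ≤ u :=
            le_trans (ENNReal.coe_le_coe.mpr hc) hn
          refine MeasurableSet.inter (MeasurableSet.inter ?_ ?_) ?_
          · exact (F.mono hq_u) _ (hσ q)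
          · exact (F.mono hdk_u) _ (measurableSet_ap_eq F hσ n k)
          · exact (((hadpstop _).measurable.mono (F.mono hdk_u) le_rfl).min
              measurable_const) hB
        · simp only [hc, if_false]
          simp
  have htend : Tendsto (fun j ω =>
      if σ ω ≤ (q : ℝ≥0∞) then min (X (min (ap σ (j + N) ω) (τ ω)) ω) c else 0)
      atTop (𝓝 (fun ω => if σ ω ≤ (q : ℝ≥0∞) then min (X (σ ω) ω) c else 0)) := by
    rw [tendsto_pi_nhds]
    intro ω
    by_cases h : σ ω ≤ (q : ℝ≥0∞)
    · simp only [h, if_true]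
      have hne : σ ω ≠ ∞ := ne_top_of_le_ne_top ENNReal.coe_ne_top h
      exact ((tendsto_ap X τ σ hστ hrc hne).min tendsto_const_nhds).comp
        (tendsto_add_atTop_nat N)
    · simp only [h, if_false]
      exact tendsto_const_nhds
  exact (measurable_of_tendsto_aux (F u) hg htend).stronglyMeasurable

/-- The sets `{X_σ < b}` are compatible with the dyadic approximations. -/
lemma measurableSet_slt (F : Filtration ℝ≥0∞ mΩ) (X : ℝ≥0∞ → Ω → ℝ)
    (τ σ : Ω → ℝ≥0∞) (hσ : ∀ i : ℝ≥0∞, MeasurableSet[F i] {ω | σ ω ≤ i}) (hστ : ∀ ω, σ ω ≤ τ ω)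
    (hrc : ∀ ω, ∀ t : ℝ≥0, ContinuousWithinAt
      (fun s : ℝ≥0 => X (s : ℝ≥0∞) ω) (Set.Ici t) t)
    (hadpstop : ∀ t : ℝ≥0∞, StronglyMeasurable[F t] fun ω => X (min t (τ ω)) ω)
    (b : ℝ) (n k : ℕ) :
    MeasurableSet[F ((dv n k : ℝ≥0) : ℝ≥0∞)]
      ({ω | X (σ ω) ω < b} ∩ {ω | ap σ n ω = ((dv n k : ℝ≥0) : ℝ≥0∞)}) := by
  classical
  set d : ℝ≥0∞ := ((dv n k : ℝ≥0) : ℝ≥0∞) with hd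
  have hg : ∀ j : ℕ, Measurable[F d] (fun ω =>
      if ap σ n ω = d then X (min (ap σ (j + n) ω) (τ ω)) ω else 0) := by
    intro j
    apply measurable_glue (ι := Option ℕ)
      (s := fun i => Option.rec {ω | ¬ ap σ n ω = d}
        (fun i' => if dv (j + n) i' ≤ dv n k then
          ({ω | ap σ n ω = d} ∩ {ω | ap σ (j + n) ω = ((dv (j + n) i' : ℝ≥0) : ℝ≥0∞)})
          else (∅ : Set Ω)) i)
      (g := fun i => Option.rec (fun _ => (0:ℝ))
        (fun i' ω => X (min ((dv (j + n) i' : ℝ≥0) : ℝ≥0∞) (τ ω)) ω) i)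
    · intro ω
      by_cases h : ap σ n ω = d
      · have hne : σ ω ≠ ∞ := by
          intro he
          rw [ap, if_pos he] at h
          exact ENNReal.top_ne_coe h
        refine ⟨some (cl σ (j + n) ω), ?_⟩
        have happ : ap σ (j + n) ω = ((dv (j + n) (cl σ (j + n) ω) : ℝ≥0) : ℝ≥0∞) :=
          ap_eq_iff.mpr ⟨hne, rfl⟩
        have hle : dv (j + n) (cl σ (j + n) ω) ≤ dv n k := by
          have := ap_antitone (σ := σ) (Nat.le_add_left n j) ω
          rw [happ, h, hd] at this
          exact ENNReal.coe_le_coe.mp this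
        simp only [hle, if_true]
        exact ⟨h, happ⟩
      · exact ⟨none, h⟩
    · rintro (_ | i') ω hω
      · have : ¬ ap σ n ω = d := hω
        simp only [this, if_false]
      · by_cases hc : dv (j + n) i' ≤ dv n k
        · simp only [hc, if_true] at hω
          have h1 : ap σ n ω = d := hω.1
          have h2 : ap σ (j + n) ω = ((dv (j + n) i' : ℝ≥0) : ℝ≥0∞) := hω.2
          rw [if_pos h1, h2]
        · simp only [hc, if_false] at hω
          exact absurd hω (Set.notMem_empty ω)
    · rintro (_ | i') B hB
      · refine MeasurableSet.inter ?_ ?_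
        · exact (measurableSet_ap_eq F hσ n k).compl
        · exact (meas_const_aux (F d) 0) hB
      · by_cases hc : dv (j + n) i' ≤ dv n k
        · simp only [hc, if_true]
          have hle : ((dv (j + n) i' : ℝ≥0) : ℝ≥0∞) ≤ d := ENNReal.coe_le_coe.mpr hc
          refine MeasurableSet.inter (MeasurableSet.inter ?_ ?_) ?_
          · exact measurableSet_ap_eq F hσ n k
          · exact (F.mono hle) _ (measurableSet_ap_eq F hσ (j + n) i')
          · exact ((hadpstop _).measurable.mono (F.mono hle) le_rfl) hB
        · simp only [hc, if_false]
          simp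
  have htend : Tendsto (fun j ω =>
      if ap σ n ω = d then X (min (ap σ (j + n) ω) (τ ω)) ω else 0)
      atTop (𝓝 (fun ω => if ap σ n ω = d then X (σ ω) ω else 0)) := by
    rw [tendsto_pi_nhds]
    intro ω
    by_cases h : ap σ n ω = d
    · simp only [h, if_true]
      have hne : σ ω ≠ ∞ := by
        intro he
        rw [ap, if_pos he] at h
        exact ENNReal.top_ne_coe h
      exact (tendsto_ap X τ σ hστ hrc hne).comp (tendsto_add_atTop_nat n)
    · simp only [h, if_false]
      exact tendsto_const_nhds
  have hGmeas : Measurable[F d]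
      (fun ω => if ap σ n ω = d then X (σ ω) ω else 0) :=
    measurable_of_tendsto_aux (F d) hg htend
  have hset : {ω | X (σ ω) ω < b} ∩ {ω | ap σ n ω = d}
      = (fun ω => if ap σ n ω = d then X (σ ω) ω else 0) ⁻¹' (Set.Iio b)
        ∩ {ω | ap σ n ω = d} := by
    ext ω
    simp only [Set.mem_inter_iff, Set.mem_setOf_eq, Set.mem_preimage, Set.mem_Iio]
    constructor
    · rintro ⟨h1, h2⟩
      exact ⟨by simp [h2, h1], h2⟩
    · rintro ⟨h1, h2⟩
      rw [if_pos h2] at h1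
      exact ⟨h1, h2⟩
  rw [hset]
  exact (hGmeas measurableSet_Iio).inter (measurableSet_ap_eq F hσ n k)


lemma eventually_dv_le {q' u' : ℝ≥0} (h : (q':ℝ) < (u':ℝ)) :
    ∀ᶠ n in atTop, ((dv n ⌈(q':ℝ) * 2 ^ n⌉₊ : ℝ≥0) : ℝ≥0∞) ≤ ((u' : ℝ≥0) : ℝ≥0∞) := by
  obtain ⟨N, hN⟩ := exists_pow_lt_of_lt_one (sub_pos.mpr h) (by norm_num : (1/2:ℝ) < 1)
  rw [eventually_atTop]
  refine ⟨N, fun n hn => ?_⟩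
  rw [ENNReal.coe_le_coe, ← NNReal.coe_le_coe, dv_coe_real]
  have h1 : (⌈(q':ℝ) * 2 ^ n⌉₊ : ℝ) < (q':ℝ) * 2 ^ n + 1 :=
    Nat.ceil_lt_add_one (by positivity)
  have h2 : ((1:ℝ)/2) ^ n ≤ (1/2) ^ N :=
    pow_le_pow_of_le_one (by norm_num) (by norm_num) hn
  have h3 : ((1:ℝ)/2) ^ n * 2 ^ n = 1 := by rw [← mul_pow]; norm_num
  rw [div_le_iff₀ (by positivity : (0:ℝ) < 2 ^ n)]
  nlinarith [(by positivity : (0:ℝ) < 2 ^ n)]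

lemma exists_rat_btwn_ennreal {x y : ℝ≥0∞} (hx : x ≠ ∞) (h : x < y) :
    ∃ r : ℚ, 0 ≤ r ∧ x < ((Real.toNNReal (r:ℝ) : ℝ≥0) : ℝ≥0∞)
      ∧ ((Real.toNNReal (r:ℝ) : ℝ≥0) : ℝ≥0∞) < y := by
  have hxr : x = ((x.toNNReal : ℝ≥0) : ℝ≥0∞) := (ENNReal.coe_toNNReal hx).symm
  have hxa : Real.toNNReal (x.toReal) = x.toNNReal := by
    rw [ENNReal.toReal, Real.toNNReal_coe]
  by_cases hy : y = ∞
  · obtain ⟨r, hr⟩ := exists_rat_gt x.toReal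
    have hr0 : (0:ℝ) ≤ (r:ℝ) := le_of_lt (lt_of_le_of_lt ENNReal.toReal_nonneg hr)
    refine ⟨r, by exact_mod_cast hr0, ?_, ?_⟩
    · rw [hxr, ENNReal.coe_lt_coe, ← hxa]
      exact (Real.toNNReal_lt_toNNReal_iff
        (lt_of_le_of_lt ENNReal.toReal_nonneg hr)).mpr hr
    · rw [hy]; exact ENNReal.coe_lt_top
  · have hab : x.toReal < y.toReal := (ENNReal.toReal_lt_toReal hx hy).mpr h
    obtain ⟨r, hr1, hr2⟩ := exists_rat_btwn hab
    have hr0 : (0:ℝ) ≤ (r:ℝ) := le_of_lt (lt_of_le_of_lt ENNReal.toReal_nonneg hr1)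
    have hyr : y = ((y.toNNReal : ℝ≥0) : ℝ≥0∞) := (ENNReal.coe_toNNReal hy).symm
    have hya : Real.toNNReal (y.toReal) = y.toNNReal := by
      rw [ENNReal.toReal, Real.toNNReal_coe]
    refine ⟨r, by exact_mod_cast hr0, ?_, ?_⟩
    · rw [hxr, ENNReal.coe_lt_coe, ← hxa]
      exact (Real.toNNReal_lt_toNNReal_iff
        (lt_of_le_of_lt ENNReal.toReal_nonneg hr1)).mpr hr1
    · rw [hyr, ENNReal.coe_lt_coe, ← hya]
      exact (Real.toNNReal_lt_toNNReal_iff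
        (lt_of_le_of_lt hr0 hr2)).mpr hr2

end MinimalityAux

open MinimalityAux


/-- sufficient condition for minimality (Theorem 4.2 of the
paper with `g` the identity): if the stopped process `X^τ` is a closed
supermartingale and a.s. `X` has no intervals of constancy on `[0, τ)`,
then any stopping time `σ ≤ τ` with `X_σ ~ X_τ` satisfies `σ = τ` a.s. -/
theorem minimality_of_closed_supermartingale_stopping
    {Ω : Type*} {mΩ : MeasurableSpace Ω} (P : Measure Ω)
    [IsProbabilityMeasure P] (F : Filtration ℝ≥0∞ mΩ) (X : ℝ≥0∞ → Ω → ℝ)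
    -- `X` is adapted with càdlàg (right-continuous) paths:
    (hadp : ∀ t : ℝ≥0∞, StronglyMeasurable[F t] (X t))
    (hrc : ∀ ω, ∀ t : ℝ≥0, ContinuousWithinAt
      (fun s : ℝ≥0 => X (s : ℝ≥0∞) ω) (Set.Ici t) t)
    (τ : Ω → ℝ≥0∞) (hτ : IsStoppingTime F (fun ω => (τ ω : WithTop ℝ≥0∞)))
    -- on `{τ = ∞}`, `X ∞` is the a.s. limit of `X t` as `t → ∞`:
    (hlim : ∀ᵐ ω ∂P, τ ω = ∞ →
      Tendsto (fun t : ℝ≥0 => X (t : ℝ≥0∞) ω) atTop (𝓝 (X ∞ ω)))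
    -- (a) the stopped process `X^τ` is a supermartingale ...
    (hint : ∀ t : ℝ≥0∞, Integrable (fun ω => X (min t (τ ω)) ω) P)
    (hadpstop : ∀ t : ℝ≥0∞, StronglyMeasurable[F t] fun ω => X (min t (τ ω)) ω)
    (hsmg : ∀ s t : ℝ≥0∞, s ≤ t →
      (P[fun ω => X (min t (τ ω)) ω | F s])
        ≤ᵐ[P] fun ω => X (min s (τ ω)) ω)
    -- ... closed, i.e. bounded below by a uniformly integrable martingale:
    (M : ℝ≥0∞ → Ω → ℝ) (hM : Martingale M F P)
    (hMui : UniformIntegrable M 1 P)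
    (hMX : ∀ t, M t ≤ᵐ[P] fun ω => X (min t (τ ω)) ω)
    -- `σ ≤ τ` is a stopping time with `X_σ ~ X_τ`:
    (σ : Ω → ℝ≥0∞) (hσ : IsStoppingTime F (fun ω => (σ ω : WithTop ℝ≥0∞))) (hστ : ∀ ω, σ ω ≤ τ ω)
    (hlaw : Measure.map (fun ω => X (σ ω) ω) P
      = Measure.map (fun ω => X (τ ω) ω) P)
    -- (b) a.s. `X` has no intervals of constancy on `[0, τ)`:
    (hnc : ∀ᵐ ω ∂P, ∀ s t : ℝ≥0, s < t → (t : ℝ≥0∞) < τ ω →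
      ∃ u ∈ Set.Icc s t, X (u : ℝ≥0∞) ω ≠ X (s : ℝ≥0∞) ω) :
    σ =ᵐ[P] τ := by

  replace hσ : ∀ i : ℝ≥0∞, MeasurableSet[F i] {ω | σ ω ≤ i} := fun i => by
    simpa using hσ i
  classical
  have hmin : ∀ x : ℝ≥0∞, min ∞ x = x := fun x => min_eq_right le_top
  set S : Ω → ℝ := fun ω => X (σ ω) ω with hS
  set Z : Ω → ℝ := fun ω => X (τ ω) ω with hZ
  have hZeq : (fun ω => X (min ∞ (τ ω)) ω) = Z := by
    funext ω; rw [hmin]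
  have hZint : Integrable Z P := hZeq ▸ hint ∞
  have hZmeas : Measurable Z := by
    rw [← hZeq]
    exact ((hadpstop ∞).measurable.mono (F.le ∞) le_rfl)
  have hSmeas : Measurable S := measurable_S F X τ σ hσ hστ hrc hadpstop
  have hSint : Integrable S P := by
    have h1 : Integrable (id ∘ S) P := by
      rw [← integrable_map_measure aestronglyMeasurable_id hSmeas.aemeasurable, hlaw,
        integrable_map_measure aestronglyMeasurable_id hZmeas.aemeasurable]
      exact hZint
    exact h1
  have hInt_eq : ∀ c : ℝ, ∫ ω, min (S ω) c ∂P = ∫ ω, min (Z ω) c ∂P := by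
    intro c
    calc ∫ ω, min (S ω) c ∂P = ∫ x, min x c ∂(P.map S) :=
          (integral_map hSmeas.aemeasurable
            ((measurable_id.min measurable_const).aestronglyMeasurable)).symm
      _ = ∫ x, min x c ∂(P.map Z) := by rw [hlaw]
      _ = ∫ ω, min (Z ω) c ∂P :=
          integral_map hZmeas.aemeasurable
            ((measurable_id.min measurable_const).aestronglyMeasurable)
  have hEZ : ∫ ω, S ω ∂P = ∫ ω, Z ω ∂P := by
    calc ∫ ω, S ω ∂P = ∫ x, x ∂(P.map S) :=
          (integral_map hSmeas.aemeasurable aestronglyMeasurable_id).symm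
      _ = ∫ x, x ∂(P.map Z) := by rw [hlaw]
      _ = ∫ ω, Z ω ∂P := integral_map hZmeas.aemeasurable aestronglyMeasurable_id
  -- abbreviation for the compatibility property of a set
  set PropA : Set Ω → Prop := fun A => ∀ n k,
    MeasurableSet[F ((dv n k : ℝ≥0) : ℝ≥0∞)]
      (A ∩ {ω | ap σ n ω = ((dv n k : ℝ≥0) : ℝ≥0∞)}) with hPropA
  have hPropUniv : PropA Set.univ := by
    intro n k
    rw [Set.univ_inter]
    exact measurableSet_ap_eq F hσ n k
  have hPropCompl : ∀ A, PropA A → PropA Aᶜ := by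
    intro A hA n k
    have : Aᶜ ∩ {ω | ap σ n ω = ((dv n k : ℝ≥0) : ℝ≥0∞)}
        = {ω | ap σ n ω = ((dv n k : ℝ≥0) : ℝ≥0∞)}
          \ (A ∩ {ω | ap σ n ω = ((dv n k : ℝ≥0) : ℝ≥0∞)}) := by
      ext ω; simp only [Set.mem_inter_iff, Set.mem_compl_iff, Set.mem_diff]; tauto
    rw [this]
    exact (measurableSet_ap_eq F hσ n k).diff (hA n k)
  -- E1 : closedness sampling at σ over compatible sets
  have E1 : ∀ A : Set Ω, PropA A → MeasurableSet A → ∀ c : ℝ,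
      ∫ ω in A, min (Z ω) c ∂P ≤ ∫ ω in A, min (S ω) c ∂P := by
    intro A hA hAm c
    have hj : ∀ j : ℕ,
        ∫ ω in A ∩ {ω | σ ω ≤ ((j : ℝ≥0) : ℝ≥0∞)}, min (Z ω) c ∂P
          ≤ ∫ ω in A ∩ {ω | σ ω ≤ ((j : ℝ≥0) : ℝ≥0∞)}, min (S ω) c ∂P := by
      intro j
      have := key_ineq P F X τ σ hσ hστ hrc hint hadpstop hsmg hSint A hA
        (j : ℝ≥0) ∞ (Eventually.of_forall fun n => le_top) c
      simpa only [hmin] using this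
    -- pass to the limit j → ∞
    set T : Set Ω := {ω | σ ω = ∞} with hT
    have hTmeas : MeasurableSet T := F.le ∞ _ (measurableSet_sigma_top F hσ)
    have hAj : ∀ j : ℕ, MeasurableSet (A ∩ {ω | σ ω ≤ ((j : ℝ≥0) : ℝ≥0∞)}) :=
      fun j => hAm.inter (F.le _ _ (hσ _))
    have hATc : MeasurableSet (A ∩ Tᶜ) := hAm.inter hTmeas.compl
    have htendset : ∀ (f : Ω → ℝ), Integrable f P →
        Tendsto (fun j : ℕ => ∫ ω in A ∩ {ω | σ ω ≤ ((j : ℝ≥0) : ℝ≥0∞)}, f ω ∂P)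
          atTop (𝓝 (∫ ω in A ∩ Tᶜ, f ω ∂P)) := by
      intro f hf
      have heq : ∀ j : ℕ, ∫ ω in A ∩ {ω | σ ω ≤ ((j : ℝ≥0) : ℝ≥0∞)}, f ω ∂P
          = ∫ ω, (A ∩ {ω | σ ω ≤ ((j : ℝ≥0) : ℝ≥0∞)}).indicator f ω ∂P :=
        fun j => (integral_indicator (hAj j)).symm
      have heq2 : ∫ ω in A ∩ Tᶜ, f ω ∂P = ∫ ω, (A ∩ Tᶜ).indicator f ω ∂P :=
        (integral_indicator hATc).symm
      simp only [heq, heq2]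
      apply tendsto_integral_of_dominated_convergence (fun ω => |f ω|)
      · intro j
        exact (hf.aestronglyMeasurable.indicator (hAj j))
      · exact hf.abs
      · intro j
        apply Eventually.of_forall
        intro ω
        by_cases hω : ω ∈ A ∩ {ω | σ ω ≤ ((j : ℝ≥0) : ℝ≥0∞)}
        · rw [Set.indicator_of_mem hω]; exact le_of_eq (Real.norm_eq_abs _)
        · rw [Set.indicator_of_notMem hω]; simp [abs_nonneg]
      · apply Eventually.of_forall
        intro ω
        by_cases hωT : σ ω = ∞
        · have h1 : ∀ j : ℕ, (A ∩ {ω | σ ω ≤ ((j : ℝ≥0) : ℝ≥0∞)}).indicator f ω = 0 := by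
            intro j
            apply Set.indicator_of_notMem
            rintro ⟨_, hj⟩
            have hj' : σ ω ≤ ((j : ℝ≥0) : ℝ≥0∞) := hj
            rw [hωT] at hj'
            exact absurd hj' (by simp)
          have h2 : (A ∩ Tᶜ).indicator f ω = 0 := by
            apply Set.indicator_of_notMem
            rintro ⟨_, hc⟩
            exact hc hωT
          simp only [h1, h2]
          exact tendsto_const_nhds
        · obtain ⟨j0, hj0⟩ := ENNReal.exists_nat_gt hωT
          apply tendsto_const_nhds.congr'
          rw [EventuallyEq, eventually_atTop]
          refine ⟨j0, fun j hj => ?_⟩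
          have hωj : σ ω ≤ ((j : ℝ≥0) : ℝ≥0∞) := by
            refine le_trans hj0.le ?_
            exact_mod_cast (by exact_mod_cast hj : (j0:ℕ) ≤ j)
          by_cases hωA : ω ∈ A
          · rw [Set.indicator_of_mem (Set.mem_inter hωA hωT),
              Set.indicator_of_mem (Set.mem_inter hωA hωj)]
          · rw [Set.indicator_of_notMem (fun h => hωA h.1),
              Set.indicator_of_notMem (fun h => hωA h.1)]
    have hlim_le : ∫ ω in A ∩ Tᶜ, min (Z ω) c ∂P
        ≤ ∫ ω in A ∩ Tᶜ, min (S ω) c ∂P :=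
      le_of_tendsto_of_tendsto'
        (htendset _ (integrable_min_const hZint c))
        (htendset _ (integrable_min_const hSint c)) hj
    have htopeq : ∫ ω in A ∩ T, min (Z ω) c ∂P = ∫ ω in A ∩ T, min (S ω) c ∂P := by
      apply setIntegral_congr_fun (hAm.inter hTmeas)
      rintro ω ⟨_, hωT⟩
      have hσω : σ ω = ∞ := hωT
      have hτω : τ ω = ∞ := top_le_iff.mp (hσω ▸ hστ ω)
      simp only [hZ, hS, hσω, hτω]
    have hsplit : ∀ (f : Ω → ℝ), Integrable f P →
        ∫ ω in A, f ω ∂P = ∫ ω in A ∩ Tᶜ, f ω ∂P + ∫ ω in A ∩ T, f ω ∂P := by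
      intro f hf
      have hun : (A ∩ Tᶜ) ∪ (A ∩ T) = A := by
        rw [← Set.inter_union_distrib_left, Set.compl_union_self, Set.inter_univ]
      have h := setIntegral_union (f := f) (μ := P) (s := A ∩ Tᶜ) (t := A ∩ T)
        ((disjoint_compl_left (a := T)).mono Set.inter_subset_right Set.inter_subset_right)
        (hAm.inter hTmeas) hf.integrableOn hf.integrableOn
      rw [hun] at h
      exact h
    rw [hsplit _ (integrable_min_const hZint c), hsplit _ (integrable_min_const hSint c)]
    linarith
  -- equality over compatible sets
  have hAeq : ∀ A : Set Ω, PropA A → MeasurableSet A → ∀ c : ℝ,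
      ∫ ω in A, min (Z ω) c ∂P = ∫ ω in A, min (S ω) c ∂P := by
    intro A hA hAm c
    have h1 := E1 A hA hAm c
    have h2 := E1 Aᶜ (hPropCompl A hA) hAm.compl c
    have ht1 := integral_add_compl hAm (integrable_min_const hZint c)
    have ht2 := integral_add_compl hAm (integrable_min_const hSint c)
    have htot := hInt_eq c
    linarith
  -- F1 : X_σ = X_τ a.s.
  have F1 : Z =ᵐ[P] S := by
    have hb : ∀ b : ℚ, ∀ᵐ ω ∂P, S ω < (b:ℝ) → Z ω ≤ (b:ℝ) := by
      intro b
      set A : Set Ω := {ω | S ω < (b:ℝ)} with hAdef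
      have hAm : MeasurableSet A := hSmeas measurableSet_Iio
      have hAp : PropA A := fun n k =>
        measurableSet_slt F X τ σ hσ hστ hrc hadpstop (b:ℝ) n k
      have e1 := hAeq A hAp hAm (b:ℝ)
      have e2 := hAeq A hAp hAm ((b:ℝ) + 1)
      have hs1 : ∫ ω in A, min (S ω) (b:ℝ) ∂P = ∫ ω in A, min (S ω) ((b:ℝ)+1) ∂P := by
        apply setIntegral_congr_fun hAm
        intro ω hω
        have hωb : S ω < (b:ℝ) := hω
        show min (S ω) (b:ℝ) = min (S ω) ((b:ℝ)+1)
        rw [min_eq_left hωb.le, min_eq_left (by linarith)]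
      have heq12 : ∫ ω in A, min (Z ω) (b:ℝ) ∂P = ∫ ω in A, min (Z ω) ((b:ℝ)+1) ∂P := by
        rw [e1, e2, hs1]
      have hle : ∀ ω, min (Z ω) (b:ℝ) ≤ min (Z ω) ((b:ℝ)+1) :=
        fun ω => min_le_min le_rfl (by linarith)
      have haeeq := ae_eq_on_of_le_of_integral_le
        (f := fun ω => min (Z ω) (b:ℝ)) (g := fun ω => min (Z ω) ((b:ℝ)+1))
        ((integrable_min_const hZint _).integrableOn)
        ((integrable_min_const hZint _).integrableOn)
        (Eventually.of_forall hle) heq12.ge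
      have := (ae_restrict_iff' hAm).mp haeeq
      filter_upwards [this] with ω hω hωA
      have heqω := hω hωA
      by_contra hcon
      push_neg at hcon
      rw [min_eq_right (by linarith : (b:ℝ) ≤ Z ω)] at heqω
      have hlt : (b:ℝ) < min (Z ω) ((b:ℝ)+1) := lt_min hcon (by linarith)
      rw [← heqω] at hlt
      exact lt_irrefl _ hlt
    have hZleS : ∀ᵐ ω ∂P, Z ω ≤ S ω := by
      have := ae_all_iff.mpr hb
      filter_upwards [this] with ω hω
      by_contra hcon
      push_neg at hcon
      obtain ⟨b, hb1, hb2⟩ := exists_rat_btwn hcon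
      exact absurd (hω b hb1) (not_le.mpr hb2)
    have hsub0 : ∫ ω, (S ω - Z ω) ∂P = 0 := by
      rw [integral_sub hSint hZint]
      linarith [hEZ]
    have h0 : 0 ≤ᵐ[P] fun ω => S ω - Z ω := by
      filter_upwards [hZleS] with ω h
      simp only [Pi.zero_apply]
      linarith
    have := (integral_eq_zero_iff_of_nonneg_ae h0 (hSint.sub hZint)).mp hsub0
    filter_upwards [this] with ω h
    have : S ω - Z ω = 0 := h
    linarith
  -- F3 : between σ and τ the process sticks to the value X_σ
  have F3 : ∀ q u c : ℚ, ∀ᵐ ω ∂P, 0 ≤ q → q < u →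
      σ ω ≤ ((Real.toNNReal (q:ℝ) : ℝ≥0) : ℝ≥0∞) →
      min (X (min ((Real.toNNReal (u:ℝ) : ℝ≥0) : ℝ≥0∞) (τ ω)) ω) (c:ℝ)
        = min (S ω) (c:ℝ) := by
    intro q u c
    by_cases hqu : 0 ≤ q ∧ q < u
    case neg =>
      filter_upwards with ω h1 h2
      exact absurd ⟨h1, h2⟩ hqu
    obtain ⟨hq0, hqult⟩ := hqu
    set q' : ℝ≥0 := Real.toNNReal (q:ℝ) with hq'def
    set u' : ℝ≥0 := Real.toNNReal (u:ℝ) with hu'def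
    have hq'r : (q':ℝ) = (q:ℝ) := Real.coe_toNNReal _ (by exact_mod_cast hq0)
    have hu0 : (0:ℝ) ≤ (u:ℝ) := by
      have h1 : (0:ℝ) ≤ (q:ℝ) := by exact_mod_cast hq0
      have h2 : (q:ℝ) ≤ (u:ℝ) := by exact_mod_cast hqult.le
      linarith
    have hu'r : (u':ℝ) = (u:ℝ) := Real.coe_toNNReal _ hu0
    have hq'u' : (q':ℝ) < (u':ℝ) := by
      rw [hq'r, hu'r]; exact_mod_cast hqult
    have hqu_enn : ((q' : ℝ≥0) : ℝ≥0∞) ≤ ((u' : ℝ≥0) : ℝ≥0∞) := by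
      rw [ENNReal.coe_le_coe, ← NNReal.coe_le_coe]
      exact hq'u'.le
    have hquN := eventually_dv_le hq'u'
    set B : Set Ω := {ω | σ ω ≤ ((q' : ℝ≥0) : ℝ≥0∞)} with hBdef
    have hBF : MeasurableSet[F ((u' : ℝ≥0) : ℝ≥0∞)] B := (F.mono hqu_enn) _ (hσ _)
    have hBamb : MeasurableSet B := F.le _ _ hBF
    have e2 : ∫ ω in B, min (X (min ((u':ℝ≥0):ℝ≥0∞) (τ ω)) ω) (c:ℝ) ∂P
        ≤ ∫ ω in B, min (S ω) (c:ℝ) ∂P := by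
      have := key_ineq P F X τ σ hσ hστ hrc hint hadpstop hsmg hSint Set.univ
        hPropUniv q' ((u':ℝ≥0):ℝ≥0∞) hquN (c:ℝ)
      simpa only [Set.univ_inter] using this
    set mzc : Ω → ℝ := fun ω => min (Z ω) (c:ℝ) with hmzc
    set msc : Ω → ℝ := fun ω => min (S ω) (c:ℝ) with hmsc
    set Yc : Ω → ℝ := fun ω => min (X (min ((u':ℝ≥0):ℝ≥0∞) (τ ω)) ω) (c:ℝ) with hYc
    have hmzc_int : Integrable mzc P := integrable_min_const hZint _
    have hmsc_int : Integrable msc P := integrable_min_const hSint _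
    have h1 : (P[mzc | F ((u':ℝ≥0):ℝ≥0∞)]) ≤ᵐ[P] Yc := by
      have ha : (P[mzc | F ((u':ℝ≥0):ℝ≥0∞)])
          ≤ᵐ[P] (P[fun ω => X (min ∞ (τ ω)) ω | F ((u':ℝ≥0):ℝ≥0∞)]) := by
        apply condExp_mono hmzc_int (hint ∞)
        apply Eventually.of_forall
        intro ω
        show mzc ω ≤ X (min ⊤ (τ ω)) ω
        rw [hmin]
        exact min_le_left _ _
      have hb := hsmg ((u':ℝ≥0):ℝ≥0∞) ∞ le_top
      have hc : (P[mzc | F ((u':ℝ≥0):ℝ≥0∞)]) ≤ᵐ[P] fun _ => (c:ℝ) := by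
        have := condExp_mono (m := F ((u':ℝ≥0):ℝ≥0∞)) hmzc_int (integrable_const (c:ℝ))
          (Eventually.of_forall fun ω => min_le_right _ _)
        rwa [condExp_const (F.le _) _] at this
      filter_upwards [ha, hb, hc] with ω e1' e2' e3'
      exact le_min (le_trans e1' e2') e3'
    have hWsm : StronglyMeasurable[F ((u':ℝ≥0):ℝ≥0∞)] (B.indicator msc) := by
      have hW := stronglyMeasurable_W F X τ σ hσ hστ hrc hadpstop q'
        ((u':ℝ≥0):ℝ≥0∞) hquN hqu_enn (c:ℝ)
      have heq : B.indicator msc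
          = fun ω => if σ ω ≤ ((q':ℝ≥0) : ℝ≥0∞) then min (S ω) (c:ℝ) else 0 := by
        funext ω
        by_cases h : σ ω ≤ ((q':ℝ≥0) : ℝ≥0∞)
        · rw [Set.indicator_of_mem (show ω ∈ B from h), if_pos h]
        · rw [Set.indicator_of_notMem (show ω ∉ B from h), if_neg h]
      rw [heq]
      exact hW
    have hWint : Integrable (B.indicator msc) P := hmsc_int.indicator hBamb
    have h2 : B.indicator (P[mzc | F ((u':ℝ≥0):ℝ≥0∞)]) =ᵐ[P] B.indicator msc := by
      have hind := condExp_indicator (m := F ((u':ℝ≥0):ℝ≥0∞)) hmzc_int hBF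
      have hcongr : B.indicator mzc =ᵐ[P] B.indicator msc := by
        filter_upwards [F1] with ω h
        by_cases hω : ω ∈ B
        · rw [Set.indicator_of_mem hω, Set.indicator_of_mem hω]
          simp only [hmzc, hmsc]
          rw [h]
        · rw [Set.indicator_of_notMem hω, Set.indicator_of_notMem hω]
      have hcc := condExp_congr_ae (m := F ((u':ℝ≥0):ℝ≥0∞)) hcongr
      have hfin : P[B.indicator msc | F ((u':ℝ≥0):ℝ≥0∞)] = B.indicator msc :=
        condExp_of_stronglyMeasurable (F.le _) hWsm hWint
      calc B.indicator (P[mzc | F ((u':ℝ≥0):ℝ≥0∞)])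
          =ᵐ[P] P[B.indicator mzc | F ((u':ℝ≥0):ℝ≥0∞)] := hind.symm
        _ =ᵐ[P] P[B.indicator msc | F ((u':ℝ≥0):ℝ≥0∞)] := hcc
        _ =ᵐ[P] B.indicator msc := by rw [hfin]
    have h3 : ∀ᵐ ω ∂P, ω ∈ B → msc ω ≤ Yc ω := by
      filter_upwards [h1, h2] with ω e1' e2'
      intro hωB
      rw [Set.indicator_of_mem hωB, Set.indicator_of_mem hωB] at e2'
      rw [← e2']
      exact e1'
    have h4 := ae_eq_on_of_le_of_integral_le (μ := P) (B := B)
      (f := msc) (g := Yc)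
      hmsc_int.integrableOn (integrable_min_const (hint _) _).integrableOn
      ((ae_restrict_iff' hBamb).mpr h3) e2
    have h5 := (ae_restrict_iff' hBamb).mp h4
    filter_upwards [h5] with ω hω _ _ hσq
    exact (hω hσq).symm
  -- final pointwise argument
  have F3all : ∀ᵐ ω ∂P, ∀ q u c : ℚ, 0 ≤ q → q < u →
      σ ω ≤ ((Real.toNNReal (q:ℝ) : ℝ≥0) : ℝ≥0∞) →
      min (X (min ((Real.toNNReal (u:ℝ) : ℝ≥0) : ℝ≥0∞) (τ ω)) ω) (c:ℝ)
        = min (S ω) (c:ℝ) :=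
    ae_all_iff.mpr fun q => ae_all_iff.mpr fun u => ae_all_iff.mpr fun c => F3 q u c
  filter_upwards [F3all, hnc] with ω hF3 hncω
  by_contra hne
  have hlt : σ ω < τ ω := lt_of_le_of_ne (hστ ω) hne
  have hσne : σ ω ≠ ∞ := hlt.ne_top
  obtain ⟨q, hq0, hq1, hq2⟩ := exists_rat_btwn_ennreal hσne hlt
  obtain ⟨s, hs0, hs1, hs2⟩ := exists_rat_btwn_ennreal ENNReal.coe_ne_top hq2
  obtain ⟨t, ht0, ht1, ht2⟩ := exists_rat_btwn_ennreal ENNReal.coe_ne_top hs2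
  set q' : ℝ≥0 := Real.toNNReal (q:ℝ) with hq'd
  set s' : ℝ≥0 := Real.toNNReal (s:ℝ) with hs'd
  set t' : ℝ≥0 := Real.toNNReal (t:ℝ) with ht'd
  have hq0R : (0:ℝ) ≤ (q:ℝ) := by exact_mod_cast hq0
  have hs0R : (0:ℝ) ≤ (s:ℝ) := by exact_mod_cast hs0
  have ht0R : (0:ℝ) ≤ (t:ℝ) := by exact_mod_cast ht0
  have hq'c : ((q':ℝ≥0):ℝ) = (q:ℝ) := Real.coe_toNNReal _ hq0R
  have hs'c : ((s':ℝ≥0):ℝ) = (s:ℝ) := Real.coe_toNNReal _ hs0R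
  have ht'c : ((t':ℝ≥0):ℝ) = (t:ℝ) := Real.coe_toNNReal _ ht0R
  have hq's' : q' < s' := ENNReal.coe_lt_coe.mp hs1
  have hs't' : s' < t' := ENNReal.coe_lt_coe.mp ht1
  have hqsR : (q:ℝ) < (s:ℝ) := by
    rw [← hq'c, ← hs'c]; exact_mod_cast hq's'
  have hstR : (s:ℝ) < (t:ℝ) := by
    rw [← hs'c, ← ht'c]; exact_mod_cast hs't'
  -- constancy at rational times in (q, t]
  have hconst : ∀ v : ℚ, q < v → v ≤ t →
      X ((Real.toNNReal (v:ℝ) : ℝ≥0) : ℝ≥0∞) ω = S ω := by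
    intro v hv1 hv2
    have hv0R : (0:ℝ) ≤ (v:ℝ) := by
      have : (q:ℝ) < (v:ℝ) := by exact_mod_cast hv1
      linarith
    set v' : ℝ≥0 := Real.toNNReal (v:ℝ) with hv'd
    have hv'c : ((v':ℝ≥0):ℝ) = (v:ℝ) := Real.coe_toNNReal _ hv0R
    have hv't' : v' ≤ t' := by
      rw [← NNReal.coe_le_coe, hv'c, ht'c]
      exact_mod_cast hv2
    have hv'τ : ((v':ℝ≥0):ℝ≥0∞) < τ ω :=
      lt_of_le_of_lt (ENNReal.coe_le_coe.mpr hv't') ht2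
    obtain ⟨c, hc⟩ := exists_rat_gt (max (X ((v':ℝ≥0):ℝ≥0∞) ω) (S ω))
    have h := hF3 q v c hq0 hv1 (le_of_lt hq1)
    rw [min_eq_left (le_of_lt hv'τ)] at h
    rw [min_eq_left (le_of_lt (lt_of_le_of_lt (le_max_left _ _) hc)),
      min_eq_left (le_of_lt (lt_of_le_of_lt (le_max_right _ _) hc))] at h
    exact h
  -- constancy on the real interval [s', t']
  have hXv : ∀ v : ℝ≥0, s' ≤ v → v ≤ t' → X ((v:ℝ≥0):ℝ≥0∞) ω = S ω := by
    intro v hv1 hv2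
    by_cases hvt : v = t'
    · subst hvt
      exact hconst t (by exact_mod_cast hqsR.trans hstR) le_rfl
    · have hvt' : v < t' := lt_of_le_of_ne hv2 hvt
      have hex : ∀ j : ℕ, ∃ r : ℚ,
          (v:ℝ) < (r:ℝ) ∧ (r:ℝ) < min ((t':ℝ≥0):ℝ) ((v:ℝ) + 1/(j+1)) := by
        intro j
        apply exists_rat_btwn
        apply lt_min
        · exact_mod_cast hvt'
        · have : (0:ℝ) < 1/(j+1) := by positivity
          linarith
      choose rs hrs1 hrs2 using hex
      have hrs0 : ∀ j, (0:ℝ) ≤ ((rs j):ℝ) :=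
        fun j => le_of_lt (lt_of_le_of_lt (v.coe_nonneg) (hrs1 j))
      have hXj : ∀ j, X ((Real.toNNReal ((rs j):ℝ) : ℝ≥0) : ℝ≥0∞) ω = S ω := by
        intro j
        apply hconst
        · have hsv : (s:ℝ) ≤ (v:ℝ) := by
            rw [← hs'c]; exact_mod_cast hv1
          have : (q:ℝ) < ((rs j):ℝ) := by
            calc (q:ℝ) < (s:ℝ) := hqsR
              _ ≤ (v:ℝ) := hsv
              _ < ((rs j):ℝ) := hrs1 j
          exact_mod_cast this
        · have : ((rs j):ℝ) ≤ (t:ℝ) := by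
            have := (hrs2 j).trans_le (min_le_left _ _)
            rw [ht'c] at this
            exact this.le
          exact_mod_cast this
      have htt : Tendsto (fun j : ℕ => Real.toNNReal ((rs j):ℝ)) atTop (𝓝 v) := by
        rw [← NNReal.tendsto_coe]
        have hco : ∀ j, ((Real.toNNReal ((rs j):ℝ) : ℝ≥0) : ℝ) = ((rs j):ℝ) :=
          fun j => Real.coe_toNNReal _ (hrs0 j)
        simp only [hco]
        have hup : Tendsto (fun j : ℕ => (v:ℝ) + 1/(j+1)) atTop (𝓝 ((v:ℝ) + 0)) :=
          tendsto_const_nhds.add (tendsto_one_div_add_atTop_nhds_zero_nat)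
        rw [add_zero] at hup
        exact tendsto_of_tendsto_of_tendsto_of_le_of_le tendsto_const_nhds hup
          (fun j => (hrs1 j).le)
          (fun j => ((hrs2 j).trans_le (min_le_right _ _)).le)
      have hwithin : Tendsto (fun j : ℕ => Real.toNNReal ((rs j):ℝ)) atTop
          (𝓝[Set.Ici v] v) :=
        tendsto_nhdsWithin_of_tendsto_nhds_of_eventually_within _ htt
          (Eventually.of_forall fun j => by
            show v ≤ Real.toNNReal ((rs j):ℝ)
            rw [← NNReal.coe_le_coe, Real.coe_toNNReal _ (hrs0 j)]
            exact (hrs1 j).le)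
      have hlim2 := (hrc ω v).tendsto.comp hwithin
      have hconst2 : Tendsto
          (fun j : ℕ => X ((Real.toNNReal ((rs j):ℝ) : ℝ≥0) : ℝ≥0∞) ω) atTop
          (𝓝 (S ω)) := by
        simp only [hXj]
        exact tendsto_const_nhds
      exact tendsto_nhds_unique hlim2 hconst2
  obtain ⟨w, hw, hwne⟩ := hncω s' t' hs't' ht2
  exact hwne ((hXv w hw.1 hw.2).trans (hXv s' le_rfl hs't'.le).symm)
end

section
/- Let $X^\tau$ be a closed supermartingale and $\sigma \le \tau$ stopping times with $X_\sigma \sim X_\tau$ (equal in distribution). Then $\mathsf E[X_\tau \mid \mathcal F_\sigma] = X_\sigma$ almost surely, and moreover $X_\tau = X_\sigma$ almost surely. -/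
open MeasureTheory ProbabilityTheory Filter
open scoped ENNReal NNReal Topology

namespace StmtTen


/-- upper dyadic approximation with cutoff at `n`. -/
noncomputable def dyad (n : ℕ) (s : ℝ≥0∞) : ℝ≥0∞ :=
  if s < n then (((⌈s.toNNReal * 2 ^ n⌉₊ + 1 : ℝ≥0) / 2 ^ n : ℝ≥0) : ℝ≥0∞) else ∞

lemma le_dyad (n : ℕ) (s : ℝ≥0∞) : s ≤ dyad n s := by
  rw [dyad]
  split_ifs with h
  · have hs : s ≠ ∞ := h.ne_top
    rw [← ENNReal.coe_toNNReal hs, ENNReal.coe_le_coe]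
    rw [le_div_iff₀ (by positivity)]
    calc s.toNNReal * 2 ^ n ≤ ⌈s.toNNReal * 2 ^ n⌉₊ := Nat.le_ceil _
    _ ≤ (⌈s.toNNReal * 2 ^ n⌉₊ + 1 : ℝ≥0) := le_self_add
  · exact le_top

lemma dyad_lt_top_iff {n : ℕ} {s : ℝ≥0∞} : dyad n s < ∞ ↔ s < n := by
  rw [dyad]; split_ifs with h
  · exact iff_of_true ENNReal.coe_lt_top h
  · exact iff_of_false (lt_irrefl _) h

lemma dyad_mono_s (n : ℕ) : Monotone (dyad n) := by
  intro s s' hss'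
  rw [dyad, dyad]
  split_ifs with h1 h2 h2
  · rw [ENNReal.coe_le_coe]
    have : s.toNNReal ≤ s'.toNNReal := ENNReal.toNNReal_mono h2.ne_top hss'
    gcongr
  · exact le_top
  · exact absurd (lt_of_le_of_lt hss' h2) h1
  · exact le_rfl

lemma dyad_anti (s : ℝ≥0∞) : Antitone (fun n => dyad n s) := by
  refine antitone_nat_of_succ_le fun n => ?_
  show dyad (n+1) s ≤ dyad n s
  rw [dyad, dyad]
  split_ifs with h1 h2 h2
  · rw [ENNReal.coe_le_coe]
    set a := s.toNNReal
    rw [div_le_div_iff₀ (by positivity) (by positivity)]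
    have key : (⌈a * 2 ^ (n+1)⌉₊ : ℕ) ≤ 2 * ⌈a * 2 ^ n⌉₊ := by
      refine Nat.ceil_le.mpr ?_
      push_cast
      calc a * 2 ^ (n+1) = (a * 2 ^ n) * 2 := by ring
      _ ≤ (⌈a * 2 ^ n⌉₊ : ℝ≥0) * 2 := by gcongr; exact Nat.le_ceil _
      _ = 2 * (⌈a * 2 ^ n⌉₊ : ℝ≥0) := by ring
    have key2 : (⌈a * 2 ^ (n+1)⌉₊ + 1 : ℝ≥0) ≤ 2 * ⌈a * 2 ^ n⌉₊ + 2 := by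
      have h3 : ((⌈a * 2 ^ (n+1)⌉₊ : ℕ) : ℝ≥0) ≤ ((2 * ⌈a * 2 ^ n⌉₊ : ℕ) : ℝ≥0) :=
        Nat.cast_le.mpr key
      push_cast at h3
      exact add_le_add h3 one_le_two
    calc (⌈a * 2 ^ (n+1)⌉₊ + 1 : ℝ≥0) * 2 ^ n
        ≤ (2 * ⌈a * 2 ^ n⌉₊ + 2 : ℝ≥0) * 2 ^ n := mul_le_mul_left key2 _
    _ = (⌈a * 2 ^ n⌉₊ + 1 : ℝ≥0) * 2 ^ (n+1) := by ring
  · exact le_top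
  · exact absurd (h2.trans_le (by exact_mod_cast Nat.le_succ n)) h1
  · exact le_rfl

lemma dyad_le (n : ℕ) {s : ℝ≥0∞} (h : s < n) :
    dyad n s ≤ s + 2 / 2 ^ n := by
  rw [dyad, if_pos h]
  have hs : s ≠ ∞ := h.ne_top
  rw [← ENNReal.coe_toNNReal hs]
  have h22 : (2 : ℝ≥0∞) / 2 ^ n = ((2 / 2 ^ n : ℝ≥0) : ℝ≥0∞) := by
    rw [ENNReal.coe_div (by positivity)]; simp
  rw [h22, ← ENNReal.coe_add, ENNReal.coe_le_coe]
  rw [div_le_iff₀ (by positivity)]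
  have hc : (⌈s.toNNReal * 2 ^ n⌉₊ : ℝ≥0) < s.toNNReal * 2 ^ n + 1 :=
    Nat.ceil_lt_add_one (by positivity)
  calc (⌈s.toNNReal * 2 ^ n⌉₊ + 1 : ℝ≥0) ≤ (s.toNNReal * 2 ^ n + 1) + 1 := by gcongr
  _ = s.toNNReal * 2 ^ n + 2 := by ring
  _ = (s.toNNReal + 2 / 2 ^ n) * 2 ^ n := by
      rw [add_mul, div_mul_cancel₀ _ (by positivity : (2:ℝ≥0) ^ n ≠ 0)]

lemma tendsto_dyad (s : ℝ≥0∞) : Tendsto (fun n => dyad n s) atTop (𝓝 s) := by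
  have h1 : ⨅ n, dyad n s = s := by
    refine le_antisymm ?_ (le_iInf fun n => le_dyad n s)
    refine ENNReal.le_of_forall_pos_le_add fun ε hε hs => ?_
    obtain ⟨n, hn⟩ := pow_unbounded_of_one_lt (2 / (ε : ℝ≥0)) (one_lt_two (α := ℝ≥0))
    obtain ⟨m, hm⟩ := exists_nat_gt s.toNNReal
    set N := max n m
    have hsN : s < N := by
      rw [← ENNReal.coe_toNNReal hs.ne_top]
      calc (s.toNNReal : ℝ≥0∞) < m := by exact_mod_cast hm
      _ ≤ N := by exact_mod_cast Nat.cast_le.mpr (le_max_right n m)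
    have h2N : (2 : ℝ≥0∞) / 2 ^ N ≤ ε := by
      have hn' : 2 / (ε : ℝ≥0) ≤ 2 ^ N := by
        calc 2 / (ε : ℝ≥0) ≤ 2 ^ n := hn.le
        _ ≤ 2 ^ N := by gcongr; norm_num; exact le_max_left n m
      rw [div_le_iff₀ (by positivity)] at hn'
      rw [ENNReal.div_le_iff (by positivity) (ENNReal.pow_ne_top (by norm_num))]
      calc (2:ℝ≥0∞) = ((2:ℝ≥0) : ℝ≥0∞) := by norm_cast
      _ ≤ ((2 ^ N * ε : ℝ≥0) : ℝ≥0∞) := by exact_mod_cast hn'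
      _ = ((ε * 2 ^ N : ℝ≥0) : ℝ≥0∞) := by rw [mul_comm]
      _ = ε * 2 ^ N := by push_cast; ring
    calc ⨅ k, dyad k s ≤ dyad N s := iInf_le _ N
    _ ≤ s + 2 / 2 ^ N := dyad_le N hsN
    _ ≤ s + ε := by gcongr
  have h2 := tendsto_atTop_iInf (dyad_anti s)
  rwa [h1] at h2

/-- the finite range of `dyad n`. -/
noncomputable def dyadRange (n : ℕ) : Finset ℝ≥0∞ :=
  insert ∞ ((Finset.range (n * 2 ^ n + 2)).image
    (fun k : ℕ => (((k : ℝ≥0) / 2 ^ n : ℝ≥0) : ℝ≥0∞)))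

lemma dyad_mem_range (n : ℕ) (s : ℝ≥0∞) : dyad n s ∈ dyadRange n := by
  rw [dyad, dyadRange]
  split_ifs with h
  · refine Finset.mem_insert_of_mem (Finset.mem_image.mpr
      ⟨⌈s.toNNReal * 2 ^ n⌉₊ + 1, ?_, by push_cast; ring_nf⟩)
    rw [Finset.mem_range]
    have hsn : s.toNNReal < n := by
      rw [← ENNReal.coe_lt_coe, ENNReal.coe_toNNReal h.ne_top]
      exact_mod_cast h
    have : ⌈s.toNNReal * 2 ^ n⌉₊ ≤ n * 2 ^ n := by
      refine Nat.ceil_le.mpr ?_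
      push_cast
      exact mul_le_mul_left hsn.le _
    omega
  · exact Finset.mem_insert_self _ _



variable {Ω : Type*} {mΩ : MeasurableSpace Ω} {F : Filtration ℝ≥0∞ mΩ} {σ : Ω → ℝ≥0∞}

lemma isStoppingTime_comp_monotone (hσ : IsStoppingTime F (fun ω => (σ ω : WithTop ℝ≥0∞))) (e : ℝ≥0∞ → ℝ≥0∞)
    (he : Monotone e) (hee : ∀ s, s ≤ e s) : IsStoppingTime F fun ω => ((e (σ ω) : ℝ≥0∞) : WithTop ℝ≥0∞) := by
  intro t
  simp only [WithTop.coe_le_coe]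
  set D : Set ℝ≥0∞ := {s | e s ≤ t} with hD
  by_cases hne : D.Nonempty
  · have hDl : ∀ ⦃s' s⦄, s' ≤ s → s ∈ D → s' ∈ D := fun s' s h hs => le_trans (he h) hs
    set u := sSup D with hu
    have hut : u ≤ t := sSup_le fun s hs => le_trans (hee s) hs
    by_cases humem : u ∈ D
    · have hset : {ω | e (σ ω) ≤ t} = {ω | σ ω ≤ u} := by
        ext ω
        simp only [Set.mem_setOf_eq]
        exact ⟨fun h => le_sSup h, fun h => hDl h humem⟩
      rw [hset]
      exact F.mono hut _ (by simpa only [WithTop.coe_le_coe] using hσ u)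
    · have hset : {ω | e (σ ω) ≤ t} = {ω | σ ω < u} := by
        ext ω
        simp only [Set.mem_setOf_eq]
        constructor
        · intro h
          exact lt_of_le_of_ne (le_sSup h) (fun hequ => humem (hequ ▸ h))
        · intro h
          obtain ⟨d, hd, hlt⟩ := lt_sSup_iff.mp h
          exact hDl hlt.le hd
      rw [hset]
      exact F.mono hut _ (by simpa only [WithTop.coe_lt_coe] using hσ.measurableSet_lt u)
  · have hset : {ω | e (σ ω) ≤ t} = ∅ := by
      ext ω
      simp only [Set.mem_setOf_eq, Set.mem_empty_iff_false, iff_false]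
      exact fun h => hne ⟨σ ω, h⟩
    rw [hset]
    exact @MeasurableSet.empty _ (F t)

/-- a stopped value of an adapted process at a finite-range stopping time is strongly
measurable w.r.t. the stopping time σ-algebra. -/
lemma stronglyMeasurable_stoppedValue_of_finite_range {u : ℝ≥0∞ → Ω → ℝ} {ρ : Ω → ℝ≥0∞}
    (hρ : IsStoppingTime F (fun ω => (ρ ω : WithTop ℝ≥0∞))) {s : Finset ℝ≥0∞} (hmem : ∀ ω, ρ ω ∈ s)
    (hadp : ∀ t, StronglyMeasurable[F t] (u t)) :
    StronglyMeasurable[hρ.measurableSpace] (stoppedValue u (fun ω => (ρ ω : WithTop ℝ≥0∞))) := by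
  have hcount : (Set.range (fun ω => (ρ ω : WithTop ℝ≥0∞))).Countable :=
    (((Finset.finite_toSet s).image (fun x : ℝ≥0∞ => (x : WithTop ℝ≥0∞))).subset
      (by rintro v ⟨ω, rfl⟩; exact ⟨_, hmem ω, rfl⟩)).countable
  rw [stronglyMeasurable_iff_measurable]
  intro B hB
  have key : ∀ t : ℝ≥0∞, MeasurableSet[F t] (stoppedValue u (fun ω => (ρ ω : WithTop ℝ≥0∞)) ⁻¹' B
      ∩ {ω | (ρ ω : WithTop ℝ≥0∞) ≤ t}) := by
    intro t
    have : stoppedValue u (fun ω => (ρ ω : WithTop ℝ≥0∞)) ⁻¹' B ∩ {ω | (ρ ω : WithTop ℝ≥0∞) ≤ t} =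
        ⋃ r ∈ s.filter (· ≤ t), ({ω | ρ ω = r} ∩ u r ⁻¹' B) := by
      ext ω
      simp only [Set.mem_inter_iff, Set.mem_preimage, Set.mem_setOf_eq, Set.mem_iUnion,
        Finset.mem_filter, WithTop.coe_le_coe]
      constructor
      · rintro ⟨huB, hle⟩
        exact ⟨ρ ω, ⟨⟨hmem ω, hle⟩, rfl, huB⟩⟩
      · rintro ⟨r, ⟨_, hrt⟩, rfl, hub⟩
        exact ⟨hub, hrt⟩
    rw [this]
    refine (s.filter (· ≤ t)).measurableSet_biUnion fun r hr => ?_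
    rw [Finset.mem_filter] at hr
    refine MeasurableSet.inter ?_ ?_
    · exact F.mono hr.2 _ (by simpa using hρ.measurableSet_eq_of_countable_range hcount r)
    · exact F.mono hr.2 _ ((hadp r).measurable hB)
  refine (hρ.measurableSet _).mpr ⟨?_, key⟩
  have h := key ⊤
  have hset : stoppedValue u (fun ω => (ρ ω : WithTop ℝ≥0∞)) ⁻¹' B
      ∩ {ω | (ρ ω : WithTop ℝ≥0∞) ≤ ((⊤ : ℝ≥0∞) : WithTop ℝ≥0∞)}
      = stoppedValue u (fun ω => (ρ ω : WithTop ℝ≥0∞)) ⁻¹' B := by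
    ext ω; simp
  rw [hset] at h
  exact le_iSup (fun i => (F i : MeasurableSpace Ω)) ⊤ _ h



variable {Ω : Type*} {mΩ : MeasurableSpace Ω} {P : Measure Ω} [IsProbabilityMeasure P]
  {F : Filtration ℝ≥0∞ mΩ} {u : ℝ≥0∞ → Ω → ℝ}

section Discrete

variable (hu_int : ∀ t, Integrable (u t) P)
  (hu_smg : ∀ s t : ℝ≥0∞, s ≤ t → (P[u t | F s]) ≤ᵐ[P] u s)

include hu_int hu_smg

/-- one-sided optional sampling for a supermartingale, set-integral version, base case:
deterministic start time `r`. -/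
lemma setIntegral_stoppedValue_le_aux {ρ' : Ω → ℝ≥0∞} (hρ' : IsStoppingTime F (fun ω => (ρ' ω : WithTop ℝ≥0∞)))
    {s : Finset ℝ≥0∞} (hmem : ∀ ω, ρ' ω ∈ s) :
    ∀ (k : ℕ) (r : ℝ≥0∞) (B : Set Ω), (s.filter (fun v => r < v)).card ≤ k →
      MeasurableSet[F r] B → (∀ ω ∈ B, r ≤ ρ' ω) →
      ∫ ω in B, stoppedValue u (fun ω => (ρ' ω : WithTop ℝ≥0∞)) ω ∂P ≤ ∫ ω in B, u r ω ∂P := by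
  have hcount : (Set.range (fun ω => (ρ' ω : WithTop ℝ≥0∞))).Countable :=
    (((Finset.finite_toSet s).image (fun x : ℝ≥0∞ => (x : WithTop ℝ≥0∞))).subset
      (by rintro v ⟨ω, rfl⟩; exact ⟨_, hmem ω, rfl⟩)).countable
  have hSV : Integrable (stoppedValue u (fun ω => (ρ' ω : WithTop ℝ≥0∞))) P :=
    integrable_stoppedValue_of_mem_finset hρ' hu_int (fun ω => ⟨_, hmem ω, rfl⟩)
  intro k
  induction k with
  | zero =>
    intro r B hcard hB hBle
    -- no values above r : ρ' = r on B
    have hBeq : ∀ ω ∈ B, ρ' ω = r := by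
      intro ω hω
      rcases eq_or_lt_of_le (hBle ω hω) with h | h
      · exact h.symm
      · exfalso
        have : ρ' ω ∈ s.filter (fun v => r < v) := Finset.mem_filter.mpr ⟨hmem ω, h⟩
        simp only [Nat.le_zero, Finset.card_eq_zero] at hcard
        rw [hcard] at this
        exact absurd this (Finset.notMem_empty _)
    refine le_of_eq (setIntegral_congr_fun (F.le r _ hB) fun ω hω => ?_)
    show u (ρ' ω) ω = u r ω; rw [hBeq ω hω]
  | succ k ih =>
    intro r B hcard hB hBle
    by_cases hfe : (s.filter (fun v => r < v)) = ∅
    · -- same as base case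
      have hBeq : ∀ ω ∈ B, ρ' ω = r := by
        intro ω hω
        rcases eq_or_lt_of_le (hBle ω hω) with h | h
        · exact h.symm
        · exact absurd (hfe ▸ Finset.mem_filter.mpr ⟨hmem ω, h⟩) (Finset.notMem_empty _)
      refine le_of_eq (setIntegral_congr_fun (F.le r _ hB) fun ω hω => ?_)
      show u (ρ' ω) ω = u r ω; rw [hBeq ω hω]
    · set r' := (s.filter (fun v => r < v)).min' (Finset.nonempty_of_ne_empty hfe) with hr'
      have hr'mem := (s.filter (fun v => r < v)).min'_mem (Finset.nonempty_of_ne_empty hfe)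
      have hrr' : r < r' := (Finset.mem_filter.mp hr'mem).2
      set B₁ := B ∩ {ω | ρ' ω = r} with hB₁
      set B₂ := B ∩ {ω | r < ρ' ω} with hB₂
      have hB₁m : MeasurableSet[F r] B₁ :=
        hB.inter (show MeasurableSet[F r] {ω | ρ' ω = r} by
            simpa using hρ'.measurableSet_eq_of_countable_range hcount r)
      have hB₂m : MeasurableSet[F r] B₂ := by
        have : {ω | r < ρ' ω} = {ω | ρ' ω ≤ r}ᶜ := by
          ext ω; simp [not_le]
        rw [hB₂, this]
        exact hB.inter (show MeasurableSet[F r] {ω | ρ' ω ≤ r} by simpa using hρ' r).compl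
      have hB₂m' : MeasurableSet[F r'] B₂ := F.mono hrr'.le _ hB₂m
      have hBsplit : B = B₁ ∪ B₂ := by
        ext ω
        simp only [hB₁, hB₂, Set.mem_union, Set.mem_inter_iff, Set.mem_setOf_eq]
        constructor
        · intro hω
          rcases eq_or_lt_of_le (hBle ω hω) with h | h
          · exact Or.inl ⟨hω, h.symm⟩
          · exact Or.inr ⟨hω, h⟩
        · rintro (⟨h, _⟩ | ⟨h, _⟩) <;> exact h
      have hdisj : Disjoint B₁ B₂ := by
        rw [Set.disjoint_iff]
        rintro ω ⟨⟨_, h1⟩, _, h2⟩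
        exact absurd (h1 ▸ h2) (lt_irrefl r)
      -- piece B₁ : equality
      have hpiece1 : ∫ ω in B₁, stoppedValue u (fun ω => (ρ' ω : WithTop ℝ≥0∞)) ω ∂P = ∫ ω in B₁, u r ω ∂P := by
        refine setIntegral_congr_fun (F.le r _ hB₁m) fun ω hω => ?_
        show u (ρ' ω) ω = u r ω; rw [hω.2]
      -- piece B₂ : induction + supermartingale step
      have hBler' : ∀ ω ∈ B₂, r' ≤ ρ' ω := by
        rintro ω ⟨_, h2⟩
        exact Finset.min'_le _ _ (Finset.mem_filter.mpr ⟨hmem ω, h2⟩)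
      have hcard' : (s.filter (fun v => r' < v)).card ≤ k := by
        have hss : s.filter (fun v => r' < v) ⊂ s.filter (fun v => r < v) := by
          refine Finset.ssubset_iff_of_subset ?_ |>.mpr ⟨r', hr'mem, by simp⟩
          intro v hv
          rw [Finset.mem_filter] at hv ⊢
          exact ⟨hv.1, hrr'.trans hv.2⟩
        have := Finset.card_lt_card hss
        omega
      have hpiece2a : ∫ ω in B₂, stoppedValue u (fun ω => (ρ' ω : WithTop ℝ≥0∞)) ω ∂P ≤ ∫ ω in B₂, u r' ω ∂P :=
        ih r' B₂ hcard' hB₂m' hBler'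
      have hpiece2b : ∫ ω in B₂, u r' ω ∂P ≤ ∫ ω in B₂, u r ω ∂P := by
        rw [← setIntegral_condExp (F.le r) (hu_int r') hB₂m]
        refine setIntegral_mono_ae_restrict integrable_condExp.integrableOn
          ((hu_int r).integrableOn) ?_
        exact ae_restrict_of_ae (hu_smg r r' hrr'.le)
      -- combine
      rw [hBsplit, setIntegral_union hdisj (F.le r _ hB₂m) hSV.integrableOn hSV.integrableOn,
        setIntegral_union hdisj (F.le r _ hB₂m) (hu_int r).integrableOn (hu_int r).integrableOn]
      have := hpiece2a.trans hpiece2b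
      linarith [hpiece1, this]

/-- discrete optional sampling inequality for the supermartingale `u` between two
finite-range stopping times. -/
lemma setIntegral_stoppedValue_le {ρ ρ' : Ω → ℝ≥0∞} (hρ : IsStoppingTime F (fun ω => (ρ ω : WithTop ℝ≥0∞)))
    (hρ' : IsStoppingTime F (fun ω => (ρ' ω : WithTop ℝ≥0∞))) {s : Finset ℝ≥0∞} (hmemρ : ∀ ω, ρ ω ∈ s)
    (hmem : ∀ ω, ρ' ω ∈ s) (hle : ∀ ω, ρ ω ≤ ρ' ω) {A : Set Ω}
    (hA : MeasurableSet[hρ.measurableSpace] A) :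
    ∫ ω in A, stoppedValue u (fun ω => (ρ' ω : WithTop ℝ≥0∞)) ω ∂P ≤ ∫ ω in A, stoppedValue u (fun ω => (ρ ω : WithTop ℝ≥0∞)) ω ∂P := by
  have hcountρ : (Set.range (fun ω => (ρ ω : WithTop ℝ≥0∞))).Countable :=
    (((Finset.finite_toSet s).image (fun x : ℝ≥0∞ => (x : WithTop ℝ≥0∞))).subset
      (by rintro v ⟨ω, rfl⟩; exact ⟨_, hmemρ ω, rfl⟩)).countable
  have hSV' : Integrable (stoppedValue u (fun ω => (ρ' ω : WithTop ℝ≥0∞))) P :=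
    integrable_stoppedValue_of_mem_finset hρ' hu_int (fun ω => ⟨_, hmem ω, rfl⟩)
  have hSV : Integrable (stoppedValue u (fun ω => (ρ ω : WithTop ℝ≥0∞))) P :=
    integrable_stoppedValue_of_mem_finset hρ hu_int (fun ω => ⟨_, hmemρ ω, rfl⟩)
  -- decompose A over the values of ρ
  have hAr : ∀ r : ℝ≥0∞, MeasurableSet[F r] (A ∩ {ω | ρ ω = r}) := by
    intro r
    have h1 : MeasurableSet[F r] (A ∩ {ω | ρ ω ≤ r}) := by
        simpa using ((hρ.measurableSet A).mp hA).2 r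
    have h2 : MeasurableSet[F r] {ω | ρ ω = r} := by
        simpa using hρ.measurableSet_eq_of_countable_range hcountρ r
    have : A ∩ {ω | ρ ω = r} = (A ∩ {ω | ρ ω ≤ r}) ∩ {ω | ρ ω = r} := by
      ext ω
      simp only [Set.mem_inter_iff, Set.mem_setOf_eq]
      exact ⟨fun ⟨h, h'⟩ => ⟨⟨h, h'.le⟩, h'⟩, fun ⟨⟨h, _⟩, h'⟩ => ⟨h, h'⟩⟩
    rw [this]
    exact h1.inter h2
  have hAsplit : A = ⋃ r ∈ s, (A ∩ {ω | ρ ω = r}) := by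
    ext ω
    simp only [Set.mem_iUnion, Set.mem_inter_iff, Set.mem_setOf_eq]
    exact ⟨fun h => ⟨ρ ω, hmemρ ω, h, rfl⟩, fun ⟨r, _, h, _⟩ => h⟩
  have hdisj : (s : Set ℝ≥0∞).Pairwise (Function.onFun Disjoint fun r => A ∩ {ω | ρ ω = r}) := by
    intro r _ r' _ hrr'
    rw [Function.onFun, Set.disjoint_iff]
    rintro ω ⟨⟨_, h1⟩, _, h2⟩
    exact absurd (h1 ▸ h2) hrr'
  have hmeas : ∀ r ∈ s, MeasurableSet (A ∩ {ω | ρ ω = r}) := fun r _ => F.le r _ (hAr r)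
  rw [hAsplit, integral_biUnion_finset s hmeas hdisj (fun r _ => hSV'.integrableOn),
    integral_biUnion_finset s hmeas hdisj (fun r _ => hSV.integrableOn)]
  refine Finset.sum_le_sum fun r hr => ?_
  have h1 : ∫ ω in A ∩ {ω | ρ ω = r}, stoppedValue u (fun ω => (ρ' ω : WithTop ℝ≥0∞)) ω ∂P
      ≤ ∫ ω in A ∩ {ω | ρ ω = r}, u r ω ∂P := by
    refine setIntegral_stoppedValue_le_aux hu_int hu_smg hρ' hmem _ r _ le_rfl (hAr r) ?_
    rintro ω ⟨_, hω⟩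
    rw [Set.mem_setOf_eq] at hω
    rw [← hω]
    exact hle ω
  have h2 : ∫ ω in A ∩ {ω | ρ ω = r}, u r ω ∂P
      = ∫ ω in A ∩ {ω | ρ ω = r}, stoppedValue u (fun ω => (ρ ω : WithTop ℝ≥0∞)) ω ∂P := by
    refine setIntegral_congr_fun (hmeas r hr) fun ω hω => ?_
    show u r ω = u (ρ ω) ω; rw [hω.2]
  rw [← h2]
  exact h1

end Discrete



variable {Ω : Type*} {mΩ : MeasurableSpace Ω} {P : Measure Ω} [IsProbabilityMeasure P]
  {F : Filtration ℝ≥0∞ mΩ} {u : ℝ≥0∞ → Ω → ℝ}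

/-- for `ι = ℝ≥0∞` (which has a top element) the stopping time σ-algebra is contained in
the ambient one. -/
lemma ms_le {σ : Ω → ℝ≥0∞} (hσ : IsStoppingTime F (fun ω => (σ ω : WithTop ℝ≥0∞))) : hσ.measurableSpace ≤ mΩ := by
  exact hσ.measurableSpace_le

lemma aux_placeholder : True := trivial

/-- a.e. version of the discrete optional sampling inequality. -/
lemma condexp_stoppedValue_le
    (hu_int : ∀ t, Integrable (u t) P)
    (hu_smg : ∀ s t : ℝ≥0∞, s ≤ t → (P[u t | F s]) ≤ᵐ[P] u s)
    (hadp : ∀ t, StronglyMeasurable[F t] (u t))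
    {ρ ρ' : Ω → ℝ≥0∞} (hρ : IsStoppingTime F (fun ω => (ρ ω : WithTop ℝ≥0∞))) (hρ' : IsStoppingTime F (fun ω => (ρ' ω : WithTop ℝ≥0∞)))
    {s : Finset ℝ≥0∞} (hmemρ : ∀ ω, ρ ω ∈ s) (hmem : ∀ ω, ρ' ω ∈ s)
    (hle : ∀ ω, ρ ω ≤ ρ' ω) :
    (P[stoppedValue u (fun ω => (ρ' ω : WithTop ℝ≥0∞)) | hρ.measurableSpace]) ≤ᵐ[P] stoppedValue u (fun ω => (ρ ω : WithTop ℝ≥0∞)) := by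
  have hm : hρ.measurableSpace ≤ mΩ := ms_le hρ
  haveI : SigmaFinite (P.trim hm) := by infer_instance
  have hSV' : Integrable (stoppedValue u (fun ω => (ρ' ω : WithTop ℝ≥0∞))) P :=
    integrable_stoppedValue_of_mem_finset hρ' hu_int (fun ω => ⟨_, hmem ω, rfl⟩)
  have hSV : Integrable (stoppedValue u (fun ω => (ρ ω : WithTop ℝ≥0∞))) P :=
    integrable_stoppedValue_of_mem_finset hρ hu_int (fun ω => ⟨_, hmemρ ω, rfl⟩)
  set f := P[stoppedValue u (fun ω => (ρ' ω : WithTop ℝ≥0∞)) | hρ.measurableSpace] with hf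
  have hfsm : StronglyMeasurable[hρ.measurableSpace] f := stronglyMeasurable_condExp
  have hgsm : StronglyMeasurable[hρ.measurableSpace] (stoppedValue u (fun ω => (ρ ω : WithTop ℝ≥0∞))) :=
    stronglyMeasurable_stoppedValue_of_finite_range hρ hmemρ hadp
  set h := fun ω => stoppedValue u (fun ω => (ρ ω : WithTop ℝ≥0∞)) ω - f ω with hh
  set A := {ω | h ω < 0} with hA
  have hAm : MeasurableSet[hρ.measurableSpace] A := by
    have : StronglyMeasurable[hρ.measurableSpace] h := hgsm.sub hfsm
    exact measurableSet_lt this.measurable measurable_const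
  have hint_h : Integrable h P := hSV.sub integrable_condExp
  have h1 : ∫ ω in A, stoppedValue u (fun ω => (ρ' ω : WithTop ℝ≥0∞)) ω ∂P ≤ ∫ ω in A, stoppedValue u (fun ω => (ρ ω : WithTop ℝ≥0∞)) ω ∂P :=
    setIntegral_stoppedValue_le hu_int hu_smg hρ hρ' hmemρ hmem hle hAm
  have h2 : ∫ ω in A, f ω ∂P = ∫ ω in A, stoppedValue u (fun ω => (ρ' ω : WithTop ℝ≥0∞)) ω ∂P :=
    setIntegral_condExp hm hSV' hAm
  have h3 : 0 ≤ ∫ ω in A, h ω ∂P := by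
    rw [hh]
    rw [integral_sub (hSV.integrableOn) (integrable_condExp.integrableOn)]
    rw [h2]
    linarith
  have h4 : ∫ ω in A, h ω ∂P ≤ 0 := by
    refine setIntegral_nonpos_of_ae_restrict ?_
    refine (ae_restrict_iff' (hm _ hAm)).mpr (ae_of_all _ fun ω hω => ?_)
    exact le_of_lt hω
  have h5 : ∫ ω in A, (fun ω => -h ω) ω ∂P = 0 := by
    rw [integral_neg]
    linarith
  have h6 : (fun ω => -h ω) =ᵐ[P.restrict A] 0 := by
    refine (integral_eq_zero_iff_of_nonneg_ae ?_ ?_).mp h5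
    · refine (ae_restrict_iff' (hm _ hAm)).mpr (ae_of_all _ fun ω hω => ?_)
      simp only [Pi.zero_apply, neg_nonneg]
      exact le_of_lt hω
    · exact hint_h.neg.integrableOn
  have h7 : P A = 0 := by
    by_contra hPA
    have this2 : ∀ᵐ ω ∂P.restrict A, False := by
      filter_upwards [h6, ae_restrict_mem (hm _ hAm)] with ω h1' h2'
      rw [Pi.zero_apply] at h1'
      have : h ω < 0 := h2'
      linarith [neg_eq_zero.mp h1']
    have h8 : P.restrict A Set.univ = 0 := by
      have := ae_iff.mp this2
      simpa using this
    rw [Measure.restrict_apply_univ] at h8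
    exact hPA h8
  rw [Filter.EventuallyLE, ae_iff]
  have hset : {ω | ¬ f ω ≤ stoppedValue u (fun ω => (ρ ω : WithTop ℝ≥0∞)) ω} = A := by
    ext ω
    simp only [Set.mem_setOf_eq, hA, hh, not_le, sub_neg]
  rw [hset]
  exact h7


section Prog

variable {Ω : Type*} {mΩ : MeasurableSpace Ω} {F : Filtration ℝ≥0∞ mΩ}

/-- convergence of a right-continuous path along times decreasing to `s`. -/
lemma tendsto_comp_times {X : ℝ≥0∞ → Ω → ℝ}
    (hrc : ∀ ω, ∀ t : ℝ≥0, ContinuousWithinAt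
      (fun s : ℝ≥0 => X (s : ℝ≥0∞) ω) (Set.Ici t) t)
    (ω : Ω) {s : ℝ≥0∞} (hs : s ≠ ∞) {v : ℕ → ℝ≥0∞} (hge : ∀ n, s ≤ v n)
    (hfin : ∀ᶠ n in atTop, v n ≠ ∞) (hten : Tendsto v atTop (𝓝 s)) :
    Tendsto (fun n => X (v n) ω) atTop (𝓝 (X s ω)) := by
  set c := s.toNNReal with hc
  have hcs : (c : ℝ≥0∞) = s := ENNReal.coe_toNNReal hs
  have h1 : Tendsto (fun n => (v n).toNNReal) atTop (𝓝 c) :=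
    (ENNReal.tendsto_toNNReal hs).comp hten
  have h2 : ∀ᶠ n in atTop, (v n).toNNReal ∈ Set.Ici c := by
    filter_upwards [hfin] with n hn
    exact ENNReal.toNNReal_mono hn (hge n)
  have h3 : Tendsto (fun n => (v n).toNNReal) atTop (𝓝[Set.Ici c] c) :=
    tendsto_nhdsWithin_iff.mpr ⟨h1, h2⟩
  have h4 := (hrc ω c).tendsto.comp h3
  have h5 : X (↑c) ω = X s ω := by rw [hcs]
  rw [Function.comp_def] at h4
  refine Tendsto.congr' ?_ (h5 ▸ h4)
  filter_upwards [hfin] with n hn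
  rw [ENNReal.coe_toNNReal hn]

/-- an adapted right-continuous process is progressively measurable. -/
lemma progMeasurable_of_rc {X : ℝ≥0∞ → Ω → ℝ}
    (hadp : ∀ t, StronglyMeasurable[F t] (X t))
    (hrc : ∀ ω, ∀ t : ℝ≥0, ContinuousWithinAt
      (fun s : ℝ≥0 => X (s : ℝ≥0∞) ω) (Set.Ici t) t) :
    ProgMeasurable F X := by
  intro t
  set M : MeasurableSpace (Set.Iic t × Ω) := Subtype.instMeasurableSpace.prod (F t) with hM
  -- approximants
  set c : ℕ → ℝ≥0∞ → ℝ≥0∞ := fun n s => min t (dyad n s) with hc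
  have happrox : ∀ n : ℕ, StronglyMeasurable[M]
      (fun p : Set.Iic t × Ω => X (c n p.1) p.2) := by
    intro n
    set V : Finset ℝ≥0∞ := (dyadRange n).image (fun v => min t v) with hV
    have hφ : Measurable[Subtype.instMeasurableSpace] (fun s : Set.Iic t => c n (s : ℝ≥0∞)) := by
      exact measurable_const.min ((dyad_mono_s n).measurable.comp measurable_subtype_coe)
    have hmeas : Measurable[M] (fun p : Set.Iic t × Ω => X (c n p.1) p.2) := by
      intro B hB
      have hsplit : (fun p : Set.Iic t × Ω => X (c n p.1) p.2) ⁻¹' B =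
          ⋃ v ∈ V, ((fun p : Set.Iic t × Ω => c n p.1) ⁻¹' {v} ∩
            (fun p : Set.Iic t × Ω => X v p.2) ⁻¹' B) := by
        ext p
        simp only [Set.mem_preimage, Set.mem_iUnion, Set.mem_inter_iff, Set.mem_singleton_iff]
        constructor
        · intro h
          exact ⟨c n p.1, Finset.mem_image.mpr ⟨dyad n p.1, dyad_mem_range n _, rfl⟩, rfl, h⟩
        · rintro ⟨v, _, hv, h⟩
          rw [hv]; exact h
      rw [hsplit]
      refine V.measurableSet_biUnion fun v hv => MeasurableSet.inter ?_ ?_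
      · exact (hφ.comp (@measurable_fst (Set.Iic t) Ω Subtype.instMeasurableSpace (F t)))
          (measurableSet_singleton v)
      · have hvle : v ≤ t := by
          obtain ⟨w, _, rfl⟩ := Finset.mem_image.mp hv
          exact min_le_left _ _
        exact (((hadp v).mono (F.mono hvle)).measurable.comp
          (@measurable_snd (Set.Iic t) Ω Subtype.instMeasurableSpace (F t))) hB
    exact hmeas.stronglyMeasurable
  refine stronglyMeasurable_of_tendsto atTop happrox ?_
  rw [tendsto_pi_nhds]
  rintro ⟨⟨s, hsle⟩, ω⟩
  simp only
  by_cases hs : s = ∞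
  · have ht : t = ∞ := top_le_iff.mp (hs ▸ hsle)
    have hct : ∀ n, c n s = s := by
      intro n
      have hd : dyad n s = ∞ := by
        rw [dyad, if_neg]
        rw [hs]
        simp
      rw [hc]
      simp only [ht]
      rw [hs] at hd
      simp only [hd, hs]
      simp
    simp_rw [hct]
    exact tendsto_const_nhds
  · refine tendsto_comp_times hrc ω hs (fun n => le_min hsle (le_dyad n s)) ?_ ?_
    · obtain ⟨m, hm⟩ := exists_nat_gt s.toNNReal
      have hsm : s < (m : ℝ≥0∞) := by
        rw [← ENNReal.coe_toNNReal hs]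
        exact_mod_cast hm
      refine eventually_atTop.mpr ⟨m, fun n hn => ?_⟩
      have : s < (n : ℝ≥0∞) := hsm.trans_le (by exact_mod_cast hn)
      have hd : dyad n s < ∞ := dyad_lt_top_iff.mpr this
      exact (lt_of_le_of_lt (min_le_right _ _) hd).ne
    · refine tendsto_of_tendsto_of_tendsto_of_le_of_le tendsto_const_nhds (tendsto_dyad s)
        (fun n => le_min hsle (le_dyad n s)) (fun n => min_le_right _ _)

end Prog

section Jensen

lemma sqrt_aux (x : ℝ) : 0 < Real.sqrt (1 + x^2) :=
  Real.sqrt_pos.mpr (by nlinarith [sq_nonneg x])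

lemma sq_sqrt_aux (x : ℝ) : Real.sqrt (1 + x^2) ^ 2 = 1 + x^2 :=
  Real.sq_sqrt (by nlinarith [sq_nonneg x])

lemma jensen_key (x m : ℝ) :
    1 + m * x ≤ Real.sqrt (1 + m^2) * Real.sqrt (1 + x^2) := by
  have hsm := sqrt_aux m
  have hsx := sqrt_aux x
  have hm2 := sq_sqrt_aux m
  have hx2 := sq_sqrt_aux x
  set s := Real.sqrt (1 + m^2)
  set u := Real.sqrt (1 + x^2)
  nlinarith [sq_nonneg (x - m), mul_pos hsm hsx, sq_nonneg (s * u + (1 + m * x)),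
    sq_nonneg (s * u - (1 + m * x))]

lemma jensen_ineq (x m : ℝ) :
    m / Real.sqrt (1 + m^2) * (x - m) + Real.sqrt (1 + m^2) ≤ Real.sqrt (1 + x^2) := by
  have hsm := sqrt_aux m
  have hm2 := sq_sqrt_aux m
  have key := jensen_key x m
  set s := Real.sqrt (1 + m^2)
  set u := Real.sqrt (1 + x^2)
  rw [div_mul_eq_mul_div, div_add' _ _ _ hsm.ne', div_le_iff₀ hsm]
  nlinarith [key, hm2]

lemma jensen_eq (x m : ℝ)
    (h : Real.sqrt (1 + x^2) - Real.sqrt (1 + m^2)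
      - m / Real.sqrt (1 + m^2) * (x - m) = 0) : x = m := by
  have hsm := sqrt_aux m
  have hsx := sqrt_aux x
  have hm2 := sq_sqrt_aux m
  have hx2 := sq_sqrt_aux x
  set s := Real.sqrt (1 + m^2)
  set u := Real.sqrt (1 + x^2)
  have h' : m / s * (x - m) + s = u := by linarith
  rw [div_mul_eq_mul_div, div_add' _ _ _ hsm.ne', div_eq_iff hsm.ne'] at h'
  have hsu : s * u = 1 + m * x := by nlinarith [h', hm2]
  have hzero : (x - m)^2 = 0 := by nlinarith [hsu, hm2, hx2]
  have := pow_eq_zero_iff (n := 2) (by norm_num) |>.mp hzero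
  linarith [sub_eq_zero.mp this]

end Jensen

end StmtTen

open StmtTen in
/-- if `X^τ` is a closed supermartingale and `σ ≤ τ` are
stopping times with `X_σ ~ X_τ`, then `E[X_τ | F_σ] = X_σ` a.s. and
moreover `X_τ = X_σ` a.s. -/
theorem condexp_eq_and_eq_of_same_law
    {Ω : Type*} {mΩ : MeasurableSpace Ω} (P : Measure Ω)
    [IsProbabilityMeasure P] (F : Filtration ℝ≥0∞ mΩ) (X : ℝ≥0∞ → Ω → ℝ)
    -- `X` is adapted with càdlàg (right-continuous) paths:
    (hadp : ∀ t : ℝ≥0∞, StronglyMeasurable[F t] (X t))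
    (hrc : ∀ ω, ∀ t : ℝ≥0, ContinuousWithinAt
      (fun s : ℝ≥0 => X (s : ℝ≥0∞) ω) (Set.Ici t) t)
    (τ : Ω → ℝ≥0∞) (hτ : IsStoppingTime F (fun ω => (τ ω : WithTop ℝ≥0∞)))
    -- on `{τ = ∞}`, `X ∞` is the a.s. limit of `X t` as `t → ∞`:
    (hlim : ∀ᵐ ω ∂P, τ ω = ∞ →
      Tendsto (fun t : ℝ≥0 => X (t : ℝ≥0∞) ω) atTop (𝓝 (X ∞ ω)))
    -- (a) the stopped process `X^τ` is a supermartingale ...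
    (hint : ∀ t : ℝ≥0∞, Integrable (fun ω => X (min t (τ ω)) ω) P)
    (hadpstop : ∀ t : ℝ≥0∞, StronglyMeasurable[F t] fun ω => X (min t (τ ω)) ω)
    (hsmg : ∀ s t : ℝ≥0∞, s ≤ t →
      (P[fun ω => X (min t (τ ω)) ω | F s])
        ≤ᵐ[P] fun ω => X (min s (τ ω)) ω)
    -- ... closed, i.e. bounded below by a uniformly integrable martingale:
    (M : ℝ≥0∞ → Ω → ℝ) (hM : Martingale M F P)
    (hMui : UniformIntegrable M 1 P)
    (hMX : ∀ t, M t ≤ᵐ[P] fun ω => X (min t (τ ω)) ω)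
    -- `σ ≤ τ` is a stopping time with `X_σ ~ X_τ`:
    (σ : Ω → ℝ≥0∞) (hσ : IsStoppingTime F (fun ω => (σ ω : WithTop ℝ≥0∞))) (hστ : ∀ ω, σ ω ≤ τ ω)
    (hlaw : Measure.map (fun ω => X (σ ω) ω) P
      = Measure.map (fun ω => X (τ ω) ω) P)
    :
    (P[fun ω => X (τ ω) ω | hσ.measurableSpace])
        =ᵐ[P] (fun ω => X (σ ω) ω) ∧
    (fun ω => X (τ ω) ω) =ᵐ[P] fun ω => X (σ ω) ω := by
  classical
  set Y : ℝ≥0∞ → Ω → ℝ := fun t ω => X (min t (τ ω)) ω with hYdef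
  set G : Ω → ℝ := fun ω => X (σ ω) ω with hGdef
  set T : Ω → ℝ := fun ω => X (τ ω) ω with hTdef
  have hint' : ∀ t, Integrable (Y t) P := hint
  have hsmg' : ∀ s t : ℝ≥0∞, s ≤ t → (P[Y t | F s]) ≤ᵐ[P] Y s := hsmg
  have hadpstop' : ∀ t, StronglyMeasurable[F t] (Y t) := hadpstop
  have hTY : Y ∞ = T := by
    funext ω; simp only [hYdef, hTdef, min_eq_right (le_top : τ ω ≤ ∞)]
  have hm : hσ.measurableSpace ≤ mΩ := ms_le hσ
  haveI : SigmaFinite (P.trim hm) := inferInstance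
  have hprog : ProgMeasurable F X := progMeasurable_of_rc hadp hrc
  have hG_sm : StronglyMeasurable[hσ.measurableSpace] G :=
    (measurable_stoppedValue hprog hσ).stronglyMeasurable
  have hT_int : Integrable T P := by rw [← hTY]; exact hint' ∞
  have hGaem : AEMeasurable G P := ((hG_sm.mono hm).measurable).aemeasurable
  have hTaem : AEMeasurable T P := hT_int.aestronglyMeasurable.aemeasurable
  have hG_int : Integrable G P := by
    refine ⟨(hG_sm.mono hm).aestronglyMeasurable, ?_⟩
    have mnn : Measurable (fun x : ℝ => (‖x‖₊ : ℝ≥0∞)) :=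
      measurable_nnnorm.coe_nnreal_ennreal
    show (∫⁻ ω, ‖G ω‖₊ ∂P) < ∞
    calc (∫⁻ ω, ‖G ω‖₊ ∂P) = ∫⁻ x, ‖x‖₊ ∂(Measure.map G P) :=
          (lintegral_map' mnn.aemeasurable hGaem).symm
    _ = ∫⁻ x, ‖x‖₊ ∂(Measure.map T P) := by rw [hlaw]
    _ = ∫⁻ ω, ‖T ω‖₊ ∂P := lintegral_map' mnn.aemeasurable hTaem
    _ < ∞ := hT_int.2
  have hint_eq : ∫ ω, G ω ∂P = ∫ ω, T ω ∂P := by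
    have h1 : ∫ ω, G ω ∂P = ∫ x, x ∂(Measure.map G P) :=
      (integral_map hGaem aestronglyMeasurable_id).symm
    have h2 : ∫ ω, T ω ∂P = ∫ x, x ∂(Measure.map T P) :=
      (integral_map hTaem aestronglyMeasurable_id).symm
    rw [h1, h2, hlaw]
  -- dyadic approximations of σ
  set σn : ℕ → Ω → ℝ≥0∞ := fun n ω => dyad n (σ ω) with hσndef
  have hσn : ∀ n, IsStoppingTime F (fun ω => (σn n ω : WithTop ℝ≥0∞)) := fun n =>
    isStoppingTime_comp_monotone hσ _ (dyad_mono_s n) (le_dyad n)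
  have hσle : ∀ n ω, σ ω ≤ σn n ω := fun n ω => le_dyad n (σ ω)
  have hσanti : ∀ {m n : ℕ}, m ≤ n → ∀ ω, σn n ω ≤ σn m ω :=
    fun hmn ω => dyad_anti (σ ω) hmn
  set Gn : ℕ → Ω → ℝ := fun n => stoppedValue Y (fun ω => (σn n ω : WithTop ℝ≥0∞)) with hGndef
  have hGn_int : ∀ n, Integrable (Gn n) P := fun n =>
    integrable_stoppedValue_of_mem_finset (hσn n) hint' (fun ω => ⟨_, dyad_mem_range n (σ ω), rfl⟩)
  -- pointwise convergence
  have hconv : ∀ ω, Tendsto (fun n => Gn n ω) atTop (𝓝 (G ω)) := by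
    intro ω
    by_cases hs : σ ω = ∞
    · have hτω : τ ω = ∞ := top_le_iff.mp (hs ▸ hστ ω)
      have hconst : ∀ n, Gn n ω = G ω := by
        intro n
        have hd : σn n ω = ∞ := by
          simp only [hσndef, dyad]
          rw [if_neg]
          rw [hs]; simp
        show Y (σn n ω) ω = G ω
        simp only [hYdef, hGdef, hd, hτω, hs, min_self]
      simp_rw [hconst]; exact tendsto_const_nhds
    · have hge : ∀ n, σ ω ≤ min (σn n ω) (τ ω) := fun n => le_min (hσle n ω) (hστ ω)
      have hfin : ∀ᶠ n in atTop, min (σn n ω) (τ ω) ≠ ∞ := by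
        obtain ⟨m₀, hm₀⟩ := exists_nat_gt (σ ω).toNNReal
        have hsm : σ ω < (m₀ : ℝ≥0∞) := by
          rw [← ENNReal.coe_toNNReal hs]
          exact_mod_cast hm₀
        refine eventually_atTop.mpr ⟨m₀, fun n hn => ?_⟩
        have hlt : σ ω < (n : ℝ≥0∞) := hsm.trans_le (by exact_mod_cast hn)
        have hd : σn n ω < ∞ := dyad_lt_top_iff.mpr hlt
        exact (lt_of_le_of_lt (min_le_left _ _) hd).ne
      have hten : Tendsto (fun n => min (σn n ω) (τ ω)) atTop (𝓝 (σ ω)) := by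
        refine tendsto_of_tendsto_of_tendsto_of_le_of_le tendsto_const_nhds
          (tendsto_dyad (σ ω)) hge (fun n => min_le_left _ _)
      exact tendsto_comp_times hrc ω hs hge hfin hten
  -- expectations
  set a : ℕ → ℝ := fun n => ∫ ω, Gn n ω ∂P with hadef
  have ha_mono : Monotone a := by
    intro m n hmn
    have h := setIntegral_stoppedValue_le (P := P) hint' hsmg' (hσn n) (hσn m)
      (s := dyadRange n ∪ dyadRange m)
      (fun ω => Finset.mem_union_left _ (dyad_mem_range n (σ ω)))
      (fun ω => Finset.mem_union_right _ (dyad_mem_range m (σ ω)))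
      (fun ω => hσanti hmn ω) (A := Set.univ) MeasurableSet.univ
    rw [Measure.restrict_univ] at h
    exact h
  have hbdd : BddAbove (Set.range a) := by
    refine ⟨∫ ω, Y 0 ω ∂P, Set.forall_mem_range.mpr fun n => ?_⟩
    have h := setIntegral_stoppedValue_le (P := P) hint' hsmg'
      (isStoppingTime_const F 0) (hσn n)
      (s := insert 0 (dyadRange n))
      (fun _ => Finset.mem_insert_self 0 _)
      (fun ω => Finset.mem_insert_of_mem (dyad_mem_range n (σ ω)))
      (fun ω => zero_le) (A := Set.univ) MeasurableSet.univ
    rw [Measure.restrict_univ, stoppedValue_const] at h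
    exact h
  set A₀ : ℝ := ⨆ n, a n with hA₀def
  have ha_tend : Tendsto a atTop (𝓝 A₀) := tendsto_atTop_ciSup ha_mono hbdd
  have ha_le : ∀ n, a n ≤ A₀ := fun n => le_ciSup hbdd n
  -- two-stopping-time supermartingale inequality, conditional form
  have hDnn : ∀ {m n : ℕ}, m ≤ n → (P[Gn m | (hσn n).measurableSpace]) ≤ᵐ[P] Gn n := by
    intro m n hmn
    exact condexp_stoppedValue_le hint' hsmg' hadpstop' (hσn n) (hσn m)
      (s := dyadRange n ∪ dyadRange m)
      (fun ω => Finset.mem_union_left _ (dyad_mem_range n (σ ω)))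
      (fun ω => Finset.mem_union_right _ (dyad_mem_range m (σ ω)))
      (fun ω => hσanti hmn ω)
  -- uniform integrability
  have hUI : UnifIntegrable Gn 1 P := by
    intro ε hε
    obtain ⟨m, hm⟩ : ∃ m, A₀ - ε/2 < a m :=
      (ha_tend.eventually (eventually_gt_nhds (by linarith : A₀ - ε/2 < A₀))).exists
    set C : ℕ → Ω → ℝ := fun n => P[Gn m | (hσn n).measurableSpace] with hCdef
    have hCui : UniformIntegrable C 1 P :=
      (hGn_int m).uniformIntegrable_condExp (fun n => ms_le (hσn n))
    obtain ⟨δ₁, hδ₁pos, hδ₁⟩ := hCui.2.1 (half_pos hε)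
    obtain ⟨δ₂, hδ₂pos, hδ₂⟩ := unifIntegrable_fin (μ := P) le_rfl ENNReal.one_ne_top
      (f := fun i : Fin (m+1) => Gn i) (fun i => memLp_one_iff_integrable.mpr (hGn_int i)) hε
    refine ⟨min δ₁ δ₂, lt_min hδ₁pos hδ₂pos, fun n s hs hPs => ?_⟩
    by_cases hn : n ≤ m
    · refine hδ₂ ⟨n, Nat.lt_succ_of_le hn⟩ s hs (hPs.trans ?_)
      exact ENNReal.ofReal_le_ofReal (min_le_right _ _)
    · push_neg at hn
      have hmn : m ≤ n := hn.le
      have hD := hDnn hmn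
      set D : Ω → ℝ := fun ω => Gn n ω - C n ω with hDdef
      have hDint : Integrable D P := (hGn_int n).sub integrable_condExp
      have hDnonneg : 0 ≤ᵐ[P] D := by
        filter_upwards [hD] with ω h
        simp only [hDdef, Pi.zero_apply, sub_nonneg]
        exact h
      have hInt : ∫ ω, D ω ∂P = a n - a m := by
        rw [hDdef]
        rw [integral_sub (hGn_int n) integrable_condExp,
          integral_condExp (ms_le (hσn n))]
      have hIntle : ∫ ω, D ω ∂P ≤ ε/2 := by
        rw [hInt]; linarith [ha_le n, hm]
      have h1 : eLpNorm (s.indicator D) 1 P ≤ ENNReal.ofReal (ε/2) := by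
        calc eLpNorm (s.indicator D) 1 P ≤ eLpNorm D 1 P := eLpNorm_indicator_le _
        _ = ENNReal.ofReal (∫ ω, ‖D ω‖ ∂P) := by
            rw [eLpNorm_one_eq_lintegral_enorm,
              ← ofReal_integral_norm_eq_lintegral_enorm hDint]
        _ ≤ ENNReal.ofReal (ε/2) := by
            refine ENNReal.ofReal_le_ofReal ?_
            have : ∫ ω, ‖D ω‖ ∂P = ∫ ω, D ω ∂P := by
              refine integral_congr_ae ?_
              filter_upwards [hDnonneg] with ω h
              exact Real.norm_of_nonneg h
            rw [this]; exact hIntle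
      have h2 : eLpNorm (s.indicator (C n)) 1 P ≤ ENNReal.ofReal (ε/2) :=
        hδ₁ n s hs (hPs.trans (ENNReal.ofReal_le_ofReal (min_le_left _ _)))
      have hsplit : s.indicator (Gn n) = fun ω => s.indicator D ω + s.indicator (C n) ω := by
        funext ω
        by_cases hω : ω ∈ s
        · simp only [Set.indicator_of_mem hω, hDdef]; ring
        · simp only [Set.indicator_of_notMem hω]; ring
      calc eLpNorm (s.indicator (Gn n)) 1 P
          = eLpNorm (fun ω => s.indicator D ω + s.indicator (C n) ω) 1 P := by rw [hsplit]
      _ ≤ eLpNorm (s.indicator D) 1 P + eLpNorm (s.indicator (C n)) 1 P :=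
          eLpNorm_add_le (hDint.aestronglyMeasurable.indicator hs)
            (integrable_condExp.aestronglyMeasurable.indicator hs) le_rfl
      _ ≤ ENNReal.ofReal (ε/2) + ENNReal.ofReal (ε/2) := add_le_add h1 h2
      _ = ENNReal.ofReal ε := by
          rw [← ENNReal.ofReal_add (by linarith) (by linarith)]
          norm_num
  -- L¹ convergence (Vitali)
  have hL1 : Tendsto (fun n => eLpNorm (Gn n - G) 1 P) atTop (𝓝 0) :=
    tendsto_Lp_finite_of_tendsto_ae le_rfl ENNReal.one_ne_top
      (fun n => (hGn_int n).aestronglyMeasurable) (memLp_one_iff_integrable.mpr hG_int) hUI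
      (ae_of_all _ hconv)
  have hset_tend : ∀ A : Set Ω, MeasurableSet A →
      Tendsto (fun n => ∫ ω in A, Gn n ω ∂P) atTop (𝓝 (∫ ω in A, G ω ∂P)) := by
    intro A hA
    rw [tendsto_iff_dist_tendsto_zero]
    have hb : Tendsto (fun n => (eLpNorm (Gn n - G) 1 P).toReal) atTop (𝓝 0) := by
      have h0 := (ENNReal.tendsto_toReal (by simp : (0:ℝ≥0∞) ≠ ∞)).comp hL1
      exact h0
    refine squeeze_zero (fun n => dist_nonneg) (fun n => ?_) hb
    rw [Real.dist_eq, ← integral_sub ((hGn_int n).integrableOn) (hG_int.integrableOn)]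
    have hsub_int : Integrable (Gn n - G) P := (hGn_int n).sub hG_int
    calc |∫ ω in A, (Gn n ω - G ω) ∂P| = ‖∫ ω in A, (Gn n - G) ω ∂P‖ := by
          rw [Real.norm_eq_abs]
          simp only [Pi.sub_apply]
    _ ≤ ∫ ω in A, ‖(Gn n - G) ω‖ ∂P := norm_integral_le_integral_norm _
    _ ≤ ∫ ω, ‖(Gn n - G) ω‖ ∂P :=
        setIntegral_le_integral hsub_int.norm (ae_of_all _ fun ω => norm_nonneg _)
    _ = (eLpNorm (Gn n - G) 1 P).toReal := by
        rw [eLpNorm_one_eq_lintegral_enorm,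
          ← ofReal_integral_norm_eq_lintegral_enorm hsub_int,
          ENNReal.toReal_ofReal (integral_nonneg fun ω => norm_nonneg _)]
  -- set-integral comparison and conditional expectation identification
  have hsetle : ∀ A : Set Ω, MeasurableSet[hσ.measurableSpace] A →
      ∫ ω in A, T ω ∂P ≤ ∫ ω in A, G ω ∂P := by
    intro A hA
    have hineq : ∀ n, ∫ ω in A, T ω ∂P ≤ ∫ ω in A, Gn n ω ∂P := by
      intro n
      have hAn : MeasurableSet[(hσn n).measurableSpace] A :=
        hσ.measurableSpace_mono (hσn n) (fun ω => WithTop.coe_le_coe.mpr (hσle n ω)) _ hA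
      have h := setIntegral_stoppedValue_le (P := P) hint' hsmg' (hσn n)
        (isStoppingTime_const F ∞)
        (s := insert ∞ (dyadRange n))
        (fun ω => Finset.mem_insert_of_mem (dyad_mem_range n (σ ω)))
        (fun _ => Finset.mem_insert_self ∞ _)
        (fun ω => le_top) hAn
      rw [stoppedValue_const, hTY] at h
      exact h
    exact ge_of_tendsto (hset_tend A (hm _ hA)) (Eventually.of_forall hineq)
  have hseteq : ∀ A : Set Ω, MeasurableSet[hσ.measurableSpace] A →
      ∫ ω in A, G ω ∂P = ∫ ω in A, T ω ∂P := by
    intro A hA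
    have h1 := hsetle A hA
    have h2 := hsetle Aᶜ hA.compl
    have h3 : ∫ ω in A, T ω ∂P + ∫ ω in Aᶜ, T ω ∂P = ∫ ω, T ω ∂P :=
      integral_add_compl (hm _ hA) hT_int
    have h4 : ∫ ω in A, G ω ∂P + ∫ ω in Aᶜ, G ω ∂P = ∫ ω, G ω ∂P :=
      integral_add_compl (hm _ hA) hG_int
    linarith [hint_eq]
  have hcond : (P[T | hσ.measurableSpace]) =ᵐ[P] G :=
    (ae_eq_condExp_of_forall_setIntegral_eq hm hT_int
      (fun s _ _ => hG_int.integrableOn) (fun s hs _ => hseteq s hs)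
      hG_sm.aestronglyMeasurable).symm
  -- the strict convexity argument
  have hTG : T =ᵐ[P] G := by
    set φ : ℝ → ℝ := fun x => Real.sqrt (1 + x^2) with hφdef
    set ψ : ℝ → ℝ := fun x => x / Real.sqrt (1 + x^2) with hψdef
    have hpoly : Continuous fun x : ℝ => 1 + x^2 := continuous_const.add (continuous_pow 2)
    have hφcont : Continuous φ := Real.continuous_sqrt.comp hpoly
    have hψcont : Continuous ψ :=
      continuous_id.div (Real.continuous_sqrt.comp hpoly) fun x => (sqrt_aux x).ne'
    have hφbound : ∀ x : ℝ, ‖φ x‖ ≤ ‖1 + |x|‖ := by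
      intro x
      have h1 : 0 ≤ φ x := Real.sqrt_nonneg _
      have h2 : φ x ≤ 1 + |x| := by
        have h3 : (1 + x^2) ≤ (1 + |x|)^2 := by nlinarith [abs_nonneg x, sq_abs x]
        calc φ x ≤ Real.sqrt ((1 + |x|)^2) := Real.sqrt_le_sqrt h3
        _ = 1 + |x| := Real.sqrt_sq (by positivity)
      rw [Real.norm_eq_abs, Real.norm_eq_abs, abs_of_nonneg h1,
        abs_of_nonneg (by positivity)]
      exact h2
    have hψbound : ∀ x : ℝ, ‖ψ x‖ ≤ 1 := by
      intro x
      rw [hψdef]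
      simp only
      rw [Real.norm_eq_abs, abs_div, abs_of_nonneg (Real.sqrt_nonneg _),
        div_le_one (sqrt_aux x)]
      calc |x| = Real.sqrt (x^2) := (Real.sqrt_sq_eq_abs x).symm
      _ ≤ Real.sqrt (1 + x^2) := Real.sqrt_le_sqrt (by linarith [sq_nonneg x])
    have hφT_int : Integrable (fun ω => φ (T ω)) P := by
      refine Integrable.mono ((integrable_const (1:ℝ)).add hT_int.abs)
        (hφcont.comp_aestronglyMeasurable hT_int.aestronglyMeasurable) ?_
      exact ae_of_all _ fun ω => by simpa using hφbound (T ω)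
    have hφG_int : Integrable (fun ω => φ (G ω)) P := by
      refine Integrable.mono ((integrable_const (1:ℝ)).add hG_int.abs)
        (hφcont.comp_aestronglyMeasurable hG_int.aestronglyMeasurable) ?_
      exact ae_of_all _ fun ω => by simpa using hφbound (G ω)
    have hφeq : ∫ ω, φ (G ω) ∂P = ∫ ω, φ (T ω) ∂P := by
      have h1 : ∫ ω, φ (G ω) ∂P = ∫ x, φ x ∂(Measure.map G P) :=
        (integral_map hGaem hφcont.aestronglyMeasurable).symm
      have h2 : ∫ ω, φ (T ω) ∂P = ∫ x, φ x ∂(Measure.map T P) :=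
        (integral_map hTaem hφcont.aestronglyMeasurable).symm
      rw [h1, h2, hlaw]
    set g : Ω → ℝ := fun ω => ψ (G ω) with hgdef
    have hg_sm : StronglyMeasurable[hσ.measurableSpace] g :=
      hψcont.comp_stronglyMeasurable hG_sm
    have hg_meas : AEStronglyMeasurable g P := (hg_sm.mono hm).aestronglyMeasurable
    have hgT_int : Integrable (fun ω => g ω * T ω) P :=
      hT_int.bdd_mul hg_meas (ae_of_all _ fun ω => hψbound (G ω))
    have hgG_int : Integrable (fun ω => g ω * G ω) P :=
      hG_int.bdd_mul hg_meas (ae_of_all _ fun ω => hψbound (G ω))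
    have hmul : P[g * T | hσ.measurableSpace] =ᵐ[P] g * P[T | hσ.measurableSpace] :=
      condExp_stronglyMeasurable_mul_of_bound hm hg_sm hT_int 1
        (ae_of_all _ fun ω => hψbound (G ω))
    have hprod_eq : ∫ ω, g ω * T ω ∂P = ∫ ω, g ω * G ω ∂P := by
      have h2 : ∫ ω, (g * T) ω ∂P = ∫ ω, (P[g * T | hσ.measurableSpace]) ω ∂P :=
        (integral_condExp hm).symm
      have h3 : ∫ ω, (P[g * T | hσ.measurableSpace]) ω ∂P
          = ∫ ω, (g * P[T | hσ.measurableSpace]) ω ∂P := integral_congr_ae hmul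
      have h4 : (g * P[T | hσ.measurableSpace]) =ᵐ[P] fun ω => g ω * G ω := by
        filter_upwards [hcond] with ω h
        simp only [Pi.mul_apply, h]
      calc ∫ ω, g ω * T ω ∂P = ∫ ω, (g * T) ω ∂P := rfl
      _ = ∫ ω, (P[g * T | hσ.measurableSpace]) ω ∂P := h2
      _ = ∫ ω, (g * P[T | hσ.measurableSpace]) ω ∂P := h3
      _ = ∫ ω, g ω * G ω ∂P := integral_congr_ae h4
    set Z : Ω → ℝ := fun ω => φ (T ω) - φ (G ω) - g ω * (T ω - G ω) with hZdef
    have hZnonneg : ∀ ω, 0 ≤ Z ω := by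
      intro ω
      have hj := jensen_ineq (T ω) (G ω)
      simp only [hZdef, hφdef, hψdef, hgdef]
      nlinarith [hj]
    have hZint : Integrable Z P := by
      have hZrw : Z = fun ω => (φ (T ω) - φ (G ω)) - (g ω * T ω - g ω * G ω) := by
        funext ω; simp only [hZdef]; ring
      rw [hZrw]
      exact (hφT_int.sub hφG_int).sub (hgT_int.sub hgG_int)
    have hZzero : ∫ ω, Z ω ∂P = 0 := by
      have hrw : ∫ ω, Z ω ∂P
          = ∫ ω, ((φ (T ω) - φ (G ω)) - (g ω * T ω - g ω * G ω)) ∂P := by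
        refine integral_congr_ae (ae_of_all _ fun ω => ?_)
        simp only [hZdef]; ring
      have e1 : ∫ ω, (φ (T ω) - φ (G ω) - (g ω * T ω - g ω * G ω)) ∂P
          = (∫ ω, (φ (T ω) - φ (G ω)) ∂P) - ∫ ω, (g ω * T ω - g ω * G ω) ∂P :=
        integral_sub (hφT_int.sub hφG_int) (hgT_int.sub hgG_int)
      have e2 : ∫ ω, (φ (T ω) - φ (G ω)) ∂P = (∫ ω, φ (T ω) ∂P) - ∫ ω, φ (G ω) ∂P :=
        integral_sub hφT_int hφG_int
      have e3 : ∫ ω, (g ω * T ω - g ω * G ω) ∂P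
          = (∫ ω, g ω * T ω ∂P) - ∫ ω, g ω * G ω ∂P :=
        integral_sub hgT_int hgG_int
      rw [hrw, e1, e2, e3, hφeq, hprod_eq]
      ring
    have hZae : Z =ᵐ[P] 0 :=
      (integral_eq_zero_iff_of_nonneg hZnonneg hZint).mp hZzero
    filter_upwards [hZae] with ω h0
    refine jensen_eq (T ω) (G ω) ?_
    have h1 : Z ω = 0 := h0
    simp only [hZdef, hφdef, hψdef, hgdef] at h1
    exact h1
  exact ⟨hcond, hTG⟩
end

section
/- Let $\xi$ be a nonnegative random variable with $\mathsf E\xi \le 1$ and distribution function $F$, quantile function $F^{-1}$, $h(r) = \int_0^r F^{-1}(s)\,ds$, and $g(r) = r - h(r)$, and let $R$ be uniform on $[0,1]$ with $\eta = g(R)$ and $\xi = F^{-1}(R)$. Then for any interval $(a,b) \subseteq [g(1), \max_{[0,1]} g]$, one has $\mathsf E[\xi\,1_{\{\eta \in (a,b)\}}] = \mathsf P(\eta \in (a,b))$; consequently $\mathsf E[\xi \mid \eta] = 1$ a.s. on the event $\{\eta \ge g(1)\}$. -/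
open MeasureTheory ProbabilityTheory Set
open scoped ENNReal NNReal

/-- Quasiconcavity of `g` on `[0,1]` when `g q - g p = (q-p) - ∫_(p,q] f` for a
nonnegative `f` monotone on `Iio 1`. -/
lemma aux_quasi (f g : ℝ → ℝ)
    (hfi : Integrable f (volume : Measure ℝ))
    (hf0 : ∀ r, 0 ≤ f r)
    (hfm : ∀ ⦃p q : ℝ⦄, p ≤ q → q < 1 → f p ≤ f q)
    (hgd : ∀ p q : ℝ, p ≤ q → g q - g p = (q - p) - ∫ s in Ioc p q, f s) :
    ∀ x y z : ℝ, 0 ≤ x → x < y → y < z → z ≤ 1 → min (g x) (g z) ≤ g y := by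
  intro x y z _ hxy hyz hz1 
  by_contra hlt
  push_neg at hlt
  rw [lt_min_iff] at hlt
  obtain ⟨h1, h2⟩ := hlt
  have hy1 : y < 1 := lt_of_lt_of_le hyz hz1
  have e1 := hgd x y hxy.le
  have e2 := hgd y z hyz.le
  have hIb : ∫ s in Ioc x y, f s ≤ (y - x) * f y := by
    have : ∫ s in Ioc x y, f s ≤ ∫ _s in Ioc x y, f y := by
      refine setIntegral_mono_on hfi.integrableOn ?_ measurableSet_Ioc ?_
      · exact integrableOn_const measure_Ioc_lt_top.ne
      · exact fun s hs => hfm hs.2 hy1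
    simpa [Real.volume_Ioc, ENNReal.toReal_ofReal (sub_nonneg.2 hxy.le), max_eq_left (sub_nonneg.2 hxy.le)] using this
  have hfy1 : 1 < f y := by nlinarith
  have hI2 : (z - y) * f y ≤ ∫ s in Ioc y z, f s := by
    have hae : (fun _s : ℝ => f y) ≤ᵐ[volume.restrict (Ioc y z)] f := by
      have h1' : ∀ᵐ s ∂volume.restrict (Ioc y z), s ≠ 1 := by
        refine ae_restrict_of_ae ?_
        have : (volume : Measure ℝ) {(1 : ℝ)} = 0 := Real.volume_singleton
        rw [ae_iff]
        simpa using this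
      have h2' : ∀ᵐ s ∂volume.restrict (Ioc y z), s ∈ Ioc y z :=
        ae_restrict_mem measurableSet_Ioc
      filter_upwards [h1', h2'] with s hs1 hs2
      exact hfm hs2.1.le (lt_of_le_of_ne (le_trans hs2.2 hz1) hs1)
    have : ∫ _s in Ioc y z, f y ≤ ∫ s in Ioc y z, f s :=
      setIntegral_mono_ae_restrict (integrableOn_const measure_Ioc_lt_top.ne)
        hfi.integrableOn hae
    simpa [Real.volume_Ioc, ENNReal.toReal_ofReal (sub_nonneg.2 hyz.le), max_eq_left (sub_nonneg.2 hyz.le)] using this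
  nlinarith

/-- Structure of strict superlevel sets of a continuous quasiconcave function on `[0,1]`. -/
lemma aux_lemA (g : ℝ → ℝ) (hgc : Continuous g)
    (hq : ∀ x y z : ℝ, 0 ≤ x → x < y → y < z → z ≤ 1 → min (g x) (g z) ≤ g y)
    (c : ℝ) (hc0 : g 0 ≤ c) (hc1 : g 1 ≤ c)
    (hne : {s : ℝ | s ∈ Icc (0:ℝ) 1 ∧ c < g s}.Nonempty) :
    0 ≤ sInf {s : ℝ | s ∈ Icc (0:ℝ) 1 ∧ c < g s} ∧
    sSup {s : ℝ | s ∈ Icc (0:ℝ) 1 ∧ c < g s} ≤ 1 ∧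
    g (sInf {s : ℝ | s ∈ Icc (0:ℝ) 1 ∧ c < g s}) = c ∧
    g (sSup {s : ℝ | s ∈ Icc (0:ℝ) 1 ∧ c < g s}) = c ∧
    {s : ℝ | s ∈ Icc (0:ℝ) 1 ∧ c < g s} =
      Ioo (sInf {s : ℝ | s ∈ Icc (0:ℝ) 1 ∧ c < g s})
        (sSup {s : ℝ | s ∈ Icc (0:ℝ) 1 ∧ c < g s}) := by
  set S := {s : ℝ | s ∈ Icc (0:ℝ) 1 ∧ c < g s} with hSdef
  have hbddb : BddBelow S := ⟨0, fun s hs => hs.1.1⟩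
  have hbdda : BddAbove S := ⟨1, fun s hs => hs.1.2⟩
  set p := sInf S with hp
  set q := sSup S with hqdef
  have hp0 : 0 ≤ p := le_csInf hne fun s hs => hs.1.1
  have hq1 : q ≤ 1 := csSup_le hne fun s hs => hs.1.2
  have hp1 : p ≤ 1 := by
    obtain ⟨s, hs⟩ := hne
    exact le_trans (csInf_le hbddb hs) hs.1.2
  have hq0 : 0 ≤ q := by
    obtain ⟨s, hs⟩ := hne
    exact le_trans hs.1.1 (le_csSup hbdda hs)
  -- g p = c
  have hgp_ge : c ≤ g p := by
    by_contra hltp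
    push_neg at hltp
    obtain ⟨δ, hδ, hball⟩ := Metric.isOpen_iff.1 (isOpen_lt hgc continuous_const)
      p (by simpa using hltp)
    obtain ⟨s, hsS, hsp⟩ := exists_lt_of_csInf_lt hne (lt_add_of_pos_right p hδ)
    have hps : p ≤ s := csInf_le hbddb hsS
    have : g s < c := hball (by
      rw [Metric.mem_ball, Real.dist_eq, abs_of_nonneg (sub_nonneg.2 hps)]
      linarith)
    exact absurd hsS.2 (not_lt.2 this.le)
  have hgp_le : g p ≤ c := by
    by_contra hltp
    push_neg at hltp
    have hpne : p ≠ 0 := fun h => by rw [h] at hltp; linarith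
    have hppos : 0 < p := lt_of_le_of_ne hp0 (Ne.symm hpne)
    obtain ⟨δ, hδ, hball⟩ := Metric.isOpen_iff.1 (isOpen_lt continuous_const hgc)
      p (by simpa using hltp)
    have hmin : 0 < min δ p := lt_min hδ hppos
    have hd1 : min δ p ≤ δ := min_le_left _ _
    have hd2 : min δ p ≤ p := min_le_right _ _
    have hsp : p - min δ p / 2 < p := by linarith
    have hs0 : 0 < p - min δ p / 2 := by linarith
    have hgs : c < g (p - min δ p / 2) := hball (by
      rw [Metric.mem_ball, Real.dist_eq, abs_of_nonpos (by linarith)]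
      linarith)
    have : p - min δ p / 2 ∈ S := ⟨⟨hs0.le, le_trans hsp.le hp1⟩, hgs⟩
    exact absurd (csInf_le hbddb this) (not_le.2 hsp)
  -- g q = c
  have hgq_ge : c ≤ g q := by
    by_contra hltq
    push_neg at hltq
    obtain ⟨δ, hδ, hball⟩ := Metric.isOpen_iff.1 (isOpen_lt hgc continuous_const)
      q (by simpa using hltq)
    obtain ⟨s, hsS, hsq⟩ := exists_lt_of_lt_csSup hne (sub_lt_self q hδ)
    have hqs : s ≤ q := le_csSup hbdda hsS
    have : g s < c := hball (by
      rw [Metric.mem_ball, Real.dist_eq, abs_of_nonpos (sub_nonpos.2 hqs)]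
      linarith)
    exact absurd hsS.2 (not_lt.2 this.le)
  have hgq_le : g q ≤ c := by
    by_contra hltq
    push_neg at hltq
    have hqne : q ≠ 1 := fun h => by rw [h] at hltq; linarith
    have hqlt1 : q < 1 := lt_of_le_of_ne hq1 hqne
    obtain ⟨δ, hδ, hball⟩ := Metric.isOpen_iff.1 (isOpen_lt continuous_const hgc)
      q (by simpa using hltq)
    have hmin : 0 < min δ (1 - q) := lt_min hδ (by linarith)
    have hd1 : min δ (1 - q) ≤ δ := min_le_left _ _
    have hd2 : min δ (1 - q) ≤ 1 - q := min_le_right _ _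
    have hsq : q < q + min δ (1 - q) / 2 := by linarith
    have hs1 : q + min δ (1 - q) / 2 ≤ 1 := by linarith
    have hgs : c < g (q + min δ (1 - q) / 2) := hball (by
      rw [Metric.mem_ball, Real.dist_eq, abs_of_nonneg (by linarith)]
      linarith)
    have : q + min δ (1 - q) / 2 ∈ S := ⟨⟨le_trans hq0 hsq.le, hs1⟩, hgs⟩
    exact absurd (le_csSup hbdda this) (not_le.2 hsq)
  refine ⟨hp0, hq1, le_antisymm hgp_le hgp_ge, le_antisymm hgq_le hgq_ge, ?_⟩
  ext s
  constructor
  · intro hs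
    have h1' : p ≤ s := csInf_le hbddb hs
    have h2' : s ≤ q := le_csSup hbdda hs
    have hne1 : s ≠ p := by
      intro h; rw [h] at hs; exact absurd hs.2 (not_lt.2 hgp_le)
    have hne2 : s ≠ q := by
      intro h; rw [h] at hs; exact absurd hs.2 (not_lt.2 hgq_le)
    exact ⟨lt_of_le_of_ne h1' (Ne.symm hne1), lt_of_le_of_ne h2' hne2⟩
  · rintro ⟨hps, hsq⟩
    obtain ⟨u, huS, hus⟩ := exists_lt_of_csInf_lt hne hps
    obtain ⟨w, hwS, hsw⟩ := exists_lt_of_lt_csSup hne hsq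
    have hmin := hq u s w huS.1.1 hus hsw hwS.1.2
    have : c < g s := lt_of_lt_of_le (lt_min huS.2 hwS.2) hmin
    exact ⟨⟨le_trans huS.1.1 hus.le, le_trans hsw.le hwS.1.2⟩, this⟩

/-- Structure of the closed superlevel set `{g ≥ g 1}`. -/
lemma aux_lemK (g : ℝ → ℝ) (hgc : Continuous g)
    (hq : ∀ x y z : ℝ, 0 ≤ x → x < y → y < z → z ≤ 1 → min (g x) (g z) ≤ g y)
    (hg0 : g 0 = 0) (hg1 : 0 ≤ g 1) :
    0 ≤ sInf {s : ℝ | s ∈ Icc (0:ℝ) 1 ∧ g 1 ≤ g s} ∧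
    sInf {s : ℝ | s ∈ Icc (0:ℝ) 1 ∧ g 1 ≤ g s} ≤ 1 ∧
    g (sInf {s : ℝ | s ∈ Icc (0:ℝ) 1 ∧ g 1 ≤ g s}) = g 1 ∧
    {s : ℝ | s ∈ Icc (0:ℝ) 1 ∧ g 1 ≤ g s} =
      Icc (sInf {s : ℝ | s ∈ Icc (0:ℝ) 1 ∧ g 1 ≤ g s}) 1 := by
  set K := {s : ℝ | s ∈ Icc (0:ℝ) 1 ∧ g 1 ≤ g s} with hKdef
  have h1K : (1:ℝ) ∈ K := ⟨⟨zero_le_one, le_refl 1⟩, le_refl _⟩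
  have hne : K.Nonempty := ⟨1, h1K⟩
  have hbddb : BddBelow K := ⟨0, fun s hs => hs.1.1⟩
  set u := sInf K with hu
  have hu0 : 0 ≤ u := le_csInf hne fun s hs => hs.1.1
  have hu1 : u ≤ 1 := csInf_le hbddb h1K
  have hgu_ge : g 1 ≤ g u := by
    by_contra hltu
    push_neg at hltu
    obtain ⟨δ, hδ, hball⟩ := Metric.isOpen_iff.1 (isOpen_lt hgc continuous_const)
      u (by simpa using hltu)
    obtain ⟨s, hsK, hsu⟩ := exists_lt_of_csInf_lt hne (lt_add_of_pos_right u hδ)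
    have hus : u ≤ s := csInf_le hbddb hsK
    have : g s < g 1 := hball (by
      rw [Metric.mem_ball, Real.dist_eq, abs_of_nonneg (sub_nonneg.2 hus)]
      linarith)
    exact absurd hsK.2 (not_le.2 this)
  have hgu_le : g u ≤ g 1 := by
    by_contra hltu
    push_neg at hltu
    have hune : u ≠ 0 := fun h => by rw [h, hg0] at hltu; linarith
    have hupos : 0 < u := lt_of_le_of_ne hu0 (Ne.symm hune)
    obtain ⟨δ, hδ, hball⟩ := Metric.isOpen_iff.1 (isOpen_lt continuous_const hgc)
      u (by simpa using hltu)
    have hmin : 0 < min δ u := lt_min hδ hupos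
    have hd1 : min δ u ≤ δ := min_le_left _ _
    have hd2 : min δ u ≤ u := min_le_right _ _
    have hsu : u - min δ u / 2 < u := by linarith
    have hs0 : 0 < u - min δ u / 2 := by linarith
    have hgs : g 1 < g (u - min δ u / 2) := hball (by
      rw [Metric.mem_ball, Real.dist_eq, abs_of_nonpos (by linarith)]
      linarith)
    have : u - min δ u / 2 ∈ K := ⟨⟨hs0.le, le_trans hsu.le hu1⟩, hgs.le⟩
    exact absurd (csInf_le hbddb this) (not_le.2 hsu)
  have hgu : g u = g 1 := le_antisymm hgu_le hgu_ge
  refine ⟨hu0, hu1, hgu, ?_⟩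
  ext s
  constructor
  · intro hs
    exact ⟨csInf_le hbddb hs, hs.1.2⟩
  · rintro ⟨hus, hs1⟩
    rcases eq_or_lt_of_le hs1 with h | hs1'
    · rw [h]; exact h1K
    · rcases eq_or_lt_of_le hus with h | hus'
      · rw [← h]; exact ⟨⟨hu0, hu1⟩, hgu_ge⟩
      · obtain ⟨k, hkK, hks⟩ := exists_lt_of_csInf_lt hne hus'
        have hmin := hq k s 1 hkK.1.1 hks hs1' le_rfl
        have : g 1 ≤ g s := le_trans (le_min hkK.2 le_rfl) hmin
        exact ⟨⟨le_trans hkK.1.1 hks.le, hs1⟩, this⟩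

set_option maxHeartbeats 1000000

/-- the key identity (2.1) of the paper: with `F` the cdf of a
nonnegative `ξ₀` with `E ξ₀ ≤ 1`, `F⁻¹` its quantile function,
`h (r) = ∫_0^r F⁻¹`, `g (r) = r - h (r)`, `R` uniform on `[0,1]`,
`η = g (R)` and `ξ = F⁻¹ (R)`:
for any interval `(a,b) ⊆ [g 1, max_{[0,1]} g]` one has
`E[ξ 1_{η ∈ (a,b)}] = P (η ∈ (a,b))`; consequently `E[ξ | η] = 1` a.s. on
`{η ≥ g 1}`. -/
theorem key_embedding_identity {Ω : Type*} {mΩ : MeasurableSpace Ω}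
    (P : Measure Ω) [IsProbabilityMeasure P]
    (ξ₀ : Ω → ℝ) (hξ₀m : Measurable ξ₀) (hξ₀0 : ∀ ω, 0 ≤ ξ₀ ω)
    (hξ₀int : Integrable ξ₀ P) (hξ₀1 : ∫ ω, ξ₀ ω ∂P ≤ 1)
    (F : ℝ → ℝ) (hF : F = fun x => (P {ω | ξ₀ ω ≤ x}).toReal)
    (Finv : ℝ → ℝ) (hFinv : Finv = fun r => sInf {x : ℝ | 0 ≤ x ∧ F x > r})
    (h : ℝ → ℝ) (hh : h = fun r => ∫ s in Ioc (0 : ℝ) r, Finv s)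
    (g : ℝ → ℝ) (hg : g = fun r => r - h r)
    (R : Ω → ℝ) (hRm : Measurable R)
    (hR : Measure.map R P = (volume : Measure ℝ).restrict (Icc 0 1)) :
    (∀ a b : ℝ, g 1 ≤ a → b ≤ sSup (g '' Icc 0 1) →
      ∫ ω in {ω | g (R ω) ∈ Ioo a b}, Finv (R ω) ∂P
        = (P {ω | g (R ω) ∈ Ioo a b}).toReal) ∧
    (∀ᵐ ω ∂P, g 1 ≤ g (R ω) →
      (P[fun ω => Finv (R ω) |
          MeasurableSpace.comap (fun ω => g (R ω)) inferInstance]) ω = 1) := by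
  -- ## Stage 1: properties of F
  have hFmono : Monotone F := by
    rw [hF]
    intro x y hxy
    exact ENNReal.toReal_mono (measure_ne_top _ _)
      (measure_mono fun ω hω => le_trans hω hxy)
  have hF0 : ∀ x, 0 ≤ F x := by rw [hF]; intro x; exact ENNReal.toReal_nonneg
  have hF1 : ∀ x, F x ≤ 1 := by
    rw [hF]; intro x
    exact ENNReal.toReal_le_of_le_ofReal zero_le_one (by simpa using prob_le_one)
  have hFtop : ∀ r : ℝ, r < 1 → ∃ x : ℝ, 0 ≤ x ∧ r < F x := by
    intro r hr
    have hmono : Monotone (fun n : ℕ => {ω | ξ₀ ω ≤ (n : ℝ)}) := by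
      intro m n hmn ω hω
      simp only [mem_setOf_eq] at hω ⊢
      exact le_trans hω (Nat.cast_le.2 hmn)
    have hunion : (⋃ n : ℕ, {ω | ξ₀ ω ≤ (n : ℝ)}) = univ := by
      ext ω
      simp only [mem_iUnion, mem_univ, iff_true, mem_setOf_eq]
      obtain ⟨n, hn⟩ := exists_nat_ge (ξ₀ ω)
      exact ⟨n, hn⟩
    have htend : Filter.Tendsto (fun n : ℕ => P {ω | ξ₀ ω ≤ (n : ℝ)}) Filter.atTop
        (nhds (P univ)) := by
      have := tendsto_measure_iUnion_atTop (μ := P) hmono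
      rwa [hunion] at this
    rw [measure_univ] at htend
    have htendR : Filter.Tendsto (fun n : ℕ => F (n : ℝ)) Filter.atTop (nhds 1) := by
      rw [hF]
      have : Filter.Tendsto (fun n : ℕ => (P {ω | ξ₀ ω ≤ (n : ℝ)}).toReal) Filter.atTop
          (nhds ((1 : ℝ≥0∞)).toReal) :=
        (ENNReal.tendsto_toReal ENNReal.one_ne_top).comp htend
      simpa using this
    have hev : ∀ᶠ n : ℕ in Filter.atTop, r < F (n : ℝ) :=
      htendR.eventually (eventually_gt_nhds hr)
    obtain ⟨n, hn⟩ := hev.exists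
    exact ⟨n, Nat.cast_nonneg n, hn⟩
  have hFrc : ∀ t r : ℝ, (∀ ε : ℝ, 0 < ε → r ≤ F (t + ε)) → r ≤ F t := by
    intro t r hyp
    have hanti : Antitone (fun n : ℕ => {ω | ξ₀ ω ≤ t + 1 / (n + 1)}) := by
      intro m n hmn ω hω
      simp only [mem_setOf_eq] at hω ⊢
      refine le_trans hω ?_
      have h1 : (1 : ℝ) / (n + 1) ≤ 1 / (m + 1) := by
        apply one_div_le_one_div_of_le
        · positivity
        · exact_mod_cast by exact_mod_cast add_le_add_left (Nat.cast_le.2 hmn) 1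
      linarith
    have hinter : (⋂ n : ℕ, {ω | ξ₀ ω ≤ t + 1 / (n + 1)}) = {ω | ξ₀ ω ≤ t} := by
      ext ω
      simp only [mem_iInter, mem_setOf_eq]
      constructor
      · intro hall
        by_contra hlt
        push_neg at hlt
        obtain ⟨n, hn⟩ := exists_nat_one_div_lt (sub_pos.2 hlt)
        have := hall n
        have : (1:ℝ)/(n+1) < ξ₀ ω - t := by exact_mod_cast hn
        linarith [hall n]
      · intro h0 n
        have : (0:ℝ) < 1 / (n + 1) := by positivity
        linarith
    have htend : Filter.Tendsto (fun n : ℕ => P {ω | ξ₀ ω ≤ t + 1 / (n + 1)})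
        Filter.atTop (nhds (P {ω | ξ₀ ω ≤ t})) := by
      have := tendsto_measure_iInter_atTop (μ := P)
        (s := fun n : ℕ => {ω | ξ₀ ω ≤ t + 1 / (n + 1)})
        (fun n => (hξ₀m measurableSet_Iic).nullMeasurableSet) hanti
        ⟨0, measure_ne_top _ _⟩
      rwa [hinter] at this
    have htendR : Filter.Tendsto (fun n : ℕ => F (t + 1 / (n + 1))) Filter.atTop
        (nhds (F t)) := by
      rw [hF]
      exact (ENNReal.tendsto_toReal (measure_ne_top _ _)).comp htend
    refine ge_of_tendsto htendR (Filter.Eventually.of_forall fun n => ?_)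
    exact hyp (1 / ((n : ℝ) + 1)) (by positivity)
  -- ## Stage 2: properties of Finv
  have hFinv0 : ∀ r, 0 ≤ Finv r := by
    simp only [hFinv]; intro r; exact Real.sInf_nonneg fun x hx => hx.1
  have hFinv_ge1 : ∀ r : ℝ, 1 ≤ r → Finv r = 0 := by
    intro r hr
    simp only [hFinv]
    have : {x : ℝ | 0 ≤ x ∧ F x > r} = ∅ := by
      ext x
      simp only [mem_setOf_eq, mem_empty_iff_false, iff_false, not_and, not_lt]
      exact fun _ => le_trans (hF1 x) hr
    rw [this, Real.sInf_empty]
  have hSne : ∀ r : ℝ, r < 1 → {x : ℝ | 0 ≤ x ∧ F x > r}.Nonempty := by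
    intro r hr
    obtain ⟨x, hx0, hx⟩ := hFtop r hr
    exact ⟨x, hx0, hx⟩
  have hFinv_mono : ∀ ⦃p q : ℝ⦄, p ≤ q → q < 1 → Finv p ≤ Finv q := by
    intro p q hpq hq1
    simp only [hFinv]
    exact csInf_le_csInf ⟨0, fun x hx => hx.1⟩ (hSne q hq1)
      (fun x hx => ⟨hx.1, lt_of_le_of_lt hpq hx.2⟩)
  have hFinv_neg : ∀ r : ℝ, r < 0 → Finv r = 0 := by
    intro r hr
    simp only [hFinv]
    have : {x : ℝ | 0 ≤ x ∧ F x > r} = Ici 0 := by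
      ext x
      simp only [mem_setOf_eq, mem_Ici]
      exact ⟨fun hx => hx.1, fun hx => ⟨hx, lt_of_lt_of_le hr (hF0 x)⟩⟩
    rw [this, csInf_Ici]
  have hFinv_meas : Measurable Finv := by
    apply measurable_of_Ioi
    intro x
    rcases lt_or_ge x 0 with hx | hx
    · have : Finv ⁻¹' Ioi x = univ := by
        ext r
        simp only [mem_preimage, mem_Ioi, mem_univ, iff_true]
        exact lt_of_lt_of_le hx (hFinv0 r)
      rw [this]; exact MeasurableSet.univ
    · have hoc : (Finv ⁻¹' Ioi x).OrdConnected := by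
        constructor
        intro p hp q hq r hr
        simp only [mem_preimage, mem_Ioi] at hp hq ⊢
        have hq1 : q < 1 := by
          by_contra hq1
          push_neg at hq1
          rw [hFinv_ge1 q hq1] at hq
          linarith
        exact lt_of_lt_of_le hp (hFinv_mono hr.1 (lt_of_le_of_lt hr.2 hq1))
      exact hoc.measurableSet
  -- ## Stage 3: layer cake and integrability of Finv
  have hlevel : ∀ t : ℝ, 0 < t →
      (volume : Measure ℝ) ({a : ℝ | t < Finv a} ∩ Ioo 0 1) = ENNReal.ofReal (1 - F t) := by
    intro t ht
    have hsub1 : Ioo (F t) 1 ⊆ {a : ℝ | t < Finv a} ∩ Ioo 0 1 := by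
      intro r hr
      have hr01 : r ∈ Ioo (0:ℝ) 1 := ⟨lt_of_le_of_lt (hF0 t) hr.1, hr.2⟩
      refine ⟨?_, hr01⟩
      have hne := hSne r hr.2
      have hge : t ≤ Finv r := by
        simp only [hFinv]
        refine le_csInf hne ?_
        intro x hx
        by_contra hxt
        push_neg at hxt
        exact absurd hx.2 (not_lt.2 (le_trans (hFmono hxt.le) hr.1.le))
      rcases lt_or_eq_of_le hge with hlt | heq
      · exact hlt
      · exfalso
        have : r ≤ F t := by
          refine hFrc t r ?_
          intro ε hε
          have hlt2 : Finv r < t + ε := by rw [← heq]; linarith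
          have : sInf {x : ℝ | 0 ≤ x ∧ F x > r} < t + ε := by
            simpa only [hFinv] using hlt2
          obtain ⟨x, hx, hxlt⟩ := exists_lt_of_csInf_lt hne this
          exact le_trans hx.2.le (hFmono hxlt.le)
        exact absurd this (not_le.2 hr.1)
    have hsub2 : {a : ℝ | t < Finv a} ∩ Ioo 0 1 ⊆ Icc (F t) 1 := by
      rintro r ⟨hr1, hr2⟩
      simp only [mem_setOf_eq] at hr1
      refine ⟨?_, hr2.2.le⟩
      by_contra hrF
      push_neg at hrF
      have htS : t ∈ {x : ℝ | 0 ≤ x ∧ F x > r} := ⟨ht.le, hrF⟩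
      have : Finv r ≤ t := by
        simp only [hFinv]
        exact csInf_le ⟨0, fun x hx => hx.1⟩ htS
      linarith
    have h1 : ENNReal.ofReal (1 - F t) ≤
        (volume : Measure ℝ) ({a : ℝ | t < Finv a} ∩ Ioo 0 1) := by
      calc ENNReal.ofReal (1 - F t) = volume (Ioo (F t) 1) := by
            rw [Real.volume_Ioo]
        _ ≤ _ := measure_mono hsub1
    have h2 : (volume : Measure ℝ) ({a : ℝ | t < Finv a} ∩ Ioo 0 1) ≤
        ENNReal.ofReal (1 - F t) := by
      calc (volume : Measure ℝ) ({a : ℝ | t < Finv a} ∩ Ioo 0 1)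
          ≤ volume (Icc (F t) 1) := measure_mono hsub2
        _ = ENNReal.ofReal (1 - F t) := Real.volume_Icc
    exact le_antisymm h2 h1
  have hPgt : ∀ t : ℝ, P {ω | t < ξ₀ ω} = ENNReal.ofReal (1 - F t) := by
    intro t
    have hc : {ω | t < ξ₀ ω} = {ω | ξ₀ ω ≤ t}ᶜ := by
      ext ω; simp [not_le]
    have hms : MeasurableSet {ω | ξ₀ ω ≤ t} := hξ₀m measurableSet_Iic
    rw [hc, measure_compl hms (measure_ne_top _ _), measure_univ]
    have hle : P {ω | ξ₀ ω ≤ t} ≤ 1 := prob_le_one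
    rw [hF]
    simp only
    rw [← ENNReal.ofReal_toReal (a := 1 - P {ω | ξ₀ ω ≤ t}) (by
      exact ne_top_of_le_ne_top ENNReal.one_ne_top tsub_le_self)]
    congr 1
    rw [ENNReal.toReal_sub_of_le hle ENNReal.one_ne_top]
    simp
  have hlcFinv : ∫⁻ r in Ioo (0:ℝ) 1, ENNReal.ofReal (Finv r) =
      ∫⁻ ω, ENNReal.ofReal (ξ₀ ω) ∂P := by
    rw [lintegral_eq_lintegral_meas_lt (volume.restrict (Ioo (0:ℝ) 1))
        (Filter.Eventually.of_forall hFinv0) (hFinv_meas.aemeasurable.restrict),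
      lintegral_eq_lintegral_meas_lt P (Filter.Eventually.of_forall hξ₀0)
        hξ₀m.aemeasurable]
    refine lintegral_congr_ae ?_
    filter_upwards [ae_restrict_mem measurableSet_Ioi] with t ht
    have hms : MeasurableSet {a : ℝ | t < Finv a} := hFinv_meas measurableSet_Ioi
    rw [Measure.restrict_apply hms, hlevel t ht, hPgt t]
  have hlcle : ∫⁻ r in Ioo (0:ℝ) 1, ENNReal.ofReal (Finv r) ≤ 1 := by
    rw [hlcFinv, ← ofReal_integral_eq_lintegral_ofReal hξ₀int
      (Filter.Eventually.of_forall hξ₀0)]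
    calc ENNReal.ofReal (∫ ω, ξ₀ ω ∂P) ≤ ENNReal.ofReal 1 :=
          ENNReal.ofReal_le_ofReal hξ₀1
      _ = 1 := ENNReal.ofReal_one
  have hIntIoo : IntegrableOn Finv (Ioo 0 1) volume := by
    refine ⟨hFinv_meas.aestronglyMeasurable.restrict, ?_⟩
    rw [hasFiniteIntegral_iff_ofReal (Filter.Eventually.of_forall hFinv0)]
    exact lt_of_le_of_lt hlcle ENNReal.one_lt_top
  have hIntGlobal : Integrable Finv volume := by
    have heq : Finv = (Icc (0:ℝ) 1).indicator Finv := by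
      funext r
      by_cases hr : r ∈ Icc (0:ℝ) 1
      · rw [indicator_of_mem hr]
      · rw [indicator_of_notMem hr]
        simp only [mem_Icc, not_and_or, not_le] at hr
        rcases hr with hr | hr
        · exact hFinv_neg r hr
        · exact hFinv_ge1 r hr.le
    have hIcc : IntegrableOn Finv (Icc 0 1) volume := by
      rw [integrableOn_Icc_iff_integrableOn_Ioo]
      exact hIntIoo
    rw [heq]
    exact hIcc.integrable_indicator measurableSet_Icc
  -- ## Stage 4: properties of h and g
  have hprim : h = fun r => ∫ t in (0:ℝ)..r, Finv t := by
    rw [hh]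
    funext r
    rcases le_or_gt 0 r with hr | hr
    · rw [intervalIntegral.integral_of_le hr]
    · rw [intervalIntegral.integral_of_ge hr.le]
      have h1 : Ioc (0:ℝ) r = ∅ := Ioc_eq_empty (by linarith)
      rw [h1]
      have h2 : ∫ s in Ioc r 0, Finv s = 0 := by
        have : ∀ᵐ s ∂(volume.restrict (Ioc r 0)), Finv s = 0 := by
          have hz : ∀ᵐ s : ℝ ∂(volume.restrict (Ioc r 0)), s ≠ 0 := by
            refine ae_restrict_of_ae ?_
            rw [ae_iff]
            simpa using Real.volume_singleton (x := (0:ℝ))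
          filter_upwards [hz, ae_restrict_mem measurableSet_Ioc] with s hs hmem
          exact hFinv_neg s (lt_of_le_of_ne hmem.2 hs)
        calc ∫ s in Ioc r 0, Finv s = ∫ _s in Ioc r 0, (0:ℝ) :=
              integral_congr_ae this
          _ = 0 := by simp
      rw [h2]
      simp [Measure.restrict_empty]
  have hhc : Continuous h := by
    rw [hprim]
    exact hIntGlobal.continuous_primitive 0
  have hgc : Continuous g := by
    rw [hg]
    exact continuous_id.sub hhc
  have hgd : ∀ p q : ℝ, p ≤ q → g q - g p = (q - p) - ∫ s in Ioc p q, Finv s := by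
    intro p q hpq
    have hdiff : h q - h p = ∫ s in Ioc p q, Finv s := by
      rw [hprim]
      simp only
      rw [intervalIntegral.integral_interval_sub_left
        hIntGlobal.intervalIntegrable hIntGlobal.intervalIntegrable,
        intervalIntegral.integral_of_le hpq]
    rw [hg]
    simp only
    linarith
  have hg0 : g 0 = 0 := by
    rw [hg, hh]
    simp
  have hIocnn : ∀ p q : ℝ, 0 ≤ ∫ s in Ioc p q, Finv s :=
    fun p q => setIntegral_nonneg measurableSet_Ioc fun s _ => hFinv0 s
  have hmeas_h1 : h 1 = ∫ s in Ioc (0:ℝ) 1, Finv s := by rw [hh]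
  have hh1le : h 1 ≤ 1 := by
    rw [hmeas_h1]
    have hint : IntegrableOn Finv (Ioc 0 1) volume := hIntGlobal.integrableOn
    rw [integral_eq_lintegral_of_nonneg_ae (Filter.Eventually.of_forall hFinv0)
      hFinv_meas.aestronglyMeasurable.restrict]
    have hIocIoo : ∫⁻ r in Ioc (0:ℝ) 1, ENNReal.ofReal (Finv r) =
        ∫⁻ r in Ioo (0:ℝ) 1, ENNReal.ofReal (Finv r) := by
      refine setLIntegral_congr ?_
      exact (Ioo_ae_eq_Ioc (μ := (volume : Measure ℝ)) (a := (0:ℝ)) (b := (1:ℝ))).symm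
    rw [hIocIoo]
    calc (∫⁻ r in Ioo (0:ℝ) 1, ENNReal.ofReal (Finv r)).toReal ≤ (1:ℝ≥0∞).toReal :=
          ENNReal.toReal_mono ENNReal.one_ne_top hlcle
      _ = 1 := by simp
  have hg1nn : 0 ≤ g 1 := by
    rw [hg]
    simp only
    linarith
  have hquasi := aux_quasi Finv g hIntGlobal hFinv0 hFinv_mono hgd
  have hgr : ∀ r : ℝ, h r = r - g r := by
    intro r; rw [hg]; ring
  have hdInt : ∀ p q : ℝ, p ≤ q → h q - h p = ∫ s in Ioc p q, Finv s := by
    intro p q hpq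
    have h1 := hgd p q hpq
    have h2 := hgr p
    have h3 := hgr q
    linarith
  have hdnn : ∀ p q : ℝ, p ≤ q → 0 ≤ h q - h p := by
    intro p q hpq; rw [hdInt p q hpq]; exact hIocnn p q
  have hlEq : ∀ p q : ℝ, p ≤ q →
      ∫⁻ s in Ioc p q, ENNReal.ofReal (Finv s) = ENNReal.ofReal (h q - h p) := by
    intro p q hpq
    rw [← ofReal_integral_eq_lintegral_ofReal hIntGlobal.integrableOn
      (Filter.Eventually.of_forall hFinv0)]
    rw [hdInt p q hpq]
  -- ## Stage 5: the K set and the main computation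
  obtain ⟨hu0, hu1, hgu, hK⟩ := aux_lemK g hgc hquasi hg0 hg1nn
  set u := sInf {s : ℝ | s ∈ Icc (0:ℝ) 1 ∧ g 1 ≤ g s} with hudef
  have hWcomp : ∀ c : ℝ,
      ∫⁻ s in {s : ℝ | s ∈ Icc (0:ℝ) 1 ∧ g 1 ≤ g s ∧ g s ≤ c}, ENNReal.ofReal (Finv s)
        = volume {s : ℝ | s ∈ Icc (0:ℝ) 1 ∧ g 1 ≤ g s ∧ g s ≤ c} := by
    intro c
    rcases lt_or_ge c (g 1) with hc | hc
    · have hempty : {s : ℝ | s ∈ Icc (0:ℝ) 1 ∧ g 1 ≤ g s ∧ g s ≤ c} = ∅ := by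
        ext s
        simp only [mem_setOf_eq, mem_empty_iff_false, iff_false, not_and]
        intro _ h1 h2
        linarith
      rw [hempty]; simp
    · by_cases hV : {s : ℝ | s ∈ Icc (0:ℝ) 1 ∧ c < g s}.Nonempty
      · obtain ⟨hv10, hv21, hgv1, hgv2, hVeq⟩ :=
          aux_lemA g hgc hquasi c (by rw [hg0]; linarith) hc hV
        set v1 := sInf {s : ℝ | s ∈ Icc (0:ℝ) 1 ∧ c < g s} with hv1def
        set v2 := sSup {s : ℝ | s ∈ Icc (0:ℝ) 1 ∧ c < g s} with hv2def
        have hsubV : {s : ℝ | s ∈ Icc (0:ℝ) 1 ∧ c < g s} ⊆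
            {s : ℝ | s ∈ Icc (0:ℝ) 1 ∧ g 1 ≤ g s} :=
          fun s hs => ⟨hs.1, le_trans hc hs.2.le⟩
        have huv1 : u ≤ v1 :=
          csInf_le_csInf ⟨0, fun s hs => hs.1.1⟩ hV hsubV
        have hv1v2 : v1 ≤ v2 :=
          csInf_le_csSup hV ⟨0, fun s hs => hs.1.1⟩ ⟨1, fun s hs => hs.1.2⟩
        have hWeq : {s : ℝ | s ∈ Icc (0:ℝ) 1 ∧ g 1 ≤ g s ∧ g s ≤ c}
            = Icc u v1 ∪ Icc v2 1 := by
          ext s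
          simp only [mem_setOf_eq, mem_union, mem_Icc]
          constructor
          · rintro ⟨hs01, hs1, hsc⟩
            have hsK : s ∈ {s : ℝ | s ∈ Icc (0:ℝ) 1 ∧ g 1 ≤ g s} := ⟨hs01, hs1⟩
            rw [hK] at hsK
            have hsnotV : s ∉ {s : ℝ | s ∈ Icc (0:ℝ) 1 ∧ c < g s} :=
              fun hmem => absurd hmem.2 (not_lt.2 hsc)
            rw [hVeq] at hsnotV
            simp only [mem_Ioo, not_and_or, not_lt] at hsnotV
            rcases hsnotV with h' | h'
            · exact Or.inl ⟨hsK.1, h'⟩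
            · exact Or.inr ⟨h', hsK.2⟩
          · rintro (⟨h1', h2'⟩ | ⟨h1', h2'⟩)
            · have hs01 : s ∈ Icc (0:ℝ) 1 :=
                ⟨le_trans hu0 h1', le_trans h2' (le_trans hv1v2 hv21)⟩
              have hsK : s ∈ Icc u 1 := ⟨h1', hs01.2⟩
              rw [← hK] at hsK
              refine ⟨hs01, hsK.2, ?_⟩
              by_contra hlt
              push_neg at hlt
              have hmem : s ∈ {s : ℝ | s ∈ Icc (0:ℝ) 1 ∧ c < g s} := ⟨hs01, hlt⟩
              rw [hVeq] at hmem
              exact absurd hmem.1 (not_lt.2 h2')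
            · have hs01 : s ∈ Icc (0:ℝ) 1 :=
                ⟨le_trans (le_trans hv10 hv1v2) h1', h2'⟩
              have hsK : s ∈ Icc u 1 := ⟨le_trans (le_trans huv1 hv1v2) h1', hs01.2⟩
              rw [← hK] at hsK
              refine ⟨hs01, hsK.2, ?_⟩
              by_contra hlt
              push_neg at hlt
              have hmem : s ∈ {s : ℝ | s ∈ Icc (0:ℝ) 1 ∧ c < g s} := ⟨hs01, hlt⟩
              rw [hVeq] at hmem
              exact absurd hmem.2 (not_lt.2 h1')
        have haeW : (Icc u v1 ∪ Icc v2 1 : Set ℝ) =ᵐ[(volume : Measure ℝ)]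
            (Ioc u v1 ∪ Ioc v2 1 : Set ℝ) := by
          have e1 : (Icc u v1 : Set ℝ) =ᵐ[(volume : Measure ℝ)] Ioc u v1 :=
            (Ioc_ae_eq_Icc (μ := (volume : Measure ℝ))).symm
          have e2 : (Icc v2 1 : Set ℝ) =ᵐ[(volume : Measure ℝ)] Ioc v2 1 :=
            (Ioc_ae_eq_Icc (μ := (volume : Measure ℝ))).symm
          exact e1.union e2
        have hdisj : Disjoint (Ioc u v1) (Ioc v2 (1:ℝ)) := by
          rw [Set.disjoint_left]
          rintro x ⟨_, hx1⟩ ⟨hx2, _⟩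
          linarith
        rw [hWeq, setLIntegral_congr haeW, measure_congr haeW,
          lintegral_union measurableSet_Ioc hdisj,
          measure_union hdisj measurableSet_Ioc,
          hlEq u v1 huv1, hlEq v2 1 hv21, Real.volume_Ioc, Real.volume_Ioc,
          ← ENNReal.ofReal_add (hdnn u v1 huv1) (hdnn v2 1 hv21),
          ← ENNReal.ofReal_add (sub_nonneg.2 huv1) (sub_nonneg.2 hv21)]
        congr 1
        have e1 := hgr u
        have e2 := hgr v1
        have e3 := hgr v2
        have e4 := hgr 1
        rw [hgv1] at e2
        rw [hgv2] at e3
        rw [hgu] at e1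
        linarith
      · have hWeq : {s : ℝ | s ∈ Icc (0:ℝ) 1 ∧ g 1 ≤ g s ∧ g s ≤ c} = Icc u 1 := by
          ext s
          simp only [mem_setOf_eq]
          constructor
          · rintro ⟨hs01, hs1, _⟩
            have hsK : s ∈ {s : ℝ | s ∈ Icc (0:ℝ) 1 ∧ g 1 ≤ g s} := ⟨hs01, hs1⟩
            rw [hK] at hsK
            exact hsK
          · intro hs
            have hsK : s ∈ {s : ℝ | s ∈ Icc (0:ℝ) 1 ∧ g 1 ≤ g s} := by
              rw [hK]; exact hs
            refine ⟨hsK.1, hsK.2, ?_⟩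
            by_contra hlt
            push_neg at hlt
            exact hV ⟨s, hsK.1, hlt⟩
        have hae : (Icc u 1 : Set ℝ) =ᵐ[(volume : Measure ℝ)] Ioc u 1 :=
          (Ioc_ae_eq_Icc (μ := (volume : Measure ℝ))).symm
        rw [hWeq, setLIntegral_congr hae, measure_congr hae, hlEq u 1 hu1,
          Real.volume_Ioc]
        congr 1
        have e1 := hgr u
        have e2 := hgr 1
        rw [hgu] at e1
        linarith
  -- ## Stage 6: pushforward measures and the key identity
  set η : Ω → ℝ := fun ω => g (R ω) with hηdef
  set ξ' : Ω → ℝ := fun ω => Finv (R ω) with hξ'def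
  have hηm : Measurable η := hgc.measurable.comp hRm
  have hξ'm : Measurable ξ' := hFinv_meas.comp hRm
  have hν1 : ∀ B : Set ℝ, MeasurableSet B →
      ∫⁻ ω in η ⁻¹' B, ENNReal.ofReal (ξ' ω) ∂P
        = ∫⁻ s in g ⁻¹' B ∩ Icc 0 1, ENNReal.ofReal (Finv s) := by
    intro B hB
    have h2 : ∫⁻ ω in R ⁻¹' (g ⁻¹' B), ENNReal.ofReal (Finv (R ω)) ∂P
        = ∫⁻ s in g ⁻¹' B, ENNReal.ofReal (Finv s) ∂(Measure.map R P) :=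
      (setLIntegral_map (hgc.measurable hB)
        (ENNReal.measurable_ofReal.comp hFinv_meas) hRm).symm
    calc ∫⁻ ω in η ⁻¹' B, ENNReal.ofReal (ξ' ω) ∂P
        = ∫⁻ s in g ⁻¹' B, ENNReal.ofReal (Finv s) ∂(Measure.map R P) := h2
      _ = ∫⁻ s in g ⁻¹' B ∩ Icc 0 1, ENNReal.ofReal (Finv s) := by
          rw [hR, Measure.restrict_restrict (hgc.measurable hB)]
  have hν2 : ∀ B : Set ℝ, MeasurableSet B →
      P (η ⁻¹' B) = volume (g ⁻¹' B ∩ Icc 0 1) := by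
    intro B hB
    have h1 : P (η ⁻¹' B) = (Measure.map R P) (g ⁻¹' B) := by
      rw [Measure.map_apply hRm (hgc.measurable hB)]
      rfl
    rw [h1, hR, Measure.restrict_apply (hgc.measurable hB)]
  have hξ'lint : ∫⁻ ω, ENNReal.ofReal (ξ' ω) ∂P ≤ 1 := by
    have h1 : ∫⁻ ω, ENNReal.ofReal (ξ' ω) ∂P
        = ∫⁻ s, ENNReal.ofReal (Finv s) ∂(Measure.map R P) :=
      (lintegral_map (ENNReal.measurable_ofReal.comp hFinv_meas) hRm).symm
    rw [h1, hR]
    have h2 : ∫⁻ s in Icc (0:ℝ) 1, ENNReal.ofReal (Finv s)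
        = ∫⁻ s in Ioo (0:ℝ) 1, ENNReal.ofReal (Finv s) :=
      setLIntegral_congr (Ioo_ae_eq_Icc (μ := (volume : Measure ℝ))).symm
    calc ∫⁻ s in Icc (0:ℝ) 1, ENNReal.ofReal (Finv s)
        = ∫⁻ s in Ioo (0:ℝ) 1, ENNReal.ofReal (Finv s) := h2
      _ ≤ 1 := hlcle
  have hKEY : ∀ B : Set ℝ, MeasurableSet B → B ⊆ Ici (g 1) →
      ∫⁻ ω in η ⁻¹' B, ENNReal.ofReal (ξ' ω) ∂P = P (η ⁻¹' B) := by
    have hν1m : ∀ B : Set ℝ, MeasurableSet B →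
        (Measure.map η (P.withDensity fun ω => ENNReal.ofReal (ξ' ω))) B
          = ∫⁻ ω in η ⁻¹' B, ENNReal.ofReal (ξ' ω) ∂P := by
      intro B hB
      rw [Measure.map_apply hηm hB,
        withDensity_apply _ (hηm hB)]
    have hν2m : ∀ B : Set ℝ, MeasurableSet B →
        (Measure.map η P) B = P (η ⁻¹' B) :=
      fun B hB => Measure.map_apply hηm hB
    haveI hfin1 : IsFiniteMeasure
        (Measure.map η (P.withDensity fun ω => ENNReal.ofReal (ξ' ω))) := by
      constructor
      rw [hν1m univ MeasurableSet.univ]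
      refine lt_of_le_of_lt (le_trans ?_ hξ'lint) ENNReal.one_lt_top
      rw [preimage_univ, Measure.restrict_univ]
    haveI hfin2 : IsFiniteMeasure (Measure.map η P) := by
      constructor
      rw [hν2m univ MeasurableSet.univ]
      exact lt_of_le_of_lt prob_le_one ENNReal.one_lt_top
    have hres : (Measure.map η (P.withDensity fun ω => ENNReal.ofReal (ξ' ω))).restrict
        (Ici (g 1)) = (Measure.map η P).restrict (Ici (g 1)) := by
      refine Measure.ext_of_Iic _ _ (fun c => ?_)
      rw [Measure.restrict_apply measurableSet_Iic,
        Measure.restrict_apply measurableSet_Iic]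
      have hBm : MeasurableSet (Iic c ∩ Ici (g 1)) :=
        measurableSet_Iic.inter measurableSet_Ici
      rw [hν1m _ hBm, hν2m _ hBm, hν1 _ hBm, hν2 _ hBm]
      have hseteq : g ⁻¹' (Iic c ∩ Ici (g 1)) ∩ Icc 0 1
          = {s : ℝ | s ∈ Icc (0:ℝ) 1 ∧ g 1 ≤ g s ∧ g s ≤ c} := by
        ext s
        simp only [mem_inter_iff, mem_preimage, mem_Iic, mem_Ici, mem_setOf_eq]
        tauto
      rw [hseteq]
      exact hWcomp c
    intro B hB hBsub
    have e1 : (Measure.map η (P.withDensity fun ω => ENNReal.ofReal (ξ' ω))) B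
        = (Measure.map η P) B := by
      have l1 : (Measure.map η (P.withDensity fun ω => ENNReal.ofReal (ξ' ω))) B
          = ((Measure.map η (P.withDensity fun ω => ENNReal.ofReal (ξ' ω))).restrict
            (Ici (g 1))) B := by
        rw [Measure.restrict_apply hB, inter_eq_self_of_subset_left hBsub]
      have l2 : (Measure.map η P) B
          = ((Measure.map η P).restrict (Ici (g 1))) B := by
        rw [Measure.restrict_apply hB, inter_eq_self_of_subset_left hBsub]
      rw [l1, l2, hres]
    rw [← hν1m B hB, ← hν2m B hB, e1]
  -- ## Stage 7: Bochner versions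
  have hIntξ' : Integrable ξ' P := by
    refine ⟨hξ'm.aestronglyMeasurable, ?_⟩
    rw [hasFiniteIntegral_iff_ofReal (Filter.Eventually.of_forall fun ω => hFinv0 (R ω))]
    exact lt_of_le_of_lt hξ'lint ENNReal.one_lt_top
  have hBochner : ∀ B : Set ℝ, MeasurableSet B →
      ∫ ω in η ⁻¹' B, ξ' ω ∂P = (∫⁻ ω in η ⁻¹' B, ENNReal.ofReal (ξ' ω) ∂P).toReal := by
    intro B hB
    exact integral_eq_lintegral_of_nonneg_ae
      (Filter.Eventually.of_forall fun ω => hFinv0 (R ω))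
      hξ'm.aestronglyMeasurable.restrict
  constructor
  -- ## Part 1
  · intro a b ha _hb
    have hBsub : Ioo a b ⊆ Ici (g 1) := fun x hx => le_trans ha hx.1.le
    have hset : {ω | η ω ∈ Ioo a b} = η ⁻¹' (Ioo a b) := rfl
    rw [hset, hBochner _ measurableSet_Ioo, hKEY _ measurableSet_Ioo hBsub]
  -- ## Part 2
  · set m' := MeasurableSpace.comap η inferInstance with hm'def
    have hm'le : m' ≤ mΩ := hηm.comap_le
    haveI : SigmaFinite (P.trim hm'le) := inferInstance
    set Z := P[ξ' | m'] with hZdef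
    letI mΩ' : MeasurableSpace Ω := mΩ
    have hZsm : StronglyMeasurable[m'] Z := stronglyMeasurable_condExp
    have hZm' : Measurable[m'] Z := hZsm.measurable
    have hZm : Measurable[mΩ] Z := hZm'.mono hm'le le_rfl
    have hA0 : MeasurableSet[m'] (η ⁻¹' (Ici (g 1))) :=
      ⟨Ici (g 1), measurableSet_Ici, rfl⟩
    have hkeyset : ∀ s : Set Ω, MeasurableSet[m'] s →
        ∫ ω in s ∩ η ⁻¹' (Ici (g 1)), ξ' ω ∂P
          = (P (s ∩ η ⁻¹' (Ici (g 1)))).toReal := by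
      intro s hs
      obtain ⟨B, hB, rfl⟩ := hs
      have h1 : η ⁻¹' B ∩ η ⁻¹' (Ici (g 1)) = η ⁻¹' (B ∩ Ici (g 1)) :=
        (preimage_inter).symm
      rw [h1, hBochner _ (hB.inter measurableSet_Ici),
        hKEY _ (hB.inter measurableSet_Ici) inter_subset_right]
    -- positive part
    have hPpos : P ({ω | 1 < Z ω} ∩ η ⁻¹' (Ici (g 1))) = 0 := by
      set A := {ω | 1 < Z ω} ∩ η ⁻¹' (Ici (g 1)) with hAdef
      have hAm' : MeasurableSet[m'] A :=
        (hZm' measurableSet_Ioi).inter hA0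
      have hAm : MeasurableSet[mΩ] A := hm'le _ hAm'
      have hint1 : ∫ ω in A, Z ω ∂P = ∫ ω in A, ξ' ω ∂P :=
        setIntegral_condExp hm'le hIntξ' hAm'
      have hint2 : ∫ ω in A, ξ' ω ∂P = (P A).toReal :=
        hkeyset {ω | 1 < Z ω} (hZm' measurableSet_Ioi)
      have hconst : ∫ _ω in A, (1:ℝ) ∂P = (P A).toReal := by simp [Measure.real]
      have hint3 : ∫ ω in A, (Z ω - 1) ∂P = 0 := by
        rw [integral_sub (integrable_condExp (μ := P)).integrableOn
          (integrable_const (μ := P) (1:ℝ)).integrableOn, hint1, hint2, hconst, sub_self]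
      have hnn : 0 ≤ᵐ[P.restrict A] fun ω => Z ω - 1 := by
        have hnn' : ∀ᵐ ω ∂(P.restrict A), 0 ≤ Z ω - 1 := by
          rw [ae_restrict_iff' hAm]
          refine Filter.Eventually.of_forall fun ω hω => ?_
          have h1lt : 1 < Z ω := hω.1
          linarith
        exact hnn'
      have hzero : (fun ω => Z ω - 1) =ᵐ[P.restrict A] 0 :=
        (integral_eq_zero_iff_of_nonneg_ae hnn
          (((integrable_condExp (μ := P)).sub (integrable_const (μ := P) 1)).integrableOn)).1 hint3
      have hsub : A ⊆ {ω | ¬ (Z ω - 1 = 0)} := by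
        intro ω hω
        have : 1 < Z ω := hω.1
        simp only [mem_setOf_eq]
        intro hcon
        linarith
      have hnullset : (P.restrict A) {ω | ¬ (Z ω - 1 = 0)} = 0 := by
        have := hzero
        rw [Filter.EventuallyEq, ae_iff] at this
        simpa using this
      have hm2 : MeasurableSet[mΩ] {ω | ¬ (Z ω - 1 = 0)} := by
        have hms : MeasurableSet[mΩ] {ω | Z ω - 1 = 0} :=
          (hZm.sub (measurable_const : Measurable[mΩ] fun _ : Ω => (1:ℝ)))
            (measurableSet_singleton 0)
        exact hms.compl
      have : P ({ω | ¬ (Z ω - 1 = 0)} ∩ A) = 0 := by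
        rw [← Measure.restrict_apply hm2]
        exact hnullset
      rwa [inter_eq_self_of_subset_right hsub] at this
    -- negative part
    have hPneg : P ({ω | Z ω < 1} ∩ η ⁻¹' (Ici (g 1))) = 0 := by
      set A := {ω | Z ω < 1} ∩ η ⁻¹' (Ici (g 1)) with hAdef
      have hAm' : MeasurableSet[m'] A :=
        (hZm' measurableSet_Iio).inter hA0
      have hAm : MeasurableSet[mΩ] A := hm'le _ hAm'
      have hint1 : ∫ ω in A, Z ω ∂P = ∫ ω in A, ξ' ω ∂P :=
        setIntegral_condExp hm'le hIntξ' hAm'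
      have hint2 : ∫ ω in A, ξ' ω ∂P = (P A).toReal :=
        hkeyset {ω | Z ω < 1} (hZm' measurableSet_Iio)
      have hconst : ∫ _ω in A, (1:ℝ) ∂P = (P A).toReal := by simp [Measure.real]
      have hint3 : ∫ ω in A, (1 - Z ω) ∂P = 0 := by
        rw [integral_sub (integrable_const (μ := P) (1:ℝ)).integrableOn
          (integrable_condExp (μ := P)).integrableOn, hint1, hint2, hconst, sub_self]
      have hnn : 0 ≤ᵐ[P.restrict A] fun ω => 1 - Z ω := by
        have hnn' : ∀ᵐ ω ∂(P.restrict A), 0 ≤ 1 - Z ω := by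
          rw [ae_restrict_iff' hAm]
          refine Filter.Eventually.of_forall fun ω hω => ?_
          have h1lt : Z ω < 1 := hω.1
          linarith
        exact hnn'
      have hzero : (fun ω => 1 - Z ω) =ᵐ[P.restrict A] 0 :=
        (integral_eq_zero_iff_of_nonneg_ae hnn
          (((integrable_const (μ := P) 1).sub (integrable_condExp (μ := P))).integrableOn)).1 hint3
      have hsub : A ⊆ {ω | ¬ ((1:ℝ) - Z ω = 0)} := by
        intro ω hω
        have : Z ω < 1 := hω.1
        simp only [mem_setOf_eq]
        intro hcon
        linarith
      have hnullset : (P.restrict A) {ω | ¬ ((1:ℝ) - Z ω = 0)} = 0 := by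
        have := hzero
        rw [Filter.EventuallyEq, ae_iff] at this
        simpa using this
      have hm2 : MeasurableSet[mΩ] {ω | ¬ ((1:ℝ) - Z ω = 0)} := by
        have hms : MeasurableSet[mΩ] {ω | (1:ℝ) - Z ω = 0} :=
          ((measurable_const : Measurable[mΩ] fun _ : Ω => (1:ℝ)).sub hZm)
            (measurableSet_singleton 0)
        exact hms.compl
      have : P ({ω | ¬ ((1:ℝ) - Z ω = 0)} ∩ A) = 0 := by
        rw [← Measure.restrict_apply hm2]
        exact hnullset
      rwa [inter_eq_self_of_subset_right hsub] at this
    have hae1 : ∀ᵐ ω ∂P, ω ∉ ({ω | 1 < Z ω} ∩ η ⁻¹' (Ici (g 1))) :=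
      measure_eq_zero_iff_ae_notMem.1 hPpos
    have hae2 : ∀ᵐ ω ∂P, ω ∉ ({ω | Z ω < 1} ∩ η ⁻¹' (Ici (g 1))) :=
      measure_eq_zero_iff_ae_notMem.1 hPneg
    filter_upwards [hae1, hae2] with ω h1 h2 hge
    by_contra hne
    rcases lt_or_gt_of_ne hne with hlt | hgt
    · exact h2 ⟨hlt, hge⟩
    · exact h1 ⟨hgt, hge⟩
end
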